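/- arXiv:1903.00429 — 8 statements merged into one kernel-verified Lean document; each statement's English description precedes it below -/
import Mathlib

section
/- Let (u(t))_{t≥0} be an Obstacle Gradient Flow. Then the function t ↦ E(u(t)) is nonincreasing and lies in W^{1,1}_{loc}(0,∞), the a.e. derivative u̇ lies in L²((0,∞),H), and for almost every t > 0 one has (d/dt) E(u(t)) = −‖u̇(t)‖². -/
open MeasureTheory Set Filter

noncomputable section

local notation "⟪" x ", " y "⟫" => @inner ℝ _ _ x y

variable {H : Type*} [NormedAddCommGroup H] [InnerProductSpace ℝ H] [CompleteSpace H]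

/-- Assumption 1: `E` is Fréchet differentiable with (Riesz) gradient `E'`, the gradient is
locally Lipschitz, `E` is sequentially weakly lower semicontinuous, bounded below by `α`,
and the gradient is bounded on balls. -/
structure Assumption1 (E : H → ℝ) (E' : H → H) (α : ℝ) : Prop where
  grad : ∀ u : H, HasGradientAt E (E' u) u
  locLip : LocallyLipschitz E'
  wlsc : ∀ (x : ℕ → H) (y : H),
    (∀ φ : H, Tendsto (fun n => ⟪x n, φ⟫) atTop (nhds ⟪y, φ⟫)) →
    E y ≤ Filter.liminf (fun n => E (x n)) atTop
  lowerBound : ∀ u : H, α ≤ E u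
  gradBdd : ∀ R : ℝ, 0 < R → ∃ M : ℝ, ∀ w : H, ‖w‖ ≤ R → ‖E' w‖ ≤ M

/-- An Obstacle Gradient Flow `u` (with a.e. derivative `u'`) with initial datum `u₀ ∈ C`. -/
structure IsOGF (C : Set H) (E' : H → H) (u u' : ℝ → H) (u₀ : H) : Prop where
  init : u 0 = u₀
  mem : ∀ t : ℝ, 0 ≤ t → u t ∈ C
  derivAe : ∀ᵐ t ∂(volume.restrict (Ioi (0:ℝ))), HasDerivAt u (u' t) t
  sqInt : ∀ T : ℝ, 0 < T → IntegrableOn (fun t => ‖u' t‖ ^ 2) (Ioc 0 T)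
  ftc : ∀ s t : ℝ, 0 ≤ s → s ≤ t → u t - u s = ∫ r in s..t, u' r
  fvi : ∀ᵐ t ∂(volume.restrict (Ioi (0:ℝ))),
    ∀ v ∈ C, 0 ≤ ⟪u' t, v - u t⟫ + ⟪E' (u t), v - u t⟫

private lemma exists_unif_lip {F : H → H} (hF : LocallyLipschitz F) {K : Set H}
    (hK : IsCompact K) :
    ∃ ε : ℝ, 0 < ε ∧ ∃ L : NNReal, ∀ x ∈ K, LipschitzOnWith L F (Metric.ball x ε) := by
  have h : ∀ x : H, ∃ (L : NNReal) (r : ℝ), 0 < r ∧ LipschitzOnWith L F (Metric.ball x r) := by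
    intro x
    obtain ⟨L, t, ht, hL⟩ := hF x
    obtain ⟨r, hr, hsub⟩ := Metric.mem_nhds_iff.1 ht
    exact ⟨L, r, hr, hL.mono hsub⟩
  choose L r hr hL using h
  obtain ⟨tF, htK, hcov⟩ := hK.elim_nhds_subcover (fun x => Metric.ball x (r x / 2))
    (fun x _ => Metric.ball_mem_nhds x (by have := hr x; positivity))
  rcases tF.eq_empty_or_nonempty with rfl | hne
  · exact ⟨1, one_pos, 1, fun x hx => absurd (hcov hx) (by simp)⟩
  · refine ⟨tF.inf' hne (fun x => r x / 2), ?_, tF.sup (fun x => L x), ?_⟩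
    · exact (Finset.lt_inf'_iff hne).2 fun x _ => by have := hr x; positivity
    · intro x hx
      obtain ⟨i, hi, hxi⟩ := by simpa using hcov hx
      have hsub : Metric.ball x (tF.inf' hne fun x => r x / 2) ⊆ Metric.ball i (r i) := by
        intro y hy
        have h1 : dist y x < r i / 2 :=
          lt_of_lt_of_le (Metric.mem_ball.1 hy) (Finset.inf'_le _ hi)
        have h2 : dist x i < r i / 2 := Metric.mem_ball.1 hxi
        have h3 := dist_triangle y x i
        rw [Metric.mem_ball]
        linarith
      intro p hp q hq
      exact le_trans ((hL i).mono hsub hp hq)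
        (mul_le_mul_left (ENNReal.coe_le_coe.2 (Finset.le_sup hi)) _)

private lemma sq_setIntegral_le {a b : ℝ} (hab : a ≤ b) (f : ℝ → ℝ)
    (hf : IntegrableOn f (Ioc a b)) (hf2 : IntegrableOn (fun x => f x ^ 2) (Ioc a b)) :
    (∫ x in Ioc a b, f x) ^ 2 ≤ (b - a) * ∫ x in Ioc a b, f x ^ 2 := by
  rcases eq_or_lt_of_le hab with rfl | hlt
  · simp
  set V := b - a with hV
  have hVpos : 0 < V := sub_pos.2 hlt
  set I := ∫ x in Ioc a b, f x with hI
  set c := I / V with hc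
  have hconst : IntegrableOn (fun _ : ℝ => c ^ 2) (Ioc a b) :=
    integrableOn_const measure_Ioc_lt_top.ne
  have hfc : IntegrableOn (fun x => 2 * c * f x) (Ioc a b) := hf.const_mul _
  have h0 : (0:ℝ) ≤ ∫ x in Ioc a b, (f x ^ 2 - 2 * c * f x + c ^ 2) := by
    rw [show (fun x => f x ^ 2 - 2 * c * f x + c ^ 2) = fun x => (f x - c) ^ 2 by
      funext x; ring]
    exact setIntegral_nonneg measurableSet_Ioc fun x _ => sq_nonneg _
  have hsub2 : IntegrableOn (fun x => f x ^ 2 - 2 * c * f x) (Ioc a b) := hf2.sub hfc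
  have h1 : ∫ x in Ioc a b, (f x ^ 2 - 2 * c * f x + c ^ 2)
      = (∫ x in Ioc a b, f x ^ 2) - 2 * c * I + V * c ^ 2 := by
    rw [integral_add hsub2 hconst, integral_sub hf2 hfc, MeasureTheory.integral_const_mul,
      setIntegral_const, measureReal_def, Real.volume_Ioc,
      ENNReal.toReal_ofReal (sub_nonneg.2 hab), smul_eq_mul]
  rw [h1] at h0
  have hcV : c * V = I := div_mul_cancel₀ _ (ne_of_gt hVpos)
  nlinarith [h0, hcV, hVpos, sq_nonneg (c * V - I)]

set_option maxHeartbeats 2000000 in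
/-- **Energy dissipation.** Along an Obstacle Gradient Flow, `t ↦ E(u(t))` is nonincreasing and
belongs to `W^{1,1}_loc(0,∞)`, the derivative `u̇` lies in `L²((0,∞),H)`, and for a.e. `t > 0`
one has `(d/dt) E(u(t)) = -‖u̇(t)‖²`. -/
theorem energy_dissipation
    (E : H → ℝ) (E' : H → H) (α : ℝ) (hE : Assumption1 E E' α)
    (C : Set H) (hCne : C.Nonempty) (hCcl : IsClosed C) (hCcv : Convex ℝ C)
    (u u' : ℝ → H) (u₀ : H) (hu₀ : u₀ ∈ C) (hu : IsOGF C E' u u' u₀) :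
    AntitoneOn (fun t => E (u t)) (Ici 0) ∧
    (∀ᵐ t ∂(volume.restrict (Ioi (0:ℝ))),
        HasDerivAt (fun s => E (u s)) (-‖u' t‖ ^ 2) t) ∧
    (∀ s t : ℝ, 0 ≤ s → s ≤ t → E (u t) - E (u s) = ∫ r in s..t, -‖u' r‖ ^ 2) ∧
    MemLp u' 2 (volume.restrict (Ioi (0:ℝ))) := by
  -- measurability of `u'`
  have humeas : AEStronglyMeasurable u' (volume.restrict (Ioi (0:ℝ))) := by
    refine (stronglyMeasurable_deriv u).aestronglyMeasurable.congr ?_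
    filter_upwards [hu.derivAe] with t ht
    exact ht.deriv
  have humeas' : ∀ a b : ℝ, 0 ≤ a → AEStronglyMeasurable u' (volume.restrict (Ioc a b)) := by
    intro a b ha
    exact humeas.mono_measure
      (Measure.restrict_mono (fun x hx => lt_of_le_of_lt ha hx.1) le_rfl)
  -- integrability of `‖u'‖ ^ 2`, `‖u'‖`, `u'` on bounded intervals
  have hsq : ∀ a b : ℝ, 0 ≤ a → IntegrableOn (fun r => ‖u' r‖ ^ 2) (Ioc a b) := by
    intro a b ha
    rcases le_or_gt b a with h | h
    · rw [Ioc_eq_empty (not_lt.2 h)]; simp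
    · exact (hu.sqInt b (lt_of_le_of_lt ha h)).mono_set (Ioc_subset_Ioc ha le_rfl)
  have hnint : ∀ a b : ℝ, 0 ≤ a → IntegrableOn (fun r => ‖u' r‖) (Ioc a b) := by
    intro a b ha
    have h1 : IntegrableOn (fun r => 1 + ‖u' r‖ ^ 2) (Ioc a b) :=
      (integrableOn_const measure_Ioc_lt_top.ne).add (hsq a b ha)
    refine h1.mono' ((humeas' a b ha).norm) ?_
    refine Eventually.of_forall fun r => ?_
    rw [norm_norm]
    nlinarith [sq_nonneg (‖u' r‖ - 1), norm_nonneg (u' r)]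
  have huint : ∀ a b : ℝ, 0 ≤ a → IntegrableOn u' (Ioc a b) := by
    intro a b ha
    exact (hnint a b ha).mono' (humeas' a b ha) (Eventually.of_forall fun r => le_rfl)
  -- continuity of `u` on `[0, T]`
  have hucont : ∀ T : ℝ, 0 ≤ T → ContinuousOn u (Icc 0 T) := by
    intro T hT
    have hint : IntegrableOn u' (uIcc 0 T) := by
      rw [uIcc_of_le hT, integrableOn_Icc_iff_integrableOn_Ioc]
      exact huint 0 T le_rfl
    have hcp := intervalIntegral.continuousOn_primitive_interval hint
    rw [uIcc_of_le hT] at hcp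
    refine ((continuousOn_const (c := u 0)).add hcp).congr ?_
    intro x hx
    have h := hu.ftc 0 x le_rfl hx.1
    simp only [Pi.add_apply]
    rw [← h]
    abel
  -- pointwise displacement bound
  have hub : ∀ a r b : ℝ, 0 ≤ a → a ≤ r → r ≤ b → ‖u r - u a‖ ≤ ∫ x in a..b, ‖u' x‖ := by
    intro a r b ha har hrb
    rw [hu.ftc a r ha har]
    calc ‖∫ x in a..r, u' x‖ ≤ ∫ x in a..r, ‖u' x‖ :=
          intervalIntegral.norm_integral_le_integral_norm har
    _ ≤ ∫ x in a..b, ‖u' x‖ := by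
        refine intervalIntegral.integral_mono_interval le_rfl har hrb ?_ ?_
        · exact Eventually.of_forall fun x => norm_nonneg _
        · exact (intervalIntegrable_iff_integrableOn_Ioc_of_le (har.trans hrb)).2
            (hnint a b ha)
  -- the a.e. statements
  have hkeyae : ∀ᵐ t ∂(volume.restrict (Ioi (0:ℝ))),
      HasDerivAt (fun s => E (u s)) (-‖u' t‖ ^ 2) t ∧ ⟪E' (u t), u' t⟫ = -‖u' t‖ ^ 2 := by
    filter_upwards [hu.derivAe, hu.fvi, ae_restrict_mem measurableSet_Ioi] with t hd hf ht
    have hchain : HasDerivAt (fun s => E (u s)) ⟪E' (u t), u' t⟫ t := by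
      have h := (hE.grad (u t)).hasFDerivAt.comp_hasDerivAt t hd
      simpa [Function.comp_def] using h
    have hkey : ⟪E' (u t), u' t⟫ = -‖u' t‖ ^ 2 := by
      set w := u' t + E' (u t) with hw
      have h1 : HasDerivAt (fun s => ⟪w, u s⟫) ⟪w, u' t⟫ t := by
        have h := (innerSL ℝ w).hasFDerivAt.comp_hasDerivAt t hd
        simpa [Function.comp_def] using h
      have hfd : HasDerivAt (fun s => ⟪w, u s⟫ - ⟪w, u t⟫) ⟪w, u' t⟫ t := by
        simpa using h1.sub_const (⟪w, u t⟫)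
      have hmin : IsLocalMin (fun s => ⟪w, u s⟫ - ⟪w, u t⟫) t := by
        filter_upwards [Ioi_mem_nhds (mem_Ioi.1 ht)] with s hs
        have h2 := hf (u s) (hu.mem s (le_of_lt hs))
        have h3 : ⟪u' t, u s - u t⟫ + ⟪E' (u t), u s - u t⟫ = ⟪w, u s⟫ - ⟪w, u t⟫ := by
          simp only [hw, inner_add_left, inner_sub_right]
          ring
        simp only [sub_self]
        linarith [h2, h3.symm.le]
      have hz : ⟪w, u' t⟫ = 0 := hmin.hasDerivAt_eq_zero hfd
      rw [hw, inner_add_left, real_inner_self_eq_norm_sq] at hz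
      linarith
    rw [hkey] at hchain
    exact ⟨hchain, hkey⟩
  -- fundamental theorem of calculus for the energy
  have hE'cont : Continuous E' := hE.locLip.continuous
  have hftcE : ∀ s t : ℝ, 0 ≤ s → s ≤ t →
      E (u t) - E (u s) = ∫ r in s..t, ⟪E' (u r), u' r⟫ := by
    intro s t hs hst
    rcases eq_or_lt_of_le hst with rfl | hlt
    · simp
    have hst0 : (0:ℝ) ≤ t := hs.trans hst
    have hucontst : ContinuousOn u (Icc s t) :=
      (hucont t hst0).mono (Icc_subset_Icc hs le_rfl)
    have hKcpt : IsCompact (u '' Icc s t) := isCompact_Icc.image_of_continuousOn hucontst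
    obtain ⟨ε, hε, L, hLip⟩ := exists_unif_lip hE.locLip hKcpt
    have hIint : ∀ (a b : ℝ) (c : H), 0 ≤ a → a ≤ b →
        IntervalIntegrable (fun r => ⟪c, u' r⟫) volume a b := by
      intro a b c ha hab
      rw [intervalIntegrable_iff_integrableOn_Ioc_of_le hab]
      refine ((hnint a b ha).const_mul ‖c‖).mono'
        (aestronglyMeasurable_const.inner (humeas' a b ha)) ?_
      exact (ae_restrict_mem measurableSet_Ioc).mono fun r _ => norm_inner_le_norm _ _
    have hhint : ∀ a b : ℝ, s ≤ a → a ≤ b → b ≤ t →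
        IntervalIntegrable (fun r => ⟪E' (u r), u' r⟫) volume a b := by
      intro a b ha hab hbt
      have ha0 : (0:ℝ) ≤ a := hs.trans ha
      rw [intervalIntegrable_iff_integrableOn_Ioc_of_le hab]
      obtain ⟨M, hM⟩ := hKcpt.exists_bound_of_continuousOn hE'cont.continuousOn
      have hsubset : Ioc a b ⊆ Icc s t := fun r hr => ⟨ha.trans hr.1.le, hr.2.trans hbt⟩
      have haesm : AEStronglyMeasurable (fun r => E' (u r)) (volume.restrict (Ioc a b)) :=
        ((hE'cont.comp_continuousOn (hucontst.mono hsubset)).aestronglyMeasurable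
          measurableSet_Ioc)
      refine ((hnint a b ha0).const_mul (max M 0)).mono'
        (haesm.inner (humeas' a b ha0)) ?_
      refine (ae_restrict_mem measurableSet_Ioc).mono fun r hr => ?_
      calc ‖⟪E' (u r), u' r⟫‖ ≤ ‖E' (u r)‖ * ‖u' r‖ := norm_inner_le_norm _ _
        _ ≤ max M 0 * ‖u' r‖ := by
            have h1 := hM (u r) (mem_image_of_mem u (hsubset hr))
            have h2 := norm_nonneg (u' r)
            nlinarith [le_max_left M 0]
    -- key local estimate
    have hest : ∀ a b : ℝ, s ≤ a → a ≤ b → b ≤ t → (∫ r in a..b, ‖u' r‖) < ε →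
        |E (u b) - E (u a) - ∫ r in a..b, ⟪E' (u r), u' r⟫|
          ≤ 2 * L * (∫ r in a..b, ‖u' r‖) ^ 2 := by
      intro a b ha hab hbt hm
      have ha0 : (0:ℝ) ≤ a := hs.trans ha
      set m := ∫ r in a..b, ‖u' r‖ with hmdef
      have hm0 : 0 ≤ m := intervalIntegral.integral_nonneg hab fun x _ => norm_nonneg _
      set Δ := u b - u a with hΔ
      have hΔm : ‖Δ‖ ≤ m := hub a b b ha0 hab le_rfl
      have hamem : u a ∈ u '' Icc s t := mem_image_of_mem u ⟨ha, hab.trans hbt⟩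
      have hlipa := hLip _ hamem
      have haball : u a ∈ Metric.ball (u a) ε := Metric.mem_ball_self hε
      have hci : IntervalIntegrable (fun τ : ℝ => ⟪E' (u a + τ • Δ), Δ⟫) volume 0 1 := by
        apply Continuous.intervalIntegrable
        exact Continuous.inner
          (hE'cont.comp (continuous_const.add (continuous_id.smul continuous_const)))
          continuous_const
      have hseg : E (u b) - E (u a) = ∫ τ in (0:ℝ)..1, ⟪E' (u a + τ • Δ), Δ⟫ := by
        have hder : ∀ τ ∈ uIcc (0:ℝ) 1, HasDerivAt (fun σ : ℝ => E (u a + σ • Δ))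
            ⟪E' (u a + τ • Δ), Δ⟫ τ := by
          intro τ _
          have hline : HasDerivAt (fun σ : ℝ => u a + σ • Δ) Δ τ := by
            simpa using ((hasDerivAt_id τ).smul_const Δ).const_add (u a)
          have h := (hE.grad (u a + τ • Δ)).hasFDerivAt.comp_hasDerivAt τ hline
          simpa [Function.comp_def] using h
        have h2 := intervalIntegral.integral_eq_sub_of_hasDerivAt hder hci
        rw [h2]
        have e1 : u a + (1:ℝ) • Δ = u b := by rw [one_smul, hΔ]; abel
        have e0 : u a + (0:ℝ) • Δ = u a := by rw [zero_smul, add_zero]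
        simp only [e1, e0]
      have hbound1 : |E (u b) - E (u a) - ⟪E' (u a), Δ⟫| ≤ L * m * m := by
        have hsubint : E (u b) - E (u a) - ⟪E' (u a), Δ⟫
            = ∫ τ in (0:ℝ)..1, (⟪E' (u a + τ • Δ), Δ⟫ - ⟪E' (u a), Δ⟫) := by
          rw [intervalIntegral.integral_sub hci intervalIntegrable_const,
            intervalIntegral.integral_const, hseg]
          simp
        rw [hsubint]
        have hb := intervalIntegral.norm_integral_le_of_norm_le_const
          (C := L * m * m) (f := fun τ : ℝ => ⟪E' (u a + τ • Δ), Δ⟫ - ⟪E' (u a), Δ⟫)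
          (a := 0) (b := 1) ?_
        · rw [Real.norm_eq_abs] at hb
          simpa using hb
        intro τ hτ
        rw [uIoc_of_le zero_le_one] at hτ
        have hτ0 : (0:ℝ) ≤ τ := le_of_lt hτ.1
        have hτ1 : τ ≤ 1 := hτ.2
        have hτΔ : ‖τ • Δ‖ ≤ m := by
          rw [norm_smul, Real.norm_eq_abs, abs_of_nonneg hτ0]
          nlinarith [norm_nonneg Δ]
        have hball : u a + τ • Δ ∈ Metric.ball (u a) ε := by
          rw [Metric.mem_ball, dist_eq_norm, add_sub_cancel_left]
          exact lt_of_le_of_lt hτΔ hm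
        have hL1 : ‖E' (u a + τ • Δ) - E' (u a)‖ ≤ L * m := by
          have hd := hlipa.dist_le_mul _ hball _ haball
          rw [dist_eq_norm, dist_eq_norm, add_sub_cancel_left] at hd
          calc ‖E' (u a + τ • Δ) - E' (u a)‖ ≤ L * ‖τ • Δ‖ := hd
            _ ≤ L * m := by
                have : (0:ℝ) ≤ (L:ℝ) := L.coe_nonneg
                nlinarith
        show ‖⟪E' (u a + τ • Δ), Δ⟫ - ⟪E' (u a), Δ⟫‖ ≤ L * m * m
        rw [← inner_sub_left]
        calc ‖⟪E' (u a + τ • Δ) - E' (u a), Δ⟫‖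
            ≤ ‖E' (u a + τ • Δ) - E' (u a)‖ * ‖Δ‖ := norm_inner_le_norm _ _
          _ ≤ L * m * m := by
              have hL0 : (0:ℝ) ≤ (L:ℝ) := L.coe_nonneg
              nlinarith [norm_nonneg (E' (u a + τ • Δ) - E' (u a)), norm_nonneg Δ]
      have hconsteq : ⟪E' (u a), Δ⟫ = ∫ r in a..b, ⟪E' (u a), u' r⟫ := by
        have hftc2 : Δ = ∫ r in a..b, u' r := hu.ftc a b ha0 hab
        rw [hftc2, intervalIntegral.integral_of_le hab, intervalIntegral.integral_of_le hab]
        exact (integral_inner (huint a b ha0) (E' (u a))).symm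
      have hbound2 : |(∫ r in a..b, ⟪E' (u a), u' r⟫) - ∫ r in a..b, ⟪E' (u r), u' r⟫|
          ≤ L * m * m := by
        have hint1 : IntervalIntegrable (fun r => ⟪E' (u a), u' r⟫) volume a b :=
          hIint a b _ ha0 hab
        have hint2 : IntervalIntegrable (fun r => ⟪E' (u r), u' r⟫) volume a b :=
          hhint a b ha hab hbt
        rw [← intervalIntegral.integral_sub hint1 hint2]
        have hni : IntervalIntegrable (fun r => L * m * ‖u' r‖) volume a b :=
          (intervalIntegrable_iff_integrableOn_Ioc_of_le hab).2 ((hnint a b ha0).const_mul _)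
        have hb := intervalIntegral.norm_integral_le_abs_of_norm_le (μ := volume)
          (f := fun r => ⟪E' (u a), u' r⟫ - ⟪E' (u r), u' r⟫)
          (g := fun r => L * m * ‖u' r‖) (a := a) (b := b) ?_ hni
        · rw [Real.norm_eq_abs] at hb
          refine le_trans hb ?_
          rw [abs_of_nonneg]
          · rw [intervalIntegral.integral_const_mul, ← hmdef]
          · exact intervalIntegral.integral_nonneg hab fun x _ =>
              mul_nonneg (mul_nonneg (NNReal.coe_nonneg L) hm0) (norm_nonneg _)
        refine (ae_restrict_mem measurableSet_uIoc).mono fun r hr => ?_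
        rw [uIoc_of_le hab] at hr
        have hram : ‖u r - u a‖ ≤ m := hub a r b ha0 hr.1.le hr.2
        have hrball : u r ∈ Metric.ball (u a) ε := by
          rw [Metric.mem_ball, dist_eq_norm]
          exact lt_of_le_of_lt hram hm
        have hL1 : ‖E' (u a) - E' (u r)‖ ≤ L * m := by
          have hd := hlipa.dist_le_mul _ haball _ hrball
          rw [dist_eq_norm, dist_eq_norm] at hd
          refine le_trans hd ?_
          have : ‖u a - u r‖ = ‖u r - u a‖ := norm_sub_rev _ _
          rw [this]
          have hL0 : (0:ℝ) ≤ (L:ℝ) := L.coe_nonneg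
          nlinarith
        show ‖⟪E' (u a), u' r⟫ - ⟪E' (u r), u' r⟫‖ ≤ L * m * ‖u' r‖
        rw [← inner_sub_left]
        calc ‖⟪E' (u a) - E' (u r), u' r⟫‖
            ≤ ‖E' (u a) - E' (u r)‖ * ‖u' r‖ := norm_inner_le_norm _ _
          _ ≤ L * m * ‖u' r‖ :=
              mul_le_mul_of_nonneg_right hL1 (norm_nonneg _)
      have hsplit : E (u b) - E (u a) - (∫ r in a..b, ⟪E' (u r), u' r⟫)
          = (E (u b) - E (u a) - ⟪E' (u a), Δ⟫)
            + ((∫ r in a..b, ⟪E' (u a), u' r⟫) - ∫ r in a..b, ⟪E' (u r), u' r⟫) := by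
        rw [← hconsteq]; ring
      rw [hsplit]
      calc |(E (u b) - E (u a) - ⟪E' (u a), Δ⟫)
            + ((∫ r in a..b, ⟪E' (u a), u' r⟫) - ∫ r in a..b, ⟪E' (u r), u' r⟫)|
          ≤ |E (u b) - E (u a) - ⟪E' (u a), Δ⟫|
            + |(∫ r in a..b, ⟪E' (u a), u' r⟫) - ∫ r in a..b, ⟪E' (u r), u' r⟫| := abs_add_le _ _
        _ ≤ L * m * m + L * m * m := add_le_add hbound1 hbound2
        _ = 2 * L * m ^ 2 := by ring
    -- partition argument
    have hmain : ∀ η : ℝ, 0 < η →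
        |E (u t) - E (u s) - ∫ r in s..t, ⟪E' (u r), u' r⟫| ≤ η := by
      intro η hη
      set A := ∫ r in s..t, ‖u' r‖ ^ 2 with hA
      have hA0 : 0 ≤ A := intervalIntegral.integral_nonneg hst fun x _ => sq_nonneg _
      have hLpos : (0:ℝ) < 2 * L + 1 := by positivity
      set B := (t - s) * A with hB
      have hB0 : 0 ≤ B := mul_nonneg (by linarith) hA0
      set c := min (ε ^ 2) (η / (2 * L + 1)) with hcdef
      have hcpos : 0 < c := lt_min (by positivity) (by positivity)
      obtain ⟨n, hn⟩ := exists_nat_gt (B / c)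
      have hnpos : 0 < (n:ℝ) := lt_of_le_of_lt (div_nonneg hB0 hcpos.le) hn
      have hBn : B / n < c := by
        rw [div_lt_iff₀ hnpos]
        calc B = (B / c) * c := by field_simp
          _ < (n:ℝ) * c := mul_lt_mul_of_pos_right hn hcpos
          _ = c * n := mul_comm _ _
      set δ := (t - s) / n with hδdef
      have hδ0 : 0 < δ := div_pos (by linarith) hnpos
      set p : ℕ → ℝ := fun i => s + i * δ with hp
      have hp0 : p 0 = s := by simp [hp]
      have hpn : p n = t := by
        simp only [hp, hδdef]
        field_simp
        ring
      have hpmono : ∀ i : ℕ, p i ≤ p (i+1) := by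
        intro i
        simp only [hp]
        push_cast
        nlinarith [hδ0]
      have hpMono : Monotone p := monotone_nat_of_le_succ hpmono
      have hsp : ∀ i : ℕ, s ≤ p i := fun i => by
        have := hp0 ▸ hpMono (Nat.zero_le i); exact this
      have hpt : ∀ i : ℕ, i ≤ n → p i ≤ t := fun i hi => hpn ▸ hpMono hi
      have hdiff : ∀ i : ℕ, p (i+1) - p i = δ := by
        intro i
        simp only [hp]
        push_cast
        ring
      -- Cauchy-Schwarz on each subinterval
      have hCS : ∀ i : ℕ, i < n →
          (∫ r in p i..p (i+1), ‖u' r‖) ^ 2 ≤ δ * ∫ r in p i..p (i+1), ‖u' r‖ ^ 2 := by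
        intro i hi
        have h0i : (0:ℝ) ≤ p i := hs.trans (hsp i)
        have h1 := sq_setIntegral_le (hpmono i) (fun r => ‖u' r‖)
          (hnint _ _ h0i) (by simpa using hsq _ _ h0i)
        rw [intervalIntegral.integral_of_le (hpmono i),
          intervalIntegral.integral_of_le (hpmono i)]
        calc (∫ r in Ioc (p i) (p (i+1)), ‖u' r‖) ^ 2
            ≤ (p (i+1) - p i) * ∫ r in Ioc (p i) (p (i+1)), ‖u' r‖ ^ 2 := h1
          _ = δ * ∫ r in Ioc (p i) (p (i+1)), ‖u' r‖ ^ 2 := by rw [hdiff i]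
      have hsqInt : IntervalIntegrable (fun r => ‖u' r‖ ^ 2) volume s t :=
        (intervalIntegrable_iff_integrableOn_Ioc_of_le hst).2 (hsq s t hs)
      have hAi_le : ∀ i : ℕ, i < n → (∫ r in p i..p (i+1), ‖u' r‖ ^ 2) ≤ A := by
        intro i hi
        refine intervalIntegral.integral_mono_interval (hsp i) (hpmono i)
          (hpt (i+1) hi) ?_ hsqInt
        exact Eventually.of_forall fun x => sq_nonneg _
      have hAi0 : ∀ i : ℕ, (0:ℝ) ≤ ∫ r in p i..p (i+1), ‖u' r‖ ^ 2 := fun i =>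
        intervalIntegral.integral_nonneg (hpmono i) fun x _ => sq_nonneg _
      have hmi_lt : ∀ i : ℕ, i < n → (∫ r in p i..p (i+1), ‖u' r‖) < ε := by
        intro i hi
        have h1 := hCS i hi
        have h2 : δ * (∫ r in p i..p (i+1), ‖u' r‖ ^ 2) ≤ δ * A :=
          mul_le_mul_of_nonneg_left (hAi_le i hi) hδ0.le
        have h3 : δ * A = B / n := by
          rw [hB, hδdef]; ring
        have h4 : (∫ r in p i..p (i+1), ‖u' r‖) ^ 2 < ε ^ 2 := by
          have := min_le_left (ε ^ 2) (η / (2 * L + 1))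
          calc (∫ r in p i..p (i+1), ‖u' r‖) ^ 2 ≤ δ * A := le_trans h1 h2
            _ = B / n := h3
            _ < c := hBn
            _ ≤ ε ^ 2 := min_le_left _ _
        exact lt_of_pow_lt_pow_left₀ 2 hε.le h4
      -- telescoping
      have htel : E (u t) - E (u s)
          = ∑ i ∈ Finset.range n, (E (u (p (i+1))) - E (u (p i))) := by
        rw [Finset.sum_range_sub (fun i => E (u (p i))), hp0, hpn]
      have hisum : ∫ r in s..t, ⟪E' (u r), u' r⟫
          = ∑ i ∈ Finset.range n, ∫ r in p i..p (i+1), ⟪E' (u r), u' r⟫ := by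
        rw [← hp0, ← hpn]
        refine (intervalIntegral.sum_integral_adjacent_intervals ?_).symm
        intro i hi
        exact hhint (p i) (p (i+1)) (hsp i) (hpmono i) (hpt (i+1) hi)
      have hAsum : ∑ i ∈ Finset.range n, (∫ r in p i..p (i+1), ‖u' r‖ ^ 2) = A := by
        rw [hA, ← hp0, ← hpn]
        refine intervalIntegral.sum_integral_adjacent_intervals ?_
        intro i hi
        refine (intervalIntegrable_iff_integrableOn_Ioc_of_le (hpmono i)).2 ?_
        exact hsq _ _ (hs.trans (hsp i))
      rw [htel, hisum, ← Finset.sum_sub_distrib]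
      refine le_trans (Finset.abs_sum_le_sum_abs _ _) ?_
      have hterm : ∀ i ∈ Finset.range n,
          |E (u (p (i+1))) - E (u (p i)) - ∫ r in p i..p (i+1), ⟪E' (u r), u' r⟫|
            ≤ 2 * L * δ * ∫ r in p i..p (i+1), ‖u' r‖ ^ 2 := by
        intro i hi
        rw [Finset.mem_range] at hi
        have h1 := hest (p i) (p (i+1)) (hsp i) (hpmono i) (hpt (i+1) hi) (hmi_lt i hi)
        refine le_trans h1 ?_
        have h2 := hCS i hi
        have hL0 : (0:ℝ) ≤ (L:ℝ) := L.coe_nonneg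
        nlinarith
      refine le_trans (Finset.sum_le_sum hterm) ?_
      rw [← Finset.mul_sum, hAsum]
      have h3 : 2 * L * δ * A = 2 * L * (B / n) := by
        rw [hB, hδdef]; ring
      rw [h3]
      have h4 : (0:ℝ) ≤ B / n := div_nonneg hB0 hnpos.le
      have h5 : B / n < η / (2 * L + 1) := lt_of_lt_of_le hBn (min_le_right _ _)
      have hL0 : (0:ℝ) ≤ (L:ℝ) := L.coe_nonneg
      have h6 : 2 * L * (B / n) ≤ (2 * L + 1) * (B / n) := by nlinarith
      have h7 : (2 * L + 1) * (B / n) < (2 * L + 1) * (η / (2 * L + 1)) :=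
        mul_lt_mul_of_pos_left h5 hLpos
      have h8 : (2 * L + 1) * (η / (2 * L + 1)) = η := by field_simp
      linarith
    have h0 : |E (u t) - E (u s) - ∫ r in s..t, ⟪E' (u r), u' r⟫| ≤ 0 :=
      le_of_forall_pos_le_add fun η hη => by simpa using hmain η hη
    have hD := abs_nonpos_iff.1 h0
    linarith
  have hinner_ae : ∀ᵐ r ∂(volume : Measure ℝ), r ∈ Ioi (0:ℝ) →
      ⟪E' (u r), u' r⟫ = -‖u' r‖ ^ 2 :=
    (ae_restrict_iff' measurableSet_Ioi).1 (hkeyae.mono fun t ht => ht.2)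
  have hftcE' : ∀ s t : ℝ, 0 ≤ s → s ≤ t →
      E (u t) - E (u s) = ∫ r in s..t, -‖u' r‖ ^ 2 := by
    intro s t hs hst
    rw [hftcE s t hs hst, intervalIntegral.integral_of_le hst,
      intervalIntegral.integral_of_le hst]
    refine setIntegral_congr_ae measurableSet_Ioc ?_
    filter_upwards [hinner_ae] with r hr hrm
    exact hr (lt_of_le_of_lt hs hrm.1)
  refine ⟨?_, hkeyae.mono fun t ht => ht.1, hftcE', ?_⟩
  · intro a ha b hb hab
    have h := hftcE' a b ha hab
    have h2 : (0:ℝ) ≤ ∫ r in a..b, ‖u' r‖ ^ 2 :=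
      intervalIntegral.integral_nonneg hab fun x _ => sq_nonneg _
    rw [intervalIntegral.integral_neg] at h
    simp only
    linarith
  · -- global square integrability
    have hbdd : ∀ T : ℝ, 0 ≤ T → ∫ r in (0:ℝ)..T, ‖u' r‖ ^ 2 ≤ E u₀ - α := by
      intro T hT
      have h := hftcE' 0 T le_rfl hT
      rw [intervalIntegral.integral_neg] at h
      have h2 := hE.lowerBound (u T)
      have h3 : E (u 0) = E u₀ := by rw [hu.init]
      linarith
    have hInt : IntegrableOn (fun r => ‖u' r‖ ^ 2) (Ioi (0:ℝ)) := by
      refine integrableOn_Ioi_of_intervalIntegral_norm_bounded (E u₀ - α) 0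
        (fun n : ℕ => hsq 0 n le_rfl) tendsto_natCast_atTop_atTop ?_
      refine Eventually.of_forall fun n => ?_
      have he : ∀ x : ℝ, ‖(‖u' x‖ ^ 2 : ℝ)‖ = ‖u' x‖ ^ 2 := fun x => by
        rw [Real.norm_eq_abs, abs_of_nonneg (sq_nonneg _)]
      calc (∫ x in (0:ℝ)..(n:ℝ), ‖(‖u' x‖ ^ 2 : ℝ)‖)
          = ∫ x in (0:ℝ)..(n:ℝ), ‖u' x‖ ^ 2 := by simp_rw [he]
        _ ≤ E u₀ - α := hbdd n n.cast_nonneg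
    exact (memLp_two_iff_integrable_sq_norm humeas).2 hInt
end
end

section
/- Let u₀, v₀ ∈ C be arbitrary and let (u(t))_{t≥0}, (v(t))_{t≥0} be Obstacle Gradient Flows with initial data u₀ and v₀ respectively. Then for all t ≥ 0, ‖u(t) − v(t)‖ ≤ ‖u₀ − v₀‖ · exp( t · ζ( ‖u₀‖ + ‖v₀‖ + 2√(max{E(u₀), E(v₀)} − α) · √t ) ). In particular, if u₀ = v₀ then u ≡ v (Obstacle Gradient Flows are unique). -/
open MeasureTheory Set Filter

noncomputable section

local notation "⟪" x ", " y "⟫" => @inner ℝ _ _ x y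

variable {H : Type*} [NormedAddCommGroup H] [InnerProductSpace ℝ H] [CompleteSpace H]

/-- Assumption 2: a gradient growth condition with a nondecreasing continuous modulus `ζ`. -/
structure Assumption2 (E' : H → H) (ζ : ℝ → ℝ) : Prop where
  mono : MonotoneOn ζ (Ici 0)
  cont : ContinuousOn ζ (Ici 0)
  nonneg : ∀ r : ℝ, 0 ≤ r → 0 ≤ ζ r
  bound : ∀ u v : H, ‖E' u - E' v‖ ≤ ζ (‖u‖ + ‖v‖) * ‖u - v‖


open Topology intervalIntegral

lemma aux_norm_integrable {g : ℝ → H} {a b : ℝ}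
    (h2 : IntegrableOn (fun r => ‖g r‖ ^ 2) (Ioc a b)) :
    IntegrableOn (fun r => ‖g r‖) (Ioc a b) := by
  have hm : AEStronglyMeasurable (fun r => ‖g r‖) (volume.restrict (Ioc a b)) := by
    have h : (fun r => ‖g r‖) = fun r => Real.sqrt (‖g r‖ ^ 2) := by
      funext r; rw [Real.sqrt_sq (norm_nonneg _)]
    rw [h]
    exact Real.continuous_sqrt.comp_aestronglyMeasurable h2.aestronglyMeasurable
  have hbound : IntegrableOn (fun r => (1 + ‖g r‖ ^ 2) / 2) (Ioc a b) :=
    ((integrableOn_const measure_Ioc_lt_top.ne).add h2).div_const 2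
  refine hbound.mono' hm (Filter.Eventually.of_forall fun r => ?_)
  rw [Real.norm_eq_abs, abs_of_nonneg (norm_nonneg _)]
  nlinarith [sq_nonneg (‖g r‖ - 1)]

lemma sq_integral_norm_le (g : ℝ → H) {a b : ℝ} (hab : a ≤ b)
    (h2 : IntegrableOn (fun r => ‖g r‖ ^ 2) (Ioc a b)) :
    (∫ r in a..b, ‖g r‖) ^ 2 ≤ (b - a) * ∫ r in a..b, ‖g r‖ ^ 2 := by
  rcases eq_or_lt_of_le hab with rfl | hlt
  · simp
  have h1 : IntegrableOn (fun r => ‖g r‖) (Ioc a b) := aux_norm_integrable h2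
  have hint1 : IntervalIntegrable (fun r => ‖g r‖) volume a b :=
    (intervalIntegrable_iff_integrableOn_Ioc_of_le hab).2 h1
  set X := ∫ r in a..b, ‖g r‖ with hX
  set B := ∫ r in a..b, ‖g r‖ ^ 2 with hB
  have hXnn : 0 ≤ X := intervalIntegral.integral_nonneg hab fun r _ => norm_nonneg _
  have hBnn : 0 ≤ B := intervalIntegral.integral_nonneg hab fun r _ => sq_nonneg _
  have key : ∀ c : ℝ, 0 < c → 2 * X ≤ c * (b - a) + B / c := by
    intro c hc
    have hint2 : IntervalIntegrable (fun r => c + ‖g r‖ ^ 2 / c) volume a b := by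
      apply IntervalIntegrable.add intervalIntegrable_const
      exact ((intervalIntegrable_iff_integrableOn_Ioc_of_le hab).2 (h2.div_const c))
    have hmono : (∫ r in a..b, 2 * ‖g r‖) ≤ ∫ r in a..b, (c + ‖g r‖ ^ 2 / c) := by
      refine intervalIntegral.integral_mono_on hab (hint1.const_mul 2) hint2 fun r _ => ?_
      rw [← sub_nonneg]
      have he : c + ‖g r‖ ^ 2 / c - 2 * ‖g r‖ = (c - ‖g r‖) ^ 2 / c := by
        field_simp; ring
      rw [he]; positivity
    rw [intervalIntegral.integral_const_mul] at hmono
    rw [intervalIntegral.integral_add intervalIntegrable_const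
      ((intervalIntegrable_iff_integrableOn_Ioc_of_le hab).2 (h2.div_const c)),
      intervalIntegral.integral_const, intervalIntegral.integral_div, smul_eq_mul,
      mul_comm] at hmono
    linarith
  rcases eq_or_lt_of_le hXnn with hX0 | hXpos
  · nlinarith
  · have := key (X / (b - a)) (div_pos hXpos (by linarith))
    rw [div_mul_cancel₀ _ (by linarith : b - a ≠ 0), div_div_eq_mul_div] at this
    have h2' : X ≤ B * (b - a) / X := by linarith
    rw [le_div_iff₀ hXpos] at h2'
    nlinarith

lemma my_gronwall {f : ℝ → ℝ} {K T : ℝ} (hK : 0 ≤ K)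
    (hf : ContinuousOn f (Icc 0 T))
    (h : ∀ t ∈ Icc 0 T, f t ≤ f 0 + ∫ r in (0:ℝ)..t, K * f r) :
    ∀ t ∈ Icc 0 T, f t ≤ f 0 * Real.exp (K * t) := by
  intro t ht
  have main : ∀ ε : ℝ, 0 < ε → f t ≤ (f 0 + ε) * Real.exp (K * t) := by
    intro ε hε
    by_contra hcon
    push_neg at hcon
    set A : ℝ → ℝ := fun s => (f 0 + ε) * Real.exp (K * s) with hA
    have hAcont : Continuous A :=
      continuous_const.mul (Real.continuous_exp.comp (continuous_const.mul continuous_id))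
    set S : Set ℝ := {s | s ∈ Icc 0 T ∧ A s ≤ f s} with hS
    have hSclosed : IsClosed S := by
      have hseq : S = Icc 0 T ∩ (fun s => f s - A s) ⁻¹' (Ici 0) := by
        ext s; simp [hS, sub_nonneg, and_comm]
      rw [hseq]
      exact ContinuousOn.preimage_isClosed_of_isClosed
        (hf.sub hAcont.continuousOn) isClosed_Icc isClosed_Ici
    have hne : S.Nonempty := ⟨t, ht, hcon.le⟩
    have hbdd : BddBelow S := ⟨0, fun s hs => hs.1.1⟩
    set s0 := sInf S with hs0
    have hs0S : s0 ∈ S := hSclosed.csInf_mem hne hbdd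
    have hs0Icc : s0 ∈ Icc 0 T := hs0S.1
    have hs0pos : 0 < s0 := by
      rcases hs0Icc.1.eq_or_lt with h0 | h0
      · exfalso
        have h1 := hs0S.2
        rw [← h0] at h1
        simp only [hA, mul_zero, Real.exp_zero, mul_one] at h1
        linarith
      · exact h0
    have hlt : ∀ r ∈ Ico 0 s0, f r ≤ A r := by
      intro r hr
      by_contra hr'
      push_neg at hr'
      have hrS : r ∈ S := ⟨⟨hr.1, le_trans hr.2.le hs0Icc.2⟩, hr'.le⟩
      exact absurd (csInf_le hbdd hrS) (not_le.mpr hr.2)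
    have hfint : IntervalIntegrable f volume 0 s0 :=
      ContinuousOn.intervalIntegrable_of_Icc hs0Icc.1
        (hf.mono (Icc_subset_Icc le_rfl hs0Icc.2))
    have hAint : IntervalIntegrable A volume 0 s0 := hAcont.intervalIntegrable 0 s0
    have h2 : ∀ᵐ r ∂(volume : Measure ℝ), r ≠ s0 := by
      rw [ae_iff]
      simp only [ne_eq, not_not, setOf_eq_eq_singleton]
      exact Real.volume_singleton
    have hcomp : (∫ r in (0:ℝ)..s0, K * f r) ≤ ∫ r in (0:ℝ)..s0, K * A r := by
      apply intervalIntegral.integral_mono_ae_restrict hs0Icc.1 (hfint.const_mul K)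
        (hAint.const_mul K)
      filter_upwards [ae_restrict_mem measurableSet_Icc, ae_restrict_of_ae h2] with r hrIcc hrne
      exact mul_le_mul_of_nonneg_left (hlt r ⟨hrIcc.1, lt_of_le_of_ne hrIcc.2 hrne⟩) hK
    have hcalc : (∫ r in (0:ℝ)..s0, K * A r) = (f 0 + ε) * (Real.exp (K * s0) - 1) := by
      have hderiv : ∀ r ∈ uIcc (0:ℝ) s0,
          HasDerivAt (fun x => (f 0 + ε) * Real.exp (K * x)) (K * A r) r := by
        intro r _
        have h1 : HasDerivAt (fun x : ℝ => K * x) K r := by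
          simpa using (hasDerivAt_id r).const_mul K
        have h2' := h1.exp
        have h3 := h2'.const_mul (f 0 + ε)
        rw [show K * A r = (f 0 + ε) * (Real.exp (K * r) * K) by simp [hA]; ring]
        exact h3
      rw [intervalIntegral.integral_eq_sub_of_hasDerivAt hderiv
        ((hAcont.intervalIntegrable 0 s0).const_mul K)]
      simp [hA]; ring
    have hfinal := h s0 hs0Icc
    have hAs0 : A s0 ≤ f s0 := hs0S.2
    have hexp : A s0 = (f 0 + ε) * Real.exp (K * s0) := rfl
    linarith [hcomp.trans_eq hcalc]
  by_contra hcon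
  push_neg at hcon
  have hexppos : 0 < Real.exp (K * t) := Real.exp_pos _
  set δ := f t - f 0 * Real.exp (K * t) with hδ
  have hδpos : 0 < δ := by linarith
  have := main (δ / (2 * Real.exp (K * t))) (by positivity)
  rw [add_mul, div_mul_eq_mul_div, mul_comm (2:ℝ) (Real.exp (K * t)), ← div_div,
    mul_div_assoc] at this
  rw [div_self (ne_of_gt hexppos)] at this
  linarith

lemma taylor_E {E : H → ℝ} {E' : H → H} {ζ : ℝ → ℝ}
    (hgrad : ∀ u : H, HasGradientAt E (E' u) u) (hE'c : Continuous E')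
    (hζ : Assumption2 E' ζ) {R : ℝ} (hR : 0 ≤ R) :
    ∀ a b : H, ‖a‖ ≤ R → ‖b‖ ≤ R →
      E b - E a ≤ ⟪E' a, b - a⟫ + ζ (2 * R) * ‖b - a‖ ^ 2 := by
  intro a b ha hb
  set γ : ℝ → H := fun s => a + s • (b - a) with hγ
  have hγd : ∀ s : ℝ, HasDerivAt γ (b - a) s := fun s => by
    have h := ((hasDerivAt_id s).smul_const (b - a)).const_add a
    rw [one_smul] at h
    exact h
  have hEd : ∀ s : ℝ, HasDerivAt (fun s => E (γ s)) ⟪E' (γ s), b - a⟫ s := by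
    intro s
    have h1 := (hgrad (γ s)).hasFDerivAt
    have h2 := h1.comp_hasDerivAt s (hγd s)
    exact h2
  have hγc : Continuous γ := by fun_prop
  have hcont : Continuous fun s : ℝ => ⟪E' (γ s), b - a⟫ :=
    (hE'c.comp hγc).inner continuous_const
  have hFTC : E (γ 1) - E (γ 0) = ∫ s in (0:ℝ)..1, ⟪E' (γ s), b - a⟫ :=
    (intervalIntegral.integral_eq_sub_of_hasDerivAt (fun s _ => hEd s)
      (hcont.intervalIntegrable 0 1)).symm
  have hγ0 : γ 0 = a := by simp [hγ]
  have hγ1 : γ 1 = b := by simp [hγ]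
  have hsub : (∫ s in (0:ℝ)..1, (⟪E' (γ s), b - a⟫ - ⟪E' a, b - a⟫))
      = (∫ s in (0:ℝ)..1, ⟪E' (γ s), b - a⟫) - ⟪E' a, b - a⟫ := by
    rw [intervalIntegral.integral_sub (hcont.intervalIntegrable 0 1) intervalIntegrable_const]
    simp
  have hptw : ∀ s ∈ Set.uIoc (0:ℝ) 1, ‖⟪E' (γ s), b - a⟫ - ⟪E' a, b - a⟫‖ ≤ ζ (2 * R) * ‖b - a‖ ^ 2 := by
    intro s hs
    rw [uIoc_of_le zero_le_one] at hs
    have hs0 : 0 ≤ s := hs.1.le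
    have hs1 : s ≤ 1 := hs.2
    have hγs : ‖γ s‖ ≤ R := by
      have : γ s = (1 - s) • a + s • b := by
        simp only [hγ]; module
      rw [this]
      calc ‖(1 - s) • a + s • b‖ ≤ ‖(1 - s) • a‖ + ‖s • b‖ := norm_add_le _ _
        _ = (1 - s) * ‖a‖ + s * ‖b‖ := by
            rw [norm_smul, norm_smul, Real.norm_eq_abs, Real.norm_eq_abs,
              abs_of_nonneg (by linarith), abs_of_nonneg hs0]
        _ ≤ (1 - s) * R + s * R := by
            apply add_le_add
            · exact mul_le_mul_of_nonneg_left ha (by linarith)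
            · exact mul_le_mul_of_nonneg_left hb hs0
        _ = R := by ring
    have hinner : ⟪E' (γ s), b - a⟫ - ⟪E' a, b - a⟫ = ⟪E' (γ s) - E' a, b - a⟫ := by
      rw [inner_sub_left]
    rw [hinner]
    calc ‖⟪E' (γ s) - E' a, b - a⟫‖ ≤ ‖E' (γ s) - E' a‖ * ‖b - a‖ := norm_inner_le_norm _ _
      _ ≤ (ζ (‖γ s‖ + ‖a‖) * ‖γ s - a‖) * ‖b - a‖ := by
          apply mul_le_mul_of_nonneg_right (hζ.bound _ _) (norm_nonneg _)
      _ ≤ ζ (2 * R) * ‖b - a‖ ^ 2 := by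
          have hζle : ζ (‖γ s‖ + ‖a‖) ≤ ζ (2 * R) := by
            apply hζ.mono (mem_Ici.2 (add_nonneg (norm_nonneg _) (norm_nonneg _)))
              (mem_Ici.2 (by linarith)) (by linarith)
          have hγsa : ‖γ s - a‖ ≤ ‖b - a‖ := by
            have : γ s - a = s • (b - a) := by simp [hγ]
            rw [this, norm_smul, Real.norm_eq_abs, abs_of_nonneg hs0]
            nlinarith [norm_nonneg (b - a)]
          have hz0 : 0 ≤ ζ (‖γ s‖ + ‖a‖) :=
            hζ.nonneg _ (add_nonneg (norm_nonneg _) (norm_nonneg _))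
          have hb0 := norm_nonneg (b - a)
          have hg0 := norm_nonneg (γ s - a)
          calc ζ (‖γ s‖ + ‖a‖) * ‖γ s - a‖ * ‖b - a‖
              ≤ ζ (2 * R) * ‖b - a‖ * ‖b - a‖ := by
                apply mul_le_mul_of_nonneg_right _ hb0
                exact mul_le_mul hζle hγsa hg0 (le_trans hz0 hζle)
            _ = ζ (2 * R) * ‖b - a‖ ^ 2 := by ring
  have hbd := intervalIntegral.norm_integral_le_of_norm_le_const hptw
  simp only [sub_zero, abs_one, mul_one] at hbd
  rw [hsub] at hbd
  have h1 := le_of_abs_le ((Real.norm_eq_abs _) ▸ hbd)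
  rw [← hFTC, hγ0, hγ1] at h1
  linarith


lemma chain_le {w g : ℝ → H} {F : H → ℝ} {F' : H → H} {L R t : ℝ}
    (ht : 0 < t)
    (hw : ContinuousOn w (Icc 0 t))
    (hftc : ∀ s r : ℝ, 0 ≤ s → s ≤ r → r ≤ t → w r - w s = ∫ x in s..r, g x)
    (hg : IntegrableOn g (Ioc 0 t))
    (hg2 : IntegrableOn (fun r => ‖g r‖ ^ 2) (Ioc 0 t))
    (hF'c : Continuous F')
    (hTaylor : ∀ a b : H, ‖a‖ ≤ R → ‖b‖ ≤ R → F b - F a ≤ ⟪F' a, b - a⟫ + L * ‖b - a‖ ^ 2)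
    (hRb : ∀ r ∈ Icc 0 t, ‖w r‖ ≤ R)
    (hL : 0 ≤ L) :
    F (w t) - F (w 0) ≤ ∫ r in (0:ℝ)..t, ⟪F' (w r), g r⟫ := by
  set φ : ℝ → H := fun r => F' (w r) with hφdef
  have hφ : ContinuousOn φ (Icc 0 t) := hF'c.comp_continuousOn hw
  obtain ⟨M, hM⟩ := isCompact_Icc.exists_bound_of_continuousOn hφ
  have hφm : AEStronglyMeasurable φ (volume.restrict (Ioc 0 t)) :=
    (hφ.mono Ioc_subset_Icc_self).aestronglyMeasurable measurableSet_Ioc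
  have hgm := hg.aestronglyMeasurable
  have hgn : IntegrableOn (fun r => ‖g r‖) (Ioc 0 t) := hg.norm
  have hI : IntegrableOn (fun r => ⟪φ r, g r⟫) (Ioc 0 t) := by
    refine Integrable.mono' (hgn.const_mul M) (hφm.inner hgm) ?_
    filter_upwards [ae_restrict_mem measurableSet_Ioc] with r hr
    calc ‖⟪φ r, g r⟫‖ ≤ ‖φ r‖ * ‖g r‖ := norm_inner_le_norm _ _
      _ ≤ M * ‖g r‖ := mul_le_mul_of_nonneg_right (hM r (Ioc_subset_Icc_self hr)) (norm_nonneg _)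
  have hIc : ∀ c : H, IntegrableOn (fun r => ⟪c, g r⟫) (Ioc 0 t) := by
    intro c
    refine Integrable.mono' (hgn.const_mul ‖c‖) (aestronglyMeasurable_const.inner hgm) ?_
    filter_upwards with r
    exact norm_inner_le_norm _ _
  -- reduce to ε-statement
  have key : ∀ ε : ℝ, 0 < ε →
      F (w t) - F (w 0) ≤ (∫ r in (0:ℝ)..t, ⟪F' (w r), g r⟫) + ε := by
    intro ε hε
    set B1 := ∫ r in (0:ℝ)..t, ‖g r‖ with hB1
    set B2 := ∫ r in (0:ℝ)..t, ‖g r‖ ^ 2 with hB2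
    have hB1nn : 0 ≤ B1 := intervalIntegral.integral_nonneg ht.le fun r _ => norm_nonneg _
    have hB2nn : 0 ≤ B2 := intervalIntegral.integral_nonneg ht.le fun r _ => sq_nonneg _
    set ε' := ε / (2 * (B1 + 1)) with hε'
    have hε'pos : 0 < ε' := by positivity
    obtain ⟨δ, hδpos, hδ⟩ := (Metric.uniformContinuousOn_iff.mp
      (isCompact_Icc.uniformContinuousOn_of_continuous hφ)) ε' hε'pos
    obtain ⟨n, hn⟩ := exists_nat_gt (max (t / δ) (L * t * B2 / (ε / 2)))
    have hnpos : 0 < (n : ℝ) := by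
      have h1 : 0 < t / δ := div_pos ht hδpos
      exact lt_trans h1 (lt_of_le_of_lt (le_max_left _ _) hn)
    have hmesh : t / n < δ := by
      rw [div_lt_iff₀ hnpos]
      have h1 : t / δ < n := lt_of_le_of_lt (le_max_left _ _) hn
      rw [div_lt_iff₀ hδpos] at h1
      linarith [h1]
    have herr2 : L * (t / n) * B2 ≤ ε / 2 := by
      have h1 : L * t * B2 / (ε / 2) < n := lt_of_le_of_lt (le_max_right _ _) hn
      rw [div_lt_iff₀ (by positivity)] at h1
      have h2 : L * (t / ↑n) * B2 = L * t * B2 / ↑n := by ring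
      rw [h2, div_le_iff₀ hnpos]
      nlinarith
    set p : ℕ → ℝ := fun i => i * (t / n) with hp
    have hp0 : p 0 = 0 := by simp [hp]
    have hpn : p n = t := by simp only [hp]; field_simp
    have hpstep : ∀ i : ℕ, p (i + 1) - p i = t / n := by
      intro i; simp only [hp]; push_cast; ring
    have hpmono : ∀ i j : ℕ, i ≤ j → p i ≤ p j := by
      intro i j hij
      apply mul_le_mul_of_nonneg_right _ (by positivity)
      exact_mod_cast hij
    have hpmem : ∀ i : ℕ, i ≤ n → p i ∈ Icc 0 t := by
      intro i hi
      constructor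
      · simp only [hp]; positivity
      · rw [← hpn]; exact hpmono i n hi
    have hsubIoc : ∀ i : ℕ, i < n → Ioc (p i) (p (i + 1)) ⊆ Ioc 0 t := by
      intro i hi
      exact Ioc_subset_Ioc (hpmem i hi.le).1 (hpmem (i + 1) hi).2
    have hple : ∀ i : ℕ, p i ≤ p (i + 1) := fun i => hpmono i (i + 1) (Nat.le_succ i)
    -- integrabilities on pieces
    have hIint : ∀ i : ℕ, i < n → IntervalIntegrable (fun r => ⟪φ r, g r⟫) volume (p i) (p (i+1)) :=
      fun i hi => (intervalIntegrable_iff_integrableOn_Ioc_of_le (hple i)).2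
        (hI.mono_set (hsubIoc i hi))
    have hgint : ∀ i : ℕ, i < n → IntervalIntegrable g volume (p i) (p (i+1)) :=
      fun i hi => (intervalIntegrable_iff_integrableOn_Ioc_of_le (hple i)).2
        (hg.mono_set (hsubIoc i hi))
    have hgnint : ∀ i : ℕ, i < n → IntervalIntegrable (fun r => ‖g r‖) volume (p i) (p (i+1)) :=
      fun i hi => (intervalIntegrable_iff_integrableOn_Ioc_of_le (hple i)).2
        (hgn.mono_set (hsubIoc i hi))
    have hg2int : ∀ i : ℕ, i < n → IntervalIntegrable (fun r => ‖g r‖ ^ 2) volume (p i) (p (i+1)) :=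
      fun i hi => (intervalIntegrable_iff_integrableOn_Ioc_of_le (hple i)).2
        (hg2.mono_set (hsubIoc i hi))
    have hIcint : ∀ (c : H) (i : ℕ), i < n →
        IntervalIntegrable (fun r => ⟪c, g r⟫) volume (p i) (p (i+1)) :=
      fun c i hi => (intervalIntegrable_iff_integrableOn_Ioc_of_le (hple i)).2
        ((hIc c).mono_set (hsubIoc i hi))
    -- per-piece claim
    have claim : ∀ i : ℕ, i < n →
        F (w (p (i + 1))) - F (w (p i)) ≤
          (∫ r in p i..p (i+1), ⟪φ r, g r⟫) + ε' * (∫ r in p i..p (i+1), ‖g r‖)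
            + L * ((t / n) * ∫ r in p i..p (i+1), ‖g r‖ ^ 2) := by
      intro i hi
      have hmem1 := hpmem i hi.le
      have hmem2 := hpmem (i + 1) hi
      have hΔ : w (p (i+1)) - w (p i) = ∫ x in p i..p (i+1), g x :=
        hftc (p i) (p (i+1)) hmem1.1 (hple i) hmem2.2
      have htay := hTaylor (w (p i)) (w (p (i+1))) (hRb _ hmem1) (hRb _ hmem2)
      -- bound the quadratic term
      have hq : ‖w (p (i+1)) - w (p i)‖ ^ 2 ≤ (t / n) * ∫ r in p i..p (i+1), ‖g r‖ ^ 2 := by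
        have h1 : ‖w (p (i+1)) - w (p i)‖ ≤ ∫ r in p i..p (i+1), ‖g r‖ := by
          rw [hΔ]
          exact intervalIntegral.norm_integral_le_integral_norm (hple i)
        have h2 := sq_integral_norm_le g (hple i) (hg2.mono_set (hsubIoc i hi))
        rw [hpstep i] at h2
        have h3 : 0 ≤ ∫ r in p i..p (i+1), ‖g r‖ :=
          intervalIntegral.integral_nonneg (hple i) fun r _ => norm_nonneg _
        nlinarith [norm_nonneg (w (p (i+1)) - w (p i))]
      -- bound the inner term
      have hpull : ⟪φ (p i), w (p (i+1)) - w (p i)⟫ = ∫ r in p i..p (i+1), ⟪φ (p i), g r⟫ := by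
        rw [hΔ, intervalIntegral.integral_of_le (hple i),
          intervalIntegral.integral_of_le (hple i)]
        exact (integral_inner (hg.mono_set (hsubIoc i hi)) (φ (p i))).symm
      have hinner : (∫ r in p i..p (i+1), ⟪φ (p i), g r⟫) ≤
          (∫ r in p i..p (i+1), ⟪φ r, g r⟫) + ε' * (∫ r in p i..p (i+1), ‖g r‖) := by
        have hmono : (∫ r in p i..p (i+1), ⟪φ (p i), g r⟫) - (∫ r in p i..p (i+1), ⟪φ r, g r⟫)
            ≤ ε' * (∫ r in p i..p (i+1), ‖g r‖) := by
          rw [← intervalIntegral.integral_sub (hIcint (φ (p i)) i hi) (hIint i hi),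
            ← intervalIntegral.integral_const_mul]
          refine intervalIntegral.integral_mono_on (hple i)
            ((hIcint (φ (p i)) i hi).sub (hIint i hi)) ((hgnint i hi).const_mul ε') ?_
          intro r hr
          have hrIcc : r ∈ Icc 0 t := ⟨le_trans hmem1.1 hr.1, le_trans hr.2 hmem2.2⟩
          have hdist : dist (p i) r < δ := by
            rw [Real.dist_eq, abs_sub_comm, abs_of_nonneg (by linarith [hr.1])]
            have := hr.2
            have := hpstep i
            linarith [hmesh]
          have hUC := (hδ (p i) hmem1 r hrIcc hdist).le
          rw [dist_eq_norm] at hUC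
          calc ⟪φ (p i), g r⟫ - ⟪φ r, g r⟫ = ⟪φ (p i) - φ r, g r⟫ := by rw [inner_sub_left]
            _ ≤ ‖φ (p i) - φ r‖ * ‖g r‖ := real_inner_le_norm _ _
            _ ≤ ε' * ‖g r‖ := mul_le_mul_of_nonneg_right hUC (norm_nonneg _)
        linarith
      have htay' : F (w (p (i+1))) - F (w (p i)) ≤
          ⟪φ (p i), w (p (i+1)) - w (p i)⟫ + L * ‖w (p (i+1)) - w (p i)‖ ^ 2 := htay
      have hq' := mul_le_mul_of_nonneg_left hq hL
      linarith [htay', hq', hinner, hpull]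
    have hsum := Finset.sum_le_sum (fun i hi => claim i (Finset.mem_range.mp hi))
    have htel : ∑ i ∈ Finset.range n, (F (w (p (i+1))) - F (w (p i))) = F (w t) - F (w 0) := by
      rw [Finset.sum_range_sub (fun i => F (w (p i))), hpn, hp0]
    have hsplit : (∑ i ∈ Finset.range n, ((∫ r in p i..p (i+1), ⟪φ r, g r⟫)
        + ε' * (∫ r in p i..p (i+1), ‖g r‖) + L * ((t/n) * ∫ r in p i..p (i+1), ‖g r‖ ^ 2)))
        = (∫ r in (0:ℝ)..t, ⟪φ r, g r⟫) + ε' * B1 + L * ((t/n) * B2) := by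
      have e1 := intervalIntegral.sum_integral_adjacent_intervals hIint
      have e2 := intervalIntegral.sum_integral_adjacent_intervals hgnint
      have e3 := intervalIntegral.sum_integral_adjacent_intervals hg2int
      rw [hp0, hpn] at e1 e2 e3
      rw [Finset.sum_add_distrib, Finset.sum_add_distrib, ← Finset.mul_sum, ← Finset.mul_sum,
        ← Finset.mul_sum, e1, e2, e3]
    have hε'B1 : ε' * B1 ≤ ε / 2 := by
      rw [hε', div_mul_eq_mul_div, div_le_iff₀ (by positivity)]
      nlinarith
    calc F (w t) - F (w 0)
        = ∑ i ∈ Finset.range n, (F (w (p (i+1))) - F (w (p i))) := htel.symm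
      _ ≤ ∑ i ∈ Finset.range n, ((∫ r in p i..p (i+1), ⟪φ r, g r⟫)
          + ε' * (∫ r in p i..p (i+1), ‖g r‖)
          + L * ((t/n) * ∫ r in p i..p (i+1), ‖g r‖ ^ 2)) := hsum
      _ = (∫ r in (0:ℝ)..t, ⟪φ r, g r⟫) + ε' * B1 + L * ((t/n) * B2) := hsplit
      _ ≤ (∫ r in (0:ℝ)..t, ⟪F' (w r), g r⟫) + ε := by
          have : L * ((t / ↑n) * B2) ≤ ε / 2 := by linarith [herr2]
          linarith [hε'B1, this]
  by_contra hcon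
  push_neg at hcon
  have h1 := key ((F (w t) - F (w 0) - ∫ r in (0:ℝ)..t, ⟪F' (w r), g r⟫) / 2) (by linarith)
  linarith

variable {C : Set H} {E' : H → H} {u u' : ℝ → H} {u₀ : H}

lemma ogf_cont (hu : IsOGF C E' u u' u₀) : ContinuousOn u (Ici 0) := by
  intro r₀ hr₀
  have hr₀' : (0:ℝ) ≤ r₀ := hr₀
  set T := r₀ + 1 with hT
  have hTpos : 0 < T := by linarith
  have hr0T : r₀ < T := lt_add_one r₀
  have hn : IntegrableOn (fun r => ‖u' r‖) (Ioc 0 T) := aux_norm_integrable (hu.sqInt T hTpos)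
  have hnIcc : IntegrableOn (fun r => ‖u' r‖) (Icc 0 T) := by
    rwa [integrableOn_Icc_iff_integrableOn_Ioc]
  set G : ℝ → ℝ := fun x => ∫ s in (0:ℝ)..x, ‖u' s‖ with hG
  have hGc : ContinuousOn G (Icc 0 T) := by
    have := intervalIntegral.continuousOn_primitive_interval
      (a := (0:ℝ)) (b := T) (μ := volume) (f := fun s => ‖u' s‖) ?hint
    · rwa [uIcc_of_le hTpos.le] at this
    · rwa [uIcc_of_le hTpos.le]
  have hkey : ∀ s r : ℝ, 0 ≤ s → s ≤ r → r ≤ T → ‖u r - u s‖ ≤ G r - G s := by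
    intro s r hs hsr hrT
    have h1 : IntervalIntegrable (fun x => ‖u' x‖) volume 0 s :=
      (intervalIntegrable_iff_integrableOn_Ioc_of_le hs).2
        (hn.mono_set (Ioc_subset_Ioc le_rfl (hsr.trans hrT)))
    have h2 : IntervalIntegrable (fun x => ‖u' x‖) volume s r :=
      (intervalIntegrable_iff_integrableOn_Ioc_of_le hsr).2
        (hn.mono_set (Ioc_subset_Ioc hs hrT))
    have hadd := intervalIntegral.integral_add_adjacent_intervals h1 h2
    have hftc := hu.ftc s r hs hsr
    calc ‖u r - u s‖ = ‖∫ x in s..r, u' x‖ := by rw [hftc]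
      _ ≤ ∫ x in s..r, ‖u' x‖ := intervalIntegral.norm_integral_le_integral_norm hsr
      _ = G r - G s := by rw [hG]; simp only; linarith [hadd]
  have hle : 𝓝[Ici 0] r₀ ≤ 𝓝[Icc 0 T] r₀ := by
    apply nhdsWithin_le_of_mem
    have h1 : Ici (0:ℝ) ∩ Iio T ∈ 𝓝[Ici 0] r₀ :=
      inter_mem self_mem_nhdsWithin (mem_nhdsWithin_of_mem_nhds (Iio_mem_nhds hr0T))
    exact mem_of_superset h1 (fun x hx => ⟨hx.1, hx.2.le⟩)
  have hGt : Tendsto (fun x => |G x - G r₀|) (𝓝[Ici 0] r₀) (𝓝 0) := by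
    have h1 : Tendsto G (𝓝[Icc 0 T] r₀) (𝓝 (G r₀)) :=
      hGc.continuousWithinAt ⟨hr₀', hr0T.le⟩
    have h2 : Tendsto (fun x => |G x - G r₀|) (𝓝[Icc 0 T] r₀) (𝓝 |G r₀ - G r₀|) :=
      ((h1.sub tendsto_const_nhds).abs)
    simpa using h2.mono_left hle
  rw [ContinuousWithinAt, tendsto_iff_dist_tendsto_zero]
  refine squeeze_zero' (Filter.Eventually.of_forall fun x => dist_nonneg) ?_ hGt
  filter_upwards [self_mem_nhdsWithin,
      eventually_nhdsWithin_of_eventually_nhds (eventually_lt_nhds hr0T)] with x hx hxT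
  rcases le_total x r₀ with hc | hc
  · rw [dist_eq_norm, ← norm_neg, neg_sub]
    calc ‖u r₀ - u x‖ ≤ G r₀ - G x := hkey x r₀ hx hc hr0T.le
      _ ≤ |G x - G r₀| := by rw [abs_sub_comm]; exact le_abs_self _
  · rw [dist_eq_norm]
    calc ‖u x - u r₀‖ ≤ G x - G r₀ := hkey r₀ x hr₀' hc hxT.le
      _ ≤ |G x - G r₀| := le_abs_self _

lemma ogf_aesm (hu : IsOGF C E' u u' u₀) :
    AEStronglyMeasurable u' (volume.restrict (Ioi (0:ℝ))) := by
  have hcont := ogf_cont hu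
  have hcu : Continuous (fun r : ℝ => u (max r 0)) :=
    hcont.comp_continuous (continuous_id.max continuous_const)
      (fun x => mem_Ici.2 (le_max_right _ _))
  set q : ℕ → ℝ → H := fun n r =>
    (((n : ℝ) + 1)⁻¹)⁻¹ • (u (max (r + ((n : ℝ) + 1)⁻¹) 0) - u (max r 0)) with hq
  have hqm : ∀ n, AEStronglyMeasurable (q n) (volume.restrict (Ioi (0:ℝ))) := by
    intro n
    exact (continuous_const.smul
      ((hcu.comp (continuous_id.add continuous_const)).sub hcu)).aestronglyMeasurable
  apply aestronglyMeasurable_of_tendsto_ae atTop hqm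
  filter_upwards [hu.derivAe, ae_restrict_mem measurableSet_Ioi] with r hd hr
  have hrpos : (0:ℝ) < r := hr
  have hslope := hasDerivAt_iff_tendsto_slope.1 hd
  have hy : Tendsto (fun n : ℕ => r + ((n : ℝ) + 1)⁻¹) atTop (𝓝[≠] r) := by
    rw [tendsto_nhdsWithin_iff]
    constructor
    · have h0 : Tendsto (fun n : ℕ => ((n : ℝ) + 1)⁻¹) atTop (𝓝 0) := by
        simpa using tendsto_one_div_add_atTop_nhds_zero_nat (𝕜 := ℝ)
      simpa using (tendsto_const_nhds.add h0)
    · filter_upwards with n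
      have : (0:ℝ) < ((n : ℝ) + 1)⁻¹ := by positivity
      simp only [mem_compl_iff, mem_singleton_iff]
      intro hcontra
      nlinarith [hcontra]
  have hcomp := hslope.comp hy
  have heq : ∀ n : ℕ, slope u r (r + ((n : ℝ) + 1)⁻¹) = q n r := by
    intro n
    have hinvpos : (0:ℝ) < ((n : ℝ) + 1)⁻¹ := by positivity
    rw [slope_def_module]
    simp only [hq]
    rw [max_eq_left (by positivity : (0:ℝ) ≤ r + ((n : ℝ) + 1)⁻¹),
      max_eq_left hrpos.le]
    congr 1
    abel_nf
  have : Tendsto (fun n : ℕ => q n r) atTop (𝓝 (u' r)) := by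
    refine hcomp.congr fun n => ?_
    exact heq n
  exact this

lemma ogf_int (hu : IsOGF C E' u u' u₀) {T : ℝ} (hT : 0 < T) :
    IntegrableOn u' (Ioc 0 T) := by
  have hm : AEStronglyMeasurable u' (volume.restrict (Ioc (0:ℝ) T)) :=
    (ogf_aesm hu).mono_measure (Measure.restrict_mono Ioc_subset_Ioi_self le_rfl)
  have hbound : IntegrableOn (fun r => (1 + ‖u' r‖ ^ 2) / 2) (Ioc 0 T) :=
    ((integrableOn_const measure_Ioc_lt_top.ne).add (hu.sqInt T hT)).div_const 2
  refine hbound.mono' hm (Filter.Eventually.of_forall fun r => ?_)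
  nlinarith [sq_nonneg (‖u' r‖ - 1)]

lemma ogf_dissip (hu : IsOGF C E' u u' u₀) :
    ∀ᵐ r ∂(volume.restrict (Ioi (0:ℝ))), ‖u' r‖ ^ 2 + ⟪E' (u r), u' r⟫ ≤ 0 := by
  filter_upwards [hu.derivAe, hu.fvi, ae_restrict_mem measurableSet_Ioi] with r hd hf hr
  have hrpos : (0:ℝ) < r := hr
  set c := u' r + E' (u r) with hc
  have hy : ∀ y ∈ Ioo (0:ℝ) r, ⟪c, slope u r y⟫ ≤ 0 := by
    intro y hy
    have h1 : 0 ≤ ⟪c, u y - u r⟫ := by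
      have := hf (u y) (hu.mem y hy.1.le)
      rw [hc, inner_add_left]
      linarith [this]
    rw [slope_def_module, real_inner_smul_right]
    have h2 : (y - r)⁻¹ < 0 := inv_lt_zero.2 (by linarith [hy.2])
    exact mul_nonpos_iff.2 (Or.inr ⟨h2.le, h1⟩)
  have hslope := (hasDerivAt_iff_tendsto_slope.1 hd).mono_left
    (nhdsWithin_mono r (fun y hy => by
      simp only [mem_compl_iff, mem_singleton_iff]
      exact ne_of_lt (hy : y ∈ Ioo 0 r).2))
  haveI : (𝓝[Ioo (0:ℝ) r] r).NeBot := right_nhdsWithin_Ioo_neBot hrpos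
  have htend : Tendsto (fun y => ⟪c, slope u r y⟫) (𝓝[Ioo (0:ℝ) r] r) (𝓝 ⟪c, u' r⟫) :=
    ((continuous_const.inner continuous_id).tendsto (u' r)).comp hslope
  have hfin : ⟪c, u' r⟫ ≤ 0 :=
    le_of_tendsto htend (eventually_mem_nhdsWithin.mono hy)
  rw [hc, inner_add_left, real_inner_self_eq_norm_sq] at hfin
  linarith

-- inner product integrability helper
lemma inner_integrable (hu : IsOGF C E' u u' u₀) (hE'c : Continuous E') {t : ℝ} (ht : 0 < t) :
    IntegrableOn (fun r => ⟪E' (u r), u' r⟫) (Ioc 0 t) := by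
  have hcont : ContinuousOn u (Icc 0 t) :=
    (ogf_cont hu).mono (fun x hx => hx.1)
  have hφ : ContinuousOn (fun r => E' (u r)) (Icc 0 t) := hE'c.comp_continuousOn hcont
  obtain ⟨M, hM⟩ := isCompact_Icc.exists_bound_of_continuousOn hφ
  refine Integrable.mono' ((ogf_int hu ht).norm.const_mul M)
    (((hφ.mono Ioc_subset_Icc_self).aestronglyMeasurable measurableSet_Ioc).inner
      (ogf_int hu ht).aestronglyMeasurable) ?_
  filter_upwards [ae_restrict_mem measurableSet_Ioc] with r hr
  calc ‖⟪E' (u r), u' r⟫‖ ≤ ‖E' (u r)‖ * ‖u' r‖ := norm_inner_le_norm _ _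
    _ ≤ M * ‖u' r‖ := mul_le_mul_of_nonneg_right (hM r (Ioc_subset_Icc_self hr)) (norm_nonneg _)

lemma dissip_icc (hu : IsOGF C E' u u' u₀) (t : ℝ) :
    ∀ᵐ r ∂(volume.restrict (Icc (0:ℝ) t)), ⟪E' (u r), u' r⟫ ≤ -‖u' r‖ ^ 2 := by
  have h1 := (ae_restrict_iff' measurableSet_Ioi).1 (ogf_dissip hu)
  have h0 : ∀ᵐ r ∂(volume : Measure ℝ), r ≠ 0 := by
    rw [ae_iff]
    simp only [ne_eq, not_not, setOf_eq_eq_singleton]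
    exact Real.volume_singleton
  filter_upwards [ae_restrict_of_ae h1, ae_restrict_of_ae h0,
    ae_restrict_mem measurableSet_Icc] with r hr hr0 hrIcc
  have : r ∈ Ioi (0:ℝ) := lt_of_le_of_ne hrIcc.1 (Ne.symm hr0)
  linarith [hr this]

lemma ogf_energy {E : H → ℝ} {α : ℝ} (hE : Assumption1 E E' α) {ζ : ℝ → ℝ}
    (hζ : Assumption2 E' ζ) (hu : IsOGF C E' u u' u₀) {t : ℝ} (ht : 0 < t) :
    (∫ r in (0:ℝ)..t, ‖u' r‖ ^ 2) ≤ E u₀ - α := by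
  have hcont : ContinuousOn u (Icc 0 t) := (ogf_cont hu).mono (fun x hx => hx.1)
  obtain ⟨R₀, hR₀⟩ := isCompact_Icc.exists_bound_of_continuousOn hcont
  set R := max R₀ 0 with hRdef
  have hRnn : 0 ≤ R := le_max_right _ _
  have hR : ∀ r ∈ Icc 0 t, ‖u r‖ ≤ R := fun r hr => (hR₀ r hr).trans (le_max_left _ _)
  have hE'c : Continuous E' := hE.locLip.continuous
  have hL : 0 ≤ ζ (2 * R) := hζ.nonneg _ (by positivity)
  have hchain := chain_le ht hcont (fun s r hs hsr _ => hu.ftc s r hs hsr)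
    (ogf_int hu ht) (hu.sqInt t ht) hE'c (taylor_E hE.grad hE'c hζ hRnn) hR hL
  have hint1 : IntervalIntegrable (fun r => ⟪E' (u r), u' r⟫) volume 0 t :=
    (intervalIntegrable_iff_integrableOn_Ioc_of_le ht.le).2 (inner_integrable hu hE'c ht)
  have hint2 : IntervalIntegrable (fun r => -‖u' r‖ ^ 2) volume 0 t :=
    (intervalIntegrable_iff_integrableOn_Ioc_of_le ht.le).2 (hu.sqInt t ht).neg
  have hmono : (∫ r in (0:ℝ)..t, ⟪E' (u r), u' r⟫) ≤ ∫ r in (0:ℝ)..t, -‖u' r‖ ^ 2 :=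
    intervalIntegral.integral_mono_ae_restrict ht.le hint1 hint2 (dissip_icc hu t)
  rw [intervalIntegral.integral_neg] at hmono
  have hlb := hE.lowerBound (u t)
  have hinit : u 0 = u₀ := hu.init
  rw [hinit] at hchain
  linarith

lemma ogf_norm_bound (hu : IsOGF C E' u u' u₀) {t D : ℝ} (ht : 0 < t)
    (hD : (∫ r in (0:ℝ)..t, ‖u' r‖ ^ 2) ≤ D) (hDnn : 0 ≤ D) :
    ∀ r ∈ Icc 0 t, ‖u r‖ ≤ ‖u₀‖ + Real.sqrt D * Real.sqrt t := by
  intro r hr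
  have hsq : 0 ≤ Real.sqrt D * Real.sqrt t := by positivity
  rcases eq_or_lt_of_le hr.1 with h0 | h0
  · rw [← h0, hu.init]; linarith
  · have hftc := hu.ftc 0 r le_rfl h0.le
    have h1 : ‖u r - u 0‖ ≤ ∫ x in (0:ℝ)..r, ‖u' x‖ := by
      rw [hftc]
      exact intervalIntegral.norm_integral_le_integral_norm h0.le
    have h2 := sq_integral_norm_le u' h0.le (hu.sqInt r h0)
    have h3 : (∫ x in (0:ℝ)..r, ‖u' x‖ ^ 2) ≤ ∫ x in (0:ℝ)..t, ‖u' x‖ ^ 2 := by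
      rw [intervalIntegral.integral_of_le h0.le, intervalIntegral.integral_of_le ht.le]
      apply setIntegral_mono_set (hu.sqInt t ht)
        (Filter.Eventually.of_forall fun x => sq_nonneg _)
      exact HasSubset.Subset.eventuallyLE (Ioc_subset_Ioc le_rfl hr.2)
    set X := ∫ x in (0:ℝ)..r, ‖u' x‖ with hX
    have hXnn : 0 ≤ X := intervalIntegral.integral_nonneg h0.le fun x _ => norm_nonneg _
    have hX2 : X ^ 2 ≤ t * D := by
      have : (r - 0) * (∫ x in (0:ℝ)..r, ‖u' x‖ ^ 2) ≤ t * D := by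
        have hi : 0 ≤ ∫ x in (0:ℝ)..r, ‖u' x‖ ^ 2 :=
          intervalIntegral.integral_nonneg h0.le fun x _ => sq_nonneg _
        have := hr.2
        nlinarith
      linarith [h2]
    have hXle : X ≤ Real.sqrt D * Real.sqrt t := by
      rw [← Real.sqrt_mul hDnn t]
      rw [show Real.sqrt (D * t) = Real.sqrt (t * D) by rw [mul_comm]]
      exact (Real.le_sqrt hXnn (by positivity)).2 hX2
    have h4 : ‖u r‖ ≤ ‖u 0‖ + ‖u r - u 0‖ := by
      simpa using norm_add_le (u 0) (u r - u 0)
    rw [hu.init] at h4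
    have h5 : ‖u r - u 0‖ ≤ X := h1
    rw [hu.init] at h5
    linarith

/-- **Uniqueness and continuous dependence.** For Obstacle Gradient Flows `u, v` with initial
data `u₀, v₀` one has
`‖u(t) - v(t)‖ ≤ ‖u₀ - v₀‖ · exp(t·ζ(‖u₀‖ + ‖v₀‖ + 2√(max{E(u₀),E(v₀)} - α)·√t))`;
in particular flows are unique. -/
theorem uniqueness_and_continuous_dependence
    (E : H → ℝ) (E' : H → H) (α : ℝ) (hE : Assumption1 E E' α)
    (ζ : ℝ → ℝ) (hζ : Assumption2 E' ζ)
    (C : Set H) (hCne : C.Nonempty) (hCcl : IsClosed C) (hCcv : Convex ℝ C)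
    (u u' v v' : ℝ → H) (u₀ v₀ : H) (hu₀ : u₀ ∈ C) (hv₀ : v₀ ∈ C)
    (hu : IsOGF C E' u u' u₀) (hv : IsOGF C E' v v' v₀) :
    (∀ t : ℝ, 0 ≤ t →
      ‖u t - v t‖ ≤ ‖u₀ - v₀‖ *
        Real.exp (t * ζ (‖u₀‖ + ‖v₀‖ +
          2 * Real.sqrt (max (E u₀) (E v₀) - α) * Real.sqrt t))) ∧
    (u₀ = v₀ → ∀ t : ℝ, 0 ≤ t → u t = v t) := by
  have main : ∀ t : ℝ, 0 ≤ t →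
      ‖u t - v t‖ ≤ ‖u₀ - v₀‖ *
        Real.exp (t * ζ (‖u₀‖ + ‖v₀‖ +
          2 * Real.sqrt (max (E u₀) (E v₀) - α) * Real.sqrt t)) := by
    intro t ht0
    rcases eq_or_lt_of_le ht0 with rfl | ht
    · rw [← hu.init, ← hv.init]
      simp
    set D := max (E u₀) (E v₀) - α with hD
    have hDnn : 0 ≤ D := by
      have h1 := hE.lowerBound u₀
      have h2 := le_max_left (E u₀) (E v₀)
      rw [hD]; linarith
    set Rarg := ‖u₀‖ + ‖v₀‖ + 2 * Real.sqrt D * Real.sqrt t with hRarg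
    set K := ζ Rarg with hK
    have hRargnn : 0 ≤ Rarg := by rw [hRarg]; positivity
    have hKnn : 0 ≤ K := hζ.nonneg _ hRargnn
    have hDu : (∫ r in (0:ℝ)..t, ‖u' r‖ ^ 2) ≤ D := by
      refine le_trans (ogf_energy hE hζ hu ht) ?_
      have := le_max_left (E u₀) (E v₀); rw [hD]; linarith
    have hDv : (∫ r in (0:ℝ)..t, ‖v' r‖ ^ 2) ≤ D := by
      refine le_trans (ogf_energy hE hζ hv ht) ?_
      have := le_max_right (E u₀) (E v₀); rw [hD]; linarith
    have hbu := ogf_norm_bound hu ht hDu hDnn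
    have hbv := ogf_norm_bound hv ht hDv hDnn
    have hargle : ∀ r ∈ Icc 0 t, ‖u r‖ + ‖v r‖ ≤ Rarg := by
      intro r hr
      have h1 := hbu r hr
      have h2 := hbv r hr
      rw [hRarg]; linarith
    have hζle : ∀ r ∈ Icc 0 t, ζ (‖u r‖ + ‖v r‖) ≤ K := fun r hr =>
      hζ.mono (mem_Ici.2 (by positivity)) (mem_Ici.2 hRargnn) (hargle r hr)
    set w : ℝ → H := fun r => u r - v r with hw
    set g : ℝ → H := fun r => u' r - v' r with hg
    have hucont : ContinuousOn u (Icc 0 t) := (ogf_cont hu).mono (fun x hx => hx.1)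
    have hvcont : ContinuousOn v (Icc 0 t) := (ogf_cont hv).mono (fun x hx => hx.1)
    have hwcont : ContinuousOn w (Icc 0 t) := hucont.sub hvcont
    set RW := (‖u₀‖ + Real.sqrt D * Real.sqrt t) + (‖v₀‖ + Real.sqrt D * Real.sqrt t) with hRW
    have hRWb : ∀ r ∈ Icc 0 t, ‖w r‖ ≤ RW := by
      intro r hr
      calc ‖w r‖ ≤ ‖u r‖ + ‖v r‖ := norm_sub_le _ _
        _ ≤ RW := by rw [hRW]; have := hbu r hr; have := hbv r hr; linarith
    have hgi : IntegrableOn g (Ioc 0 t) := (ogf_int hu ht).sub (ogf_int hv ht)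
    have hg2i : IntegrableOn (fun r => ‖g r‖ ^ 2) (Ioc 0 t) := by
      have hnm := hgi.aestronglyMeasurable.norm
      have hm : AEStronglyMeasurable (fun r => ‖g r‖ ^ 2) (volume.restrict (Ioc 0 t)) := by
        have h := hnm.mul hnm
        simp only [pow_two]
        exact h
      have hbound : IntegrableOn (fun r => 2 * ‖u' r‖ ^ 2 + 2 * ‖v' r‖ ^ 2) (Ioc 0 t) :=
        ((hu.sqInt t ht).const_mul 2).add ((hv.sqInt t ht).const_mul 2)
      refine hbound.mono' hm (Filter.Eventually.of_forall fun r => ?_)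
      rw [Real.norm_eq_abs, abs_of_nonneg (sq_nonneg _)]
      have h1 : ‖g r‖ ≤ ‖u' r‖ + ‖v' r‖ := norm_sub_le _ _
      nlinarith [mul_self_le_mul_self (norm_nonneg (g r)) h1,
        sq_nonneg (‖u' r‖ - ‖v' r‖), norm_nonneg (g r)]
    have hwftc : ∀ s r : ℝ, 0 ≤ s → s ≤ r → r ≤ t → w r - w s = ∫ x in s..r, g x := by
      intro s r hs hsr hrt
      have hiu : IntervalIntegrable u' volume s r :=
        (intervalIntegrable_iff_integrableOn_Ioc_of_le hsr).2
          ((ogf_int hu ht).mono_set (Ioc_subset_Ioc hs hrt))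
      have hiv : IntervalIntegrable v' volume s r :=
        (intervalIntegrable_iff_integrableOn_Ioc_of_le hsr).2
          ((ogf_int hv ht).mono_set (Ioc_subset_Ioc hs hrt))
      have h1 := hu.ftc s r hs hsr
      have h2 := hv.ftc s r hs hsr
      rw [hw, hg]
      simp only
      rw [intervalIntegral.integral_sub hiu hiv, ← h1, ← h2]
      abel
    have hTay : ∀ a b : H, ‖a‖ ≤ RW → ‖b‖ ≤ RW →
        ‖b‖ ^ 2 - ‖a‖ ^ 2 ≤ ⟪(2:ℝ) • a, b - a⟫ + 1 * ‖b - a‖ ^ 2 := by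
      intro a b _ _
      have hexp : ‖b - a‖ ^ 2 = ‖b‖ ^ 2 - 2 * ⟪b, a⟫ + ‖a‖ ^ 2 := norm_sub_sq_real b a
      have hsm : ⟪(2:ℝ) • a, b - a⟫ = 2 * (⟪a, b⟫ - ⟪a, a⟫) := by
        rw [real_inner_smul_left, inner_sub_right]
      have hself : ⟪a, a⟫ = ‖a‖ ^ 2 := real_inner_self_eq_norm_sq a
      have hcomm : ⟪b, a⟫ = ⟪a, b⟫ := real_inner_comm a b
      rw [hsm, hself]
      nlinarith [hexp, hcomm]
    have hchain : ∀ s : ℝ, 0 < s → s ≤ t →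
        ‖w s‖ ^ 2 - ‖w 0‖ ^ 2 ≤ ∫ r in (0:ℝ)..s, ⟪(2:ℝ) • (w r), g r⟫ := by
      intro s hs hst
      exact chain_le (F := fun x => ‖x‖ ^ 2) (F' := fun x => (2:ℝ) • x) hs
        (hwcont.mono (Icc_subset_Icc le_rfl hst))
        (fun a b ha hab hbt => hwftc a b ha hab (hbt.trans hst))
        (hgi.mono_set (Ioc_subset_Ioc le_rfl hst))
        (hg2i.mono_set (Ioc_subset_Ioc le_rfl hst))
        (continuous_const.smul continuous_id)
        hTay
        (fun r hr => hRWb r (Icc_subset_Icc le_rfl hst hr))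
        zero_le_one
    -- a.e. differential inequality
    have h0ae : ∀ᵐ r ∂(volume : Measure ℝ), r ≠ 0 := by
      rw [ae_iff]
      simp only [ne_eq, not_not, setOf_eq_eq_singleton]
      exact Real.volume_singleton
    have hae : ∀ᵐ r ∂(volume.restrict (Icc (0:ℝ) t)),
        ⟪(2:ℝ) • (w r), g r⟫ ≤ 2 * K * ‖w r‖ ^ 2 := by
      have h1u := (ae_restrict_iff' measurableSet_Ioi).1 hu.fvi
      have h1v := (ae_restrict_iff' measurableSet_Ioi).1 hv.fvi
      filter_upwards [ae_restrict_of_ae h1u, ae_restrict_of_ae h1v,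
        ae_restrict_of_ae h0ae, ae_restrict_mem measurableSet_Icc] with r hfu hfv hr0 hrIcc
      have hrpos : r ∈ Ioi (0:ℝ) := lt_of_le_of_ne hrIcc.1 (Ne.symm hr0)
      have h2 := hfu hrpos (v r) (hv.mem r (le_of_lt hrpos))
      have h3 := hfv hrpos (u r) (hu.mem r (le_of_lt hrpos))
      have hsum : ⟪u' r - v' r, u r - v r⟫ ≤ ⟪E' (u r) - E' (v r), v r - u r⟫ := by
        have e1 : ⟪u' r, v r - u r⟫ = -⟪u' r, u r - v r⟫ := by
          rw [← inner_neg_right]; congr 1; abel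
        have e2 : ⟪v' r, u r - v r⟫ = ⟪v' r, u r - v r⟫ := rfl
        have e3 : ⟪u' r - v' r, u r - v r⟫ = ⟪u' r, u r - v r⟫ - ⟪v' r, u r - v r⟫ := by
          rw [inner_sub_left]
        have e4 : ⟪E' (u r) - E' (v r), v r - u r⟫
            = ⟪E' (u r), v r - u r⟫ + ⟪E' (v r), u r - v r⟫ := by
          rw [inner_sub_left]
          have : ⟪E' (v r), v r - u r⟫ = -⟪E' (v r), u r - v r⟫ := by
            rw [← inner_neg_right]; congr 1; abel
          rw [this]; ring
        rw [e3, e4]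
        have h2' : 0 ≤ ⟪u' r, v r - u r⟫ + ⟪E' (u r), v r - u r⟫ := h2
        rw [e1] at h2'
        linarith
      have hcs : ⟪E' (u r) - E' (v r), v r - u r⟫ ≤ K * ‖w r‖ ^ 2 := by
        calc ⟪E' (u r) - E' (v r), v r - u r⟫
            ≤ ‖E' (u r) - E' (v r)‖ * ‖v r - u r‖ := real_inner_le_norm _ _
          _ = ‖E' (u r) - E' (v r)‖ * ‖w r‖ := by
              rw [hw]; simp only; rw [norm_sub_rev (v r) (u r)]
          _ ≤ (ζ (‖u r‖ + ‖v r‖) * ‖u r - v r‖) * ‖w r‖ :=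
              mul_le_mul_of_nonneg_right (hζ.bound _ _) (norm_nonneg _)
          _ = ζ (‖u r‖ + ‖v r‖) * ‖w r‖ ^ 2 := by rw [hw]; ring
          _ ≤ K * ‖w r‖ ^ 2 := by
              apply mul_le_mul_of_nonneg_right (hζle r hrIcc) (sq_nonneg _)
      have hfinal : ⟪(2:ℝ) • (w r), g r⟫ = 2 * ⟪u' r - v' r, u r - v r⟫ := by
        rw [real_inner_smul_left, real_inner_comm]
      rw [hfinal]
      linarith
    -- integrability of the two integrands on [0,t]
    have hIw : IntegrableOn (fun r => ⟪(2:ℝ) • (w r), g r⟫) (Ioc 0 t) := by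
      have hm : AEStronglyMeasurable (fun r => ⟪(2:ℝ) • (w r), g r⟫)
          (volume.restrict (Ioc 0 t)) := by
        refine AEStronglyMeasurable.inner ?_ hgi.aestronglyMeasurable
        exact (((hwcont.mono Ioc_subset_Icc_self).aestronglyMeasurable
          measurableSet_Ioc).const_smul (2:ℝ))
      refine Integrable.mono' ((hgi.norm.const_mul (2 * RW))) hm ?_
      filter_upwards [ae_restrict_mem measurableSet_Ioc] with r hr
      calc ‖⟪(2:ℝ) • (w r), g r⟫‖ ≤ ‖(2:ℝ) • (w r)‖ * ‖g r‖ := norm_inner_le_norm _ _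
        _ = 2 * ‖w r‖ * ‖g r‖ := by rw [norm_smul]; simp [abs_of_nonneg]
        _ ≤ 2 * RW * ‖g r‖ := by
            have := hRWb r (Ioc_subset_Icc_self hr)
            have := norm_nonneg (g r)
            nlinarith [norm_nonneg (w r)]
    have hstep : ∀ s ∈ Icc (0:ℝ) t,
        ‖w s‖ ^ 2 ≤ ‖w 0‖ ^ 2 + ∫ r in (0:ℝ)..s, (2 * K) * ‖w r‖ ^ 2 := by
      intro s hs
      rcases eq_or_lt_of_le hs.1 with h0 | h0
      · rw [← h0]; simp
      have hc := hchain s h0 hs.2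
      have hint1 : IntervalIntegrable (fun r => ⟪(2:ℝ) • (w r), g r⟫) volume 0 s :=
        (intervalIntegrable_iff_integrableOn_Ioc_of_le h0.le).2
          (hIw.mono_set (Ioc_subset_Ioc le_rfl hs.2))
      have hint2 : IntervalIntegrable (fun r => (2 * K) * ‖w r‖ ^ 2) volume 0 s := by
        apply ContinuousOn.intervalIntegrable_of_Icc h0.le
        exact continuousOn_const.mul
          (((hwcont.mono (Icc_subset_Icc le_rfl hs.2)).norm).pow 2)
      have hm : (∫ r in (0:ℝ)..s, ⟪(2:ℝ) • (w r), g r⟫)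
          ≤ ∫ r in (0:ℝ)..s, (2 * K) * ‖w r‖ ^ 2 := by
        apply intervalIntegral.integral_mono_ae_restrict h0.le hint1 hint2
        exact ae_restrict_of_ae_restrict_of_subset (Icc_subset_Icc le_rfl hs.2) hae
      linarith
    have hfcont : ContinuousOn (fun s => ‖w s‖ ^ 2) (Icc 0 t) := (hwcont.norm).pow 2
    have hgr := my_gronwall (K := 2 * K) (by positivity) hfcont hstep t ⟨ht0, le_rfl⟩
    have hw0 : w 0 = u₀ - v₀ := by rw [hw]; simp only; rw [hu.init, hv.init]
    rw [hw0] at hgr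
    have hrhs : ‖u₀ - v₀‖ ^ 2 * Real.exp (2 * K * t)
        = (‖u₀ - v₀‖ * Real.exp (t * K)) ^ 2 := by
      have h2 : Real.exp (t * K) ^ 2 = Real.exp (2 * K * t) := by
        rw [pow_two, ← Real.exp_add]; congr 1; ring
      rw [mul_pow, h2]
    rw [hrhs] at hgr
    have hfin : ‖w t‖ ≤ ‖u₀ - v₀‖ * Real.exp (t * K) := by
      have h1 : (0:ℝ) ≤ ‖u₀ - v₀‖ * Real.exp (t * K) := by positivity
      exact (pow_le_pow_iff_left₀ (norm_nonneg _) h1 two_ne_zero).1 hgr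
    exact hfin
  refine ⟨main, fun heq t ht => ?_⟩
  have h1 := main t ht
  rw [heq, sub_self, norm_zero, zero_mul] at h1
  have h2 : u t - v t = 0 := by
    have := norm_nonneg (u t - v t)
    exact norm_eq_zero.1 (le_antisymm h1 this)
  exact sub_eq_zero.1 h2
end
end

section
/- A nonempty closed convex set C ⊆ H has the Half Plane Residuum (HPR) property if and only if for all w₁, w₂ ∈ H one has (w₁ − π_C(w₁), w₂ − π_C(w₂)) ≥ 0. -/
open MeasureTheory Set Filter

noncomputable section

local notation "⟪" x ", " y "⟫" => @inner ℝ _ _ x y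

variable {H : Type*} [NormedAddCommGroup H] [InnerProductSpace ℝ H] [CompleteSpace H]

theorem hpr_var_ineq
    (C : Set H) (hCcv : Convex ℝ C)
    (P : H → H)
    (hP : ∀ v : H, P v ∈ C ∧ ∀ z ∈ C, ‖v - P v‖ ≤ ‖v - z‖) (v : H) :
    ∀ z ∈ C, ⟪v - P v, z - P v⟫ ≤ 0 := by
  haveI : Nonempty C := ⟨⟨P v, (hP v).1⟩⟩
  have heq : ‖v - P v‖ = ⨅ w : C, ‖v - w‖ := by
    apply le_antisymm
    · exact le_ciInf fun w => (hP v).2 w w.2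
    · exact ciInf_le ⟨0, by rintro x ⟨w, rfl⟩; exact norm_nonneg _⟩ (⟨P v, (hP v).1⟩ : C)
  exact (norm_eq_iInf_iff_real_inner_le_zero hCcv (hP v).1).mp heq

/-- **Justification of the name (Half Plane Residuum property).** A nonempty closed convex set
`C` has the HPR property (for every `u ∈ C` and `v ∈ H`, `u + π_C(v) - v ∈ C`, where `P = π_C`
is the nearest point projection onto `C`) if and only if
`(w₁ - π_C(w₁), w₂ - π_C(w₂)) ≥ 0` for all `w₁, w₂ ∈ H`. -/
theorem hpr_iff_inner_nonneg
    (C : Set H) (hCne : C.Nonempty) (hCcl : IsClosed C) (hCcv : Convex ℝ C)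
    (P : H → H)
    (hP : ∀ v : H, P v ∈ C ∧ ∀ z ∈ C, ‖v - P v‖ ≤ ‖v - z‖) :
    (∀ u ∈ C, ∀ v : H, u + P v - v ∈ C) ↔
      (∀ w₁ w₂ : H, 0 ≤ ⟪w₁ - P w₁, w₂ - P w₂⟫) := by
  have var := hpr_var_ineq C hCcv P hP
  constructor
  · intro hpr w₁ w₂
    have hz : P w₁ + P w₂ - w₂ ∈ C := hpr (P w₁) (hP w₁).1 w₂
    have h := var w₁ _ hz
    have : (P w₁ + P w₂ - w₂) - P w₁ = -(w₂ - P w₂) := by abel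
    rw [this, inner_neg_right] at h
    linarith
  · intro hin u hu v
    set x := u + P v - v with hx
    have h1 : ⟪x - P x, u - P x⟫ ≤ 0 := var x u hu
    have h2 : (0:ℝ) ≤ ⟪x - P x, v - P v⟫ := hin x v
    have hsplit : u - P x = (x - P x) + (v - P v) := by rw [hx]; abel
    rw [hsplit, inner_add_right, real_inner_self_eq_norm_sq] at h1
    have hnorm : ‖x - P x‖ ^ 2 ≤ 0 := by linarith
    have hxe : x - P x = 0 := by
      have := pow_le_pow_left₀ (norm_nonneg (x - P x)) (le_refl ‖x - P x‖) 2
      have h0 : ‖x - P x‖ = 0 := by nlinarith [norm_nonneg (x - P x)]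
      exact norm_eq_zero.mp h0
    have : x = P x := by rwa [sub_eq_zero] at hxe
    rw [this]
    exact (hP x).1
end
end

section
/- Let (u(t))_{t≥0} be an Obstacle Gradient Flow in C, and assume that C has the Half Plane Residuum (HPR) property. Then for almost every t > 0, dist(∇E(u(t)), C) ≤ dist(−u̇(t), C), where dist(x,C) := inf_{θ∈C} ‖x − θ‖. -/
open MeasureTheory Set Filter

noncomputable section

local notation "⟪" x ", " y "⟫" => @inner ℝ _ _ x y

variable {H : Type*} [NormedAddCommGroup H] [InnerProductSpace ℝ H] [CompleteSpace H]

/-- The nearest point map satisfies the variational inequality. -/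
lemma proj_inner_le_zero {C : Set H} (hCne : C.Nonempty) (hCcv : Convex ℝ C)
    {P : H → H} (hP : ∀ v : H, P v ∈ C ∧ ∀ z ∈ C, ‖v - P v‖ ≤ ‖v - z‖)
    (v : H) : ∀ z ∈ C, ⟪v - P v, z - P v⟫ ≤ 0 := by
  have hinf : ‖v - P v‖ = ⨅ w : C, ‖v - (w : H)‖ := by
    haveI : Nonempty C := hCne.to_subtype
    refine le_antisymm (le_ciInf fun w => (hP v).2 w w.2) ?_
    have hbdd : BddBelow (Set.range fun w : C => ‖v - (w : H)‖) := by
      refine ⟨0, ?_⟩; rintro x ⟨w, rfl⟩; exact norm_nonneg _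
    exact ciInf_le hbdd ⟨P v, (hP v).1⟩
  exact (norm_eq_iInf_iff_real_inner_le_zero hCcv (hP v).1).1 hinf

/-- **A gradient estimate.** If `C` has the Half Plane Residuum property, then along an
Obstacle Gradient Flow one has `dist(∇E(u(t)), C) ≤ dist(-u̇(t), C)` for a.e. `t > 0`. -/
theorem gradient_estimate_hpr
    (E : H → ℝ) (E' : H → H) (α : ℝ) (hE : Assumption1 E E' α)
    (C : Set H) (hCne : C.Nonempty) (hCcl : IsClosed C) (hCcv : Convex ℝ C)
    (P : H → H)
    (hP : ∀ v : H, P v ∈ C ∧ ∀ z ∈ C, ‖v - P v‖ ≤ ‖v - z‖)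
    (hHPR : ∀ u ∈ C, ∀ v : H, u + P v - v ∈ C)
    (u u' : ℝ → H) (u₀ : H) (hu₀ : u₀ ∈ C) (hu : IsOGF C E' u u' u₀) :
    ∀ᵐ t ∂(volume.restrict (Ioi (0:ℝ))),
      Metric.infDist (E' (u t)) C ≤ Metric.infDist (-u' t) C := by
  filter_upwards [hu.fvi, ae_restrict_mem measurableSet_Ioi] with t hfvi ht
  set g := E' (u t) with hg
  set w := -u' t with hw
  set Q := P g with hQ
  have hutC : u t ∈ C := hu.mem t (le_of_lt ht)
  -- FVI with the HPR test function
  have hv : u t + Q - g ∈ C := hHPR (u t) hutC g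
  have h1 : 0 ≤ ⟪u' t, (u t + Q - g) - u t⟫ + ⟪g, (u t + Q - g) - u t⟫ := hfvi _ hv
  have hsimp : (u t + Q - g) - u t = Q - g := by abel
  rw [hsimp] at h1
  -- ⟪g - Q, g - w⟫ ≤ 0
  have h2 : ⟪g - Q, g - w⟫ ≤ 0 := by
    have : ⟪g - Q, g - w⟫ = -(⟪u' t, Q - g⟫ + ⟪g, Q - g⟫) := by
      rw [hw]
      simp only [hw, inner_sub_left, inner_sub_right, inner_neg_right]
      rw [real_inner_comm g (u' t), real_inner_comm Q g, real_inner_comm Q (u' t)]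
      ring
    linarith [this ▸ neg_nonpos_of_nonneg h1]
  -- projection inequalities
  have h3 : ⟪g - Q, P w - Q⟫ ≤ 0 := proj_inner_le_zero hCne hCcv hP g (P w) (hP w).1
  -- infDist w C = ‖w - P w‖
  have hdw : ‖w - P w‖ ≤ Metric.infDist w C := by
    rw [Metric.infDist_eq_iInf]
    haveI : Nonempty C := hCne.to_subtype
    refine le_ciInf fun z => ?_
    rw [dist_eq_norm]; exact (hP w).2 z z.2
  -- main estimate
  have key : ‖g - Q‖ ^ 2 ≤ ‖g - Q‖ * Metric.infDist w C := by
    have hsplit : ‖g - Q‖ ^ 2 = ⟪g - Q, g - w⟫ + ⟪g - Q, w - P w⟫ + ⟪g - Q, P w - Q⟫ := by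
      rw [← real_inner_self_eq_norm_sq]
      rw [← inner_add_right, ← inner_add_right]
      congr 1; abel
    have hcs : ⟪g - Q, w - P w⟫ ≤ ‖g - Q‖ * ‖w - P w‖ := real_inner_le_norm _ _
    have := mul_le_mul_of_nonneg_left hdw (norm_nonneg (g - Q))
    linarith
  have hfinal : ‖g - Q‖ ≤ Metric.infDist w C := by
    rcases eq_or_lt_of_le (norm_nonneg (g - Q)) with h0 | h0
    · rw [← h0]; exact Metric.infDist_nonneg
    · nlinarith
  calc Metric.infDist g C ≤ dist g Q := Metric.infDist_le_dist_of_mem (hP g).1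
    _ = ‖g - Q‖ := dist_eq_norm _ _
    _ ≤ Metric.infDist w C := hfinal
end
end

section
/- Let u₀ ∈ C, τ ∈ (0,1), and let (u_{kτ})_{k≥0} be a minimizing movement sequence starting at u₀ with piecewise linear interpolation u^τ. Then for all t, s ≥ 0 one has ‖u^τ(t) − u^τ(s)‖ ≤ 3√2 · √(E(u₀) − α) · √|t − s|. -/
open MeasureTheory Set Filter

noncomputable section

local notation "⟪" x ", " y "⟫" => @inner ℝ _ _ x y

variable {H : Type*} [NormedAddCommGroup H] [InnerProductSpace ℝ H] [CompleteSpace H]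

/-- A minimizing movement sequence with stepwidth `τ` starting at `u₀ ∈ C`: each
`us (k+1)` minimizes `Φ_{us k, τ}` over `C`. -/
def IsMinMovSeq (E : H → ℝ) (C : Set H) (τ : ℝ) (us : ℕ → H) (u₀ : H) : Prop :=
  us 0 = u₀ ∧ ∀ k : ℕ, us (k + 1) ∈ C ∧
    ∀ z ∈ C, ‖us (k + 1) - us k‖ ^ 2 / (2 * τ) + E (us (k + 1)) ≤
      ‖z - us k‖ ^ 2 / (2 * τ) + E z

/-- The piecewise linear interpolation `u^τ` of a minimizing movement sequence:
on `[kτ, (k+1)τ)` it interpolates linearly between `us k` and `us (k+1)`. -/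
noncomputable def pwlInterp (τ : ℝ) (us : ℕ → H) (t : ℝ) : H :=
  (1 - (t - (⌊t / τ⌋₊ : ℝ) * τ) / τ) • us ⌊t / τ⌋₊ +
    ((t - (⌊t / τ⌋₊ : ℝ) * τ) / τ) • us (⌊t / τ⌋₊ + 1)

/-- Helper: `a/τ · √τ ≤ √a` for `0 ≤ a ≤ τ`. -/
private lemma aux_frac_sqrt {τ a : ℝ} (hτ : 0 < τ) (ha : 0 ≤ a) (haτ : a ≤ τ) :
    a / τ * Real.sqrt τ ≤ Real.sqrt a := by
  rw [div_mul_eq_mul_div, div_le_iff₀ hτ]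
  calc a * Real.sqrt τ = (Real.sqrt a * Real.sqrt a) * Real.sqrt τ := by
        rw [Real.mul_self_sqrt ha]
    _ ≤ (Real.sqrt τ * Real.sqrt a) * Real.sqrt τ := by
        have h3 := Real.sqrt_le_sqrt haτ
        have h1 := Real.sqrt_nonneg a
        have h2 := Real.sqrt_nonneg τ
        nlinarith [mul_le_mul_of_nonneg_right h3 (mul_nonneg h1 h2)]
    _ = Real.sqrt a * (Real.sqrt τ * Real.sqrt τ) := by ring
    _ = Real.sqrt a * τ := by rw [Real.mul_self_sqrt hτ.le]

/-- Helper: telescoping sum over `Ico`. -/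
private lemma aux_tel {G : Type*} [AddCommGroup G] (f : ℕ → G) {m n : ℕ} (h : m ≤ n) :
    ∑ k ∈ Finset.Ico m n, (f (k + 1) - f k) = f n - f m := by
  rw [Finset.sum_Ico_eq_sum_range]
  have := Finset.sum_range_sub (fun i => f (m + i)) (n - m)
  simp only [← add_assoc, Nat.add_zero] at this
  rw [this, Nat.add_sub_cancel' h]

/-- Helper: floor bracketing. -/
private lemma aux_floor {t τ : ℝ} (ht : 0 ≤ t) (hτ : 0 < τ) :
    (⌊t / τ⌋₊ : ℝ) * τ ≤ t ∧ t < ((⌊t / τ⌋₊ : ℝ) + 1) * τ := by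
  constructor
  · rw [← le_div_iff₀ hτ]; exact Nat.floor_le (div_nonneg ht hτ.le)
  · rw [← div_lt_iff₀ hτ]; exact Nat.lt_floor_add_one _

/-- **Uniform Hölder bound.** For each stepwidth `τ ∈ (0,1)` the piecewise linear
interpolation of a minimizing movement sequence satisfies
`‖u^τ(t) - u^τ(s)‖ ≤ 3√2 · √(E(u₀) - α) · √|t - s|` for all `t, s ≥ 0`. -/
theorem uniform_hoelder_bound
    (E : H → ℝ) (E' : H → H) (α : ℝ) (hE : Assumption1 E E' α)
    (C : Set H) (hCne : C.Nonempty) (hCcl : IsClosed C) (hCcv : Convex ℝ C)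
    (u₀ : H) (hu₀ : u₀ ∈ C) (τ : ℝ) (hτ : τ ∈ Ioo (0:ℝ) 1)
    (us : ℕ → H) (hus : IsMinMovSeq E C τ us u₀) :
    ∀ t s : ℝ, 0 ≤ t → 0 ≤ s →
      ‖pwlInterp τ us t - pwlInterp τ us s‖ ≤
        3 * Real.sqrt 2 * Real.sqrt (E u₀ - α) * Real.sqrt |t - s| := by
  obtain ⟨hτ0, hτ1⟩ := hτ
  obtain ⟨h0, hmin⟩ := hus
  have hτne : τ ≠ 0 := ne_of_gt hτ0
  have hmem : ∀ k, us k ∈ C := by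
    intro k
    cases k with
    | zero => rw [h0]; exact hu₀
    | succ j => exact (hmin j).1
  set M := E u₀ - α with hMdef
  have hM : 0 ≤ M := sub_nonneg.2 (hE.lowerBound u₀)
  -- one-step energy estimate
  have hstep : ∀ k, ‖us (k + 1) - us k‖ ^ 2 ≤ 2 * τ * (E (us k) - E (us (k + 1))) := by
    intro k
    have h := (hmin k).2 (us k) (hmem k)
    rw [sub_self, norm_zero] at h
    have h2τ : (0:ℝ) < 2 * τ := by linarith
    have hz : (0:ℝ) ^ 2 / (2 * τ) = 0 := by norm_num
    rw [hz] at h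
    have h3 := (div_le_iff₀ h2τ).mp
      (show ‖us (k + 1) - us k‖ ^ 2 / (2 * τ) ≤ E (us k) - E (us (k + 1)) by linarith)
    linarith
  have hEmono : ∀ k, E (us (k + 1)) ≤ E (us k) := by
    intro k
    nlinarith [hstep k, sq_nonneg ‖us (k + 1) - us k‖]
  have hanti : Antitone fun k => E (us k) := antitone_nat_of_succ_le hEmono
  -- summed estimate
  have hsum : ∀ m n : ℕ, m ≤ n →
      ∑ k ∈ Finset.Ico m n, ‖us (k + 1) - us k‖ ^ 2 ≤ 2 * τ * M := by
    intro m n h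
    have t1 := aux_tel (fun k => -E (us k)) h
    calc ∑ k ∈ Finset.Ico m n, ‖us (k + 1) - us k‖ ^ 2
        ≤ ∑ k ∈ Finset.Ico m n, 2 * τ * (E (us k) - E (us (k + 1))) :=
          Finset.sum_le_sum fun k _ => hstep k
      _ = 2 * τ * ∑ k ∈ Finset.Ico m n, (-E (us (k + 1)) - -E (us k)) := by
          rw [← Finset.mul_sum]
          congr 1
          exact Finset.sum_congr rfl fun k _ => by ring
      _ = 2 * τ * (E (us m) - E (us n)) := by rw [t1]; ring
      _ ≤ 2 * τ * M := by
          have h1 : E (us m) ≤ E (us 0) := hanti (Nat.zero_le m)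
          rw [h0] at h1
          have h2 := hE.lowerBound (us n)
          have : E (us m) - E (us n) ≤ M := by rw [hMdef]; linarith
          nlinarith
  -- distance estimate between sequence elements
  have hdist : ∀ m n : ℕ, m ≤ n →
      ‖us n - us m‖ ≤ Real.sqrt (2 * M) * Real.sqrt (((n : ℝ) - m) * τ) := by
    intro m n h
    have htel : us n - us m = ∑ k ∈ Finset.Ico m n, (us (k + 1) - us k) := (aux_tel us h).symm
    have h1 : ‖us n - us m‖ ≤ ∑ k ∈ Finset.Ico m n, ‖us (k + 1) - us k‖ := by
      rw [htel]; exact norm_sum_le _ _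
    have h2 : (∑ k ∈ Finset.Ico m n, ‖us (k + 1) - us k‖) ^ 2 ≤
        (Finset.Ico m n).card * ∑ k ∈ Finset.Ico m n, ‖us (k + 1) - us k‖ ^ 2 :=
      sq_sum_le_card_mul_sum_sq
    have hcard : ((Finset.Ico m n).card : ℝ) = (n : ℝ) - m := by
      rw [Nat.card_Ico]
      push_cast [h]
      ring
    have h3 : ‖us n - us m‖ ^ 2 ≤ ((n : ℝ) - m) * (2 * τ * M) := by
      calc ‖us n - us m‖ ^ 2
          ≤ (∑ k ∈ Finset.Ico m n, ‖us (k + 1) - us k‖) ^ 2 := by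
            apply pow_le_pow_left₀ (norm_nonneg _) h1
        _ ≤ (Finset.Ico m n).card * ∑ k ∈ Finset.Ico m n, ‖us (k + 1) - us k‖ ^ 2 := h2
        _ ≤ ((n : ℝ) - m) * (2 * τ * M) := by
            rw [hcard]
            apply mul_le_mul_of_nonneg_left (hsum m n h)
            have : (m : ℝ) ≤ n := Nat.cast_le.2 h
            linarith
    calc ‖us n - us m‖ = Real.sqrt (‖us n - us m‖ ^ 2) := (Real.sqrt_sq (norm_nonneg _)).symm
      _ ≤ Real.sqrt (((n : ℝ) - m) * (2 * τ * M)) := Real.sqrt_le_sqrt h3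
      _ = Real.sqrt (2 * M) * Real.sqrt (((n : ℝ) - m) * τ) := by
          rw [show ((n : ℝ) - m) * (2 * τ * M) = 2 * M * (((n : ℝ) - m) * τ) by ring,
            Real.sqrt_mul (by positivity)]
  have hΔ : ∀ k, ‖us (k + 1) - us k‖ ≤ Real.sqrt (2 * M) * Real.sqrt τ := by
    intro k
    have h := hdist k (k + 1) (Nat.le_succ k)
    rw [show ((((k : ℕ) + 1 : ℕ) : ℝ) - (k : ℝ)) * τ = τ by push_cast; ring] at h
    exact h
  -- distance from interpolation to the two endpoints
  have hend : ∀ r : ℝ, 0 ≤ r →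
      ‖pwlInterp τ us r - us ⌊r / τ⌋₊‖ ≤
        Real.sqrt (2 * M) * Real.sqrt (r - (⌊r / τ⌋₊ : ℝ) * τ) := by
    intro r hr
    obtain ⟨hf1, hf2⟩ := aux_floor hr hτ0
    have hid : pwlInterp τ us r - us ⌊r / τ⌋₊ =
        ((r - (⌊r / τ⌋₊ : ℝ) * τ) / τ) • (us (⌊r / τ⌋₊ + 1) - us ⌊r / τ⌋₊) := by
      unfold pwlInterp; module
    set a := r - (⌊r / τ⌋₊ : ℝ) * τ with hadef
    have ha : 0 ≤ a := by rw [hadef]; linarith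
    have haτ : a ≤ τ := by rw [hadef]; nlinarith
    rw [hid, norm_smul, Real.norm_eq_abs, abs_of_nonneg (div_nonneg ha hτ0.le)]
    calc a / τ * ‖us (⌊r / τ⌋₊ + 1) - us ⌊r / τ⌋₊‖
        ≤ a / τ * (Real.sqrt (2 * M) * Real.sqrt τ) :=
          mul_le_mul_of_nonneg_left (hΔ _) (div_nonneg ha hτ0.le)
      _ = Real.sqrt (2 * M) * (a / τ * Real.sqrt τ) := by ring
      _ ≤ Real.sqrt (2 * M) * Real.sqrt a :=
          mul_le_mul_of_nonneg_left (aux_frac_sqrt hτ0 ha haτ) (Real.sqrt_nonneg _)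
  have hend' : ∀ r : ℝ, 0 ≤ r →
      ‖pwlInterp τ us r - us (⌊r / τ⌋₊ + 1)‖ ≤
        Real.sqrt (2 * M) * Real.sqrt (((⌊r / τ⌋₊ : ℝ) + 1) * τ - r) := by
    intro r hr
    obtain ⟨hf1, hf2⟩ := aux_floor hr hτ0
    have hid : pwlInterp τ us r - us (⌊r / τ⌋₊ + 1) =
        ((((⌊r / τ⌋₊ : ℝ) + 1) * τ - r) / τ) • (us ⌊r / τ⌋₊ - us (⌊r / τ⌋₊ + 1)) := by
      unfold pwlInterp
      match_scalars <;> field_simp <;> ring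
    set b := ((⌊r / τ⌋₊ : ℝ) + 1) * τ - r with hbdef
    have hb : 0 ≤ b := by rw [hbdef]; linarith
    have hbτ : b ≤ τ := by rw [hbdef]; nlinarith
    rw [hid, norm_smul, Real.norm_eq_abs, abs_of_nonneg (div_nonneg hb hτ0.le),
      norm_sub_rev]
    calc b / τ * ‖us (⌊r / τ⌋₊ + 1) - us ⌊r / τ⌋₊‖
        ≤ b / τ * (Real.sqrt (2 * M) * Real.sqrt τ) :=
          mul_le_mul_of_nonneg_left (hΔ _) (div_nonneg hb hτ0.le)
      _ = Real.sqrt (2 * M) * (b / τ * Real.sqrt τ) := by ring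
      _ ≤ Real.sqrt (2 * M) * Real.sqrt b :=
          mul_le_mul_of_nonneg_left (aux_frac_sqrt hτ0 hb hbτ) (Real.sqrt_nonneg _)
  have hsqrt2M : Real.sqrt (2 * M) = Real.sqrt 2 * Real.sqrt M :=
    Real.sqrt_mul (by norm_num) M
  -- reduce to the ordered case
  suffices key : ∀ t s : ℝ, 0 ≤ s → s ≤ t →
      ‖pwlInterp τ us t - pwlInterp τ us s‖ ≤
        3 * Real.sqrt 2 * Real.sqrt M * Real.sqrt (t - s) by
    intro t s ht hs
    rcases le_total s t with h | h
    · rw [abs_of_nonneg (by linarith)]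
      exact key t s hs h
    · rw [← norm_neg, neg_sub, abs_of_nonpos (by linarith), neg_sub]
      exact key s t ht h
  intro t s hs hst
  have ht : 0 ≤ t := hs.trans hst
  have hts0 : 0 ≤ t - s := by linarith
  obtain ⟨hft1, hft2⟩ := aux_floor ht hτ0
  obtain ⟨hfs1, hfs2⟩ := aux_floor hs hτ0
  have hmn : ⌊s / τ⌋₊ ≤ ⌊t / τ⌋₊ := Nat.floor_le_floor (by gcongr)
  rcases eq_or_lt_of_le hmn with heq | hlt
  · -- same interval
    have hid : pwlInterp τ us t - pwlInterp τ us s =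
        ((t - s) / τ) • (us (⌊s / τ⌋₊ + 1) - us ⌊s / τ⌋₊) := by
      unfold pwlInterp
      rw [← heq]
      match_scalars <;> field_simp <;> ring
    have htsτ : t - s ≤ τ := by
      rw [← heq] at hft2
      linarith
    rw [hid, norm_smul, Real.norm_eq_abs, abs_of_nonneg (div_nonneg hts0 hτ0.le)]
    calc (t - s) / τ * ‖us (⌊s / τ⌋₊ + 1) - us ⌊s / τ⌋₊‖
        ≤ (t - s) / τ * (Real.sqrt (2 * M) * Real.sqrt τ) :=
          mul_le_mul_of_nonneg_left (hΔ _) (div_nonneg hts0 hτ0.le)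
      _ = Real.sqrt (2 * M) * ((t - s) / τ * Real.sqrt τ) := by ring
      _ ≤ Real.sqrt (2 * M) * Real.sqrt (t - s) :=
          mul_le_mul_of_nonneg_left (aux_frac_sqrt hτ0 hts0 htsτ) (Real.sqrt_nonneg _)
      _ ≤ 3 * Real.sqrt 2 * Real.sqrt M * Real.sqrt (t - s) := by
          rw [hsqrt2M]
          have h1 : (0:ℝ) ≤ Real.sqrt 2 * Real.sqrt M * Real.sqrt (t - s) := by positivity
          nlinarith
  · -- different intervals
    have hm1n : ⌊s / τ⌋₊ + 1 ≤ ⌊t / τ⌋₊ := hlt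
    have hm1nR : ((⌊s / τ⌋₊ : ℝ) + 1) ≤ (⌊t / τ⌋₊ : ℝ) := by exact_mod_cast hm1n
    have hkey : ((⌊s / τ⌋₊ : ℝ) + 1) * τ ≤ (⌊t / τ⌋₊ : ℝ) * τ :=
      mul_le_mul_of_nonneg_right hm1nR hτ0.le
    have tri : ‖pwlInterp τ us t - pwlInterp τ us s‖ ≤
        ‖pwlInterp τ us t - us ⌊t / τ⌋₊‖ + ‖us ⌊t / τ⌋₊ - us (⌊s / τ⌋₊ + 1)‖ +
          ‖pwlInterp τ us s - us (⌊s / τ⌋₊ + 1)‖ := by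
      calc ‖pwlInterp τ us t - pwlInterp τ us s‖
          = ‖(pwlInterp τ us t - us ⌊t / τ⌋₊) + (us ⌊t / τ⌋₊ - us (⌊s / τ⌋₊ + 1)) +
              -(pwlInterp τ us s - us (⌊s / τ⌋₊ + 1))‖ := by
            congr 1; abel
        _ ≤ ‖pwlInterp τ us t - us ⌊t / τ⌋₊‖ + ‖us ⌊t / τ⌋₊ - us (⌊s / τ⌋₊ + 1)‖ +
              ‖-(pwlInterp τ us s - us (⌊s / τ⌋₊ + 1))‖ := norm_add₃_le
        _ = _ := by rw [norm_neg]
    have T1 : ‖pwlInterp τ us t - us ⌊t / τ⌋₊‖ ≤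
        Real.sqrt (2 * M) * Real.sqrt (t - s) := by
      refine (hend t ht).trans (mul_le_mul_of_nonneg_left (Real.sqrt_le_sqrt ?_)
        (Real.sqrt_nonneg _))
      linarith
    have T2 : ‖us ⌊t / τ⌋₊ - us (⌊s / τ⌋₊ + 1)‖ ≤
        Real.sqrt (2 * M) * Real.sqrt (t - s) := by
      refine (hdist (⌊s / τ⌋₊ + 1) ⌊t / τ⌋₊ hm1n).trans
        (mul_le_mul_of_nonneg_left (Real.sqrt_le_sqrt ?_) (Real.sqrt_nonneg _))
      push_cast
      rw [sub_mul]
      linarith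
    have T3 : ‖pwlInterp τ us s - us (⌊s / τ⌋₊ + 1)‖ ≤
        Real.sqrt (2 * M) * Real.sqrt (t - s) := by
      refine (hend' s hs).trans (mul_le_mul_of_nonneg_left (Real.sqrt_le_sqrt ?_)
        (Real.sqrt_nonneg _))
      linarith
    calc ‖pwlInterp τ us t - pwlInterp τ us s‖
        ≤ ‖pwlInterp τ us t - us ⌊t / τ⌋₊‖ + ‖us ⌊t / τ⌋₊ - us (⌊s / τ⌋₊ + 1)‖ +
            ‖pwlInterp τ us s - us (⌊s / τ⌋₊ + 1)‖ := tri
      _ ≤ Real.sqrt (2 * M) * Real.sqrt (t - s) + Real.sqrt (2 * M) * Real.sqrt (t - s) +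
            Real.sqrt (2 * M) * Real.sqrt (t - s) := by
          exact add_le_add (add_le_add T1 T2) T3
      _ = 3 * Real.sqrt 2 * Real.sqrt M * Real.sqrt (t - s) := by
          rw [hsqrt2M]; ring
end
end

section
/- Let (u_{kτ})_{k∈ℕ, τ∈(0,1)} be a family of minimizing movement sequences starting at u₀ ∈ C. Then for each T > 0 there exists a constant C_T = C_T(E, u₀, T) > 0 such that for all τ ∈ (0,1) and all k ∈ ℕ with (k+1)τ ≤ T one has (E(u_{kτ}) − E(u_{(k+1)τ}))/τ ≤ C_T. -/
open MeasureTheory Set Filter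

noncomputable section

local notation "⟪" x ", " y "⟫" => @inner ℝ _ _ x y

variable {H : Type*} [NormedAddCommGroup H] [InnerProductSpace ℝ H] [CompleteSpace H]

/-- **Rate of energy descent.** For a family of minimizing movement sequences
`(u_{kτ})_{k∈ℕ, τ∈(0,1)}` starting at `u₀ ∈ C` and every `T > 0` there is
`C_T = C_T(E, u₀, T) > 0` with `(E(u_{kτ}) - E(u_{(k+1)τ}))/τ ≤ C_T` whenever
`τ ∈ (0,1)` and `(k+1)τ ≤ T`. -/
theorem rate_of_energy_descent
    (E : H → ℝ) (E' : H → H) (α : ℝ) (hE : Assumption1 E E' α)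
    (C : Set H) (hCne : C.Nonempty) (hCcl : IsClosed C) (hCcv : Convex ℝ C)
    (u₀ : H) (hu₀ : u₀ ∈ C)
    (us : ℝ → ℕ → H) (hus : ∀ τ ∈ Ioo (0:ℝ) 1, IsMinMovSeq E C τ (us τ) u₀) :
    ∀ T : ℝ, 0 < T → ∃ CT : ℝ, 0 < CT ∧
      ∀ τ ∈ Ioo (0:ℝ) 1, ∀ k : ℕ, ((k : ℝ) + 1) * τ ≤ T →
        (E (us τ k) - E (us τ (k + 1))) / τ ≤ CT := by
  intro T hT
  set β : ℝ := E u₀ - α with hβdef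
  have hβ : 0 ≤ β := sub_nonneg.2 (hE.lowerBound u₀)
  set R : ℝ := ‖u₀‖ + Real.sqrt (2 * T * β) + 1 with hRdef
  have hR : 0 < R := by positivity
  obtain ⟨M, hM⟩ := hE.gradBdd R hR
  set M' : ℝ := max M 0 with hM'def
  have hM'0 : 0 ≤ M' := le_max_right _ _
  refine ⟨2 * M' ^ 2 + 1, by positivity, ?_⟩
  rintro τ ⟨hτ0, hτ1⟩ k hkT
  obtain ⟨h0, hmin⟩ := hus τ ⟨hτ0, hτ1⟩
  set u : ℕ → H := us τ with hudef
  -- all iterates lie in C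
  have hmem : ∀ j : ℕ, u j ∈ C := by
    intro j
    cases j with
    | zero => rw [h0]; exact hu₀
    | succ n => exact (hmin n).1
  -- one-step descent
  have hdesc : ∀ j : ℕ, ‖u (j + 1) - u j‖ ^ 2 / (2 * τ) + E (u (j + 1)) ≤ E (u j) := by
    intro j
    have := (hmin j).2 (u j) (hmem j)
    simpa using this
  have hdesc' : ∀ j : ℕ, E (u (j + 1)) ≤ E (u j) := by
    intro j
    have h := hdesc j
    have hsq : 0 ≤ ‖u (j + 1) - u j‖ ^ 2 / (2 * τ) :=
      div_nonneg (sq_nonneg _) (by linarith)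
    linarith
  -- monotone energy
  have hmono : ∀ j : ℕ, E (u j) ≤ E u₀ := by
    intro j
    induction j with
    | zero => rw [h0]
    | succ n ih => exact le_trans (hdesc' n) ih
  -- sum of squared increments
  have hsumsq : ∀ n : ℕ, (∑ j ∈ Finset.range n, ‖u (j + 1) - u j‖ ^ 2) ≤ 2 * τ * β := by
    intro n
    have key : (∑ j ∈ Finset.range n, ‖u (j + 1) - u j‖ ^ 2 / (2 * τ)) ≤
        E (u 0) - E (u n) := by
      induction n with
      | zero => simp
      | succ m ih =>
        rw [Finset.sum_range_succ]
        have := hdesc m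
        linarith
    have h2τ : 0 < 2 * τ := by linarith
    have hEb : E (u 0) - E (u n) ≤ β := by
      have := hE.lowerBound (u n)
      rw [h0]; simp only [hβdef]; linarith
    have : (∑ j ∈ Finset.range n, ‖u (j + 1) - u j‖ ^ 2) / (2 * τ) ≤ β := by
      rw [Finset.sum_div] at *
      linarith
    calc (∑ j ∈ Finset.range n, ‖u (j + 1) - u j‖ ^ 2)
        = (∑ j ∈ Finset.range n, ‖u (j + 1) - u j‖ ^ 2) / (2 * τ) * (2 * τ) := by
          field_simp
      _ ≤ β * (2 * τ) := by exact mul_le_mul_of_nonneg_right this (le_of_lt h2τ)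
      _ = 2 * τ * β := by ring
  -- norm bound on iterates
  have hnorm : ∀ n : ℕ, (n : ℝ) * τ ≤ T → ‖u n‖ ≤ R := by
    intro n hn
    have htel : u n - u 0 = ∑ j ∈ Finset.range n, (u (j + 1) - u j) :=
      (Finset.sum_range_sub u n).symm
    have h1 : ‖u n - u 0‖ ≤ ∑ j ∈ Finset.range n, ‖u (j + 1) - u j‖ := by
      rw [htel]; exact norm_sum_le _ _
    have h2 : (∑ j ∈ Finset.range n, ‖u (j + 1) - u j‖) ^ 2 ≤
        (n : ℝ) * ∑ j ∈ Finset.range n, ‖u (j + 1) - u j‖ ^ 2 := by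
      have := sq_sum_le_card_mul_sum_sq (s := Finset.range n)
        (f := fun j => ‖u (j + 1) - u j‖)
      simpa using this
    have h3 : (n : ℝ) * ∑ j ∈ Finset.range n, ‖u (j + 1) - u j‖ ^ 2 ≤ 2 * T * β := by
      calc (n : ℝ) * ∑ j ∈ Finset.range n, ‖u (j + 1) - u j‖ ^ 2
          ≤ (n : ℝ) * (2 * τ * β) := by
            exact mul_le_mul_of_nonneg_left (hsumsq n) (Nat.cast_nonneg n)
        _ = 2 * ((n : ℝ) * τ) * β := by ring
        _ ≤ 2 * T * β := by nlinarith
    have h4 : ‖u n - u 0‖ ≤ Real.sqrt (2 * T * β) := by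
      have hs0 : 0 ≤ ∑ j ∈ Finset.range n, ‖u (j + 1) - u j‖ :=
        Finset.sum_nonneg fun j _ => norm_nonneg _
      have : (∑ j ∈ Finset.range n, ‖u (j + 1) - u j‖) ≤ Real.sqrt (2 * T * β) := by
        have hsq : (∑ j ∈ Finset.range n, ‖u (j + 1) - u j‖) ^ 2 ≤ 2 * T * β :=
          le_trans h2 h3
        have hβ' : (0:ℝ) ≤ 2 * T * β := by positivity
        exact (Real.le_sqrt hs0 hβ').mpr hsq
      linarith
    rw [h0] at h4
    have h5 : ‖u n‖ ≤ ‖u n - u₀‖ + ‖u₀‖ := by simpa using norm_add_le (u n - u₀) u₀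
    have h6 : 0 ≤ Real.sqrt (2 * T * β) := Real.sqrt_nonneg _
    rw [hRdef]; linarith
  -- Lipschitz bound on ball via MVT
  have hLip : ∀ x y : H, ‖x‖ ≤ R → ‖y‖ ≤ R → ‖E y - E x‖ ≤ M' * ‖y - x‖ := by
    intro x y hx hy
    have hconv : Convex ℝ (Metric.closedBall (0 : H) R) := convex_closedBall 0 R
    refine hconv.norm_image_sub_le_of_norm_hasFDerivWithin_le
      (f' := fun w => (InnerProductSpace.toDual ℝ H) (E' w)) ?_ ?_
      (by simpa using hx) (by simpa using hy)
    · intro w hw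
      exact ((hE.grad w).hasFDerivAt).hasFDerivWithinAt
    · intro w hw
      have hw' : ‖w‖ ≤ R := by simpa using hw
      calc ‖(InnerProductSpace.toDual ℝ H) (E' w)‖ = ‖E' w‖ :=
            (InnerProductSpace.toDual ℝ H).norm_map _
        _ ≤ M := hM w hw'
        _ ≤ M' := le_max_left _ _
  -- conclude
  have hk1 : (k : ℝ) * τ ≤ T := by
    have : (k : ℝ) * τ ≤ ((k : ℝ) + 1) * τ := by nlinarith
    linarith
  have huk : ‖u k‖ ≤ R := hnorm k hk1
  have huk1 : ‖u (k + 1)‖ ≤ R := hnorm (k + 1) (by push_cast; linarith)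
  set d : ℝ := E (u k) - E (u (k + 1)) with hddef
  rcases le_or_gt d 0 with hd | hd
  · have : d / τ ≤ 0 := div_nonpos_of_nonpos_of_nonneg hd (le_of_lt hτ0)
    calc (E (us τ k) - E (us τ (k + 1))) / τ = d / τ := rfl
      _ ≤ 0 := this
      _ ≤ 2 * M' ^ 2 + 1 := by positivity
  · -- d ≤ M' * ‖Δ‖ and ‖Δ‖² ≤ 2τd
    have hΔsq : ‖u (k + 1) - u k‖ ^ 2 ≤ 2 * τ * d := by
      have h := hdesc k
      have h2τ : 0 < 2 * τ := by linarith
      have h' : ‖u (k + 1) - u k‖ ^ 2 / (2 * τ) ≤ d := by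
        rw [hddef]; linarith
      rw [div_le_iff₀ h2τ] at h'
      linarith
    have hdM : d ≤ M' * ‖u (k + 1) - u k‖ := by
      have := hLip (u (k + 1)) (u k) huk1 huk
      have habs : E (u k) - E (u (k + 1)) ≤ ‖E (u k) - E (u (k + 1))‖ :=
        le_abs_self _
      calc d = E (u k) - E (u (k + 1)) := rfl
        _ ≤ ‖E (u k) - E (u (k + 1))‖ := habs
        _ ≤ M' * ‖u k - u (k + 1)‖ := this
        _ = M' * ‖u (k + 1) - u k‖ := by rw [norm_sub_rev]
    have hdle : d ≤ 2 * M' ^ 2 * τ := by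
      nlinarith [norm_nonneg (u (k + 1) - u k), sq_nonneg (M' * ‖u (k + 1) - u k‖ - d)]
    have : d / τ ≤ 2 * M' ^ 2 := by
      rw [div_le_iff₀ hτ0]; nlinarith
    calc (E (us τ k) - E (us τ (k + 1))) / τ = d / τ := rfl
      _ ≤ 2 * M' ^ 2 := this
      _ ≤ 2 * M' ^ 2 + 1 := by linarith
end
end

section
/- Let u₀ be a preconditioned initial value. Then there exist a sequence (τ_n)_{n∈ℕ} converging to zero, a nonincreasing function φ : [0,∞) → ℝ, and a curve u ∈ C^{1/2}([0,∞), H) (globally 1/2-Hölder continuous on bounded intervals) such that the energy interpolations E_{τ_n} converge to φ pointwise on [0,∞), and for every T > 0 the piecewise linear interpolations u^{τ_n} converge to u in C([0,T],H). -/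
open MeasureTheory Set Filter

noncomputable section

local notation "⟪" x ", " y "⟫" => @inner ℝ _ _ x y

variable {H : Type*} [NormedAddCommGroup H] [InnerProductSpace ℝ H] [CompleteSpace H]

/-- The energy interpolation `E_τ(t) = E(u_{kτ})` for `t ∈ [kτ, (k+1)τ)`. -/
noncomputable def energyInterp (E : H → ℝ) (τ : ℝ) (us : ℕ → H) (t : ℝ) : ℝ :=
  E (us ⌊t / τ⌋₊)

section Helpers

variable {E : H → ℝ} {C : Set H} {τ : ℝ} {us : ℕ → H} {u₀ : H} {α : ℝ}

lemma mms_mem (h : IsMinMovSeq E C τ us u₀) (h0 : u₀ ∈ C) : ∀ k, us k ∈ C := by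
  intro k
  cases k with
  | zero => rw [h.1]; exact h0
  | succ k => exact (h.2 k).1

lemma mms_step (h : IsMinMovSeq E C τ us u₀) (h0 : u₀ ∈ C) (k : ℕ) :
    ‖us (k + 1) - us k‖ ^ 2 / (2 * τ) + E (us (k + 1)) ≤ E (us k) := by
  have := (h.2 k).2 (us k) (mms_mem h h0 k)
  simpa using this

lemma mms_antitone (hτ : 0 < τ) (h : IsMinMovSeq E C τ us u₀) (h0 : u₀ ∈ C)
    {m n : ℕ} (hmn : m ≤ n) : E (us n) ≤ E (us m) := by
  induction n, hmn using Nat.le_induction with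
  | base => exact le_refl _
  | succ n hmn ih =>
    have hst := mms_step h h0 n
    have hnn : 0 ≤ ‖us (n + 1) - us n‖ ^ 2 / (2 * τ) := by positivity
    linarith

lemma mms_sq_sum (hτ : 0 < τ) (h : IsMinMovSeq E C τ us u₀) (h0 : u₀ ∈ C)
    {m n : ℕ} (hmn : m ≤ n) :
    ∑ k ∈ Finset.Ico m n, ‖us (k + 1) - us k‖ ^ 2 ≤ 2 * τ * (E (us m) - E (us n)) := by
  induction n, hmn using Nat.le_induction with
  | base => simp
  | succ n hmn ih =>
    rw [Finset.sum_Ico_succ_top hmn]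
    have hst := mms_step h h0 n
    have h2 : ‖us (n + 1) - us n‖ ^ 2 ≤ 2 * τ * (E (us n) - E (us (n + 1))) := by
      have h2τ : 0 < 2 * τ := by positivity
      rw [div_add' _ _ _ h2τ.ne', div_le_iff₀ h2τ] at hst
      nlinarith
    linarith

lemma mms_key (hτ : 0 < τ) (h : IsMinMovSeq E C τ us u₀) (h0 : u₀ ∈ C)
    (hα : ∀ u, α ≤ E u) {m n : ℕ} (hmn : m ≤ n) :
    ‖us n - us m‖ ^ 2 ≤ ((n : ℝ) - m) * (τ * (2 * (E u₀ - α))) := by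
  have hd : ‖us n - us m‖ ≤ ∑ k ∈ Finset.Ico m n, ‖us (k + 1) - us k‖ := by
    have := dist_le_Ico_sum_dist us hmn
    rw [dist_comm] at this
    simpa [dist_eq_norm, norm_sub_rev] using this
  have hcs : (∑ k ∈ Finset.Ico m n, ‖us (k + 1) - us k‖) ^ 2 ≤
      ((n : ℝ) - m) * ∑ k ∈ Finset.Ico m n, ‖us (k + 1) - us k‖ ^ 2 := by
    have := Finset.sum_mul_sq_le_sq_mul_sq (Finset.Ico m n) (fun _ => (1 : ℝ))
      (fun k => ‖us (k + 1) - us k‖)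
    simpa [Nat.card_Ico, Nat.cast_sub hmn] using this
  have hsum := mms_sq_sum hτ h h0 hmn
  have hE0 : E (us m) ≤ E u₀ := by
    have := mms_antitone hτ h h0 (Nat.zero_le m)
    rwa [h.1] at this
  have hαn : α ≤ E (us n) := hα _
  have h1 : ‖us n - us m‖ ^ 2 ≤ (∑ k ∈ Finset.Ico m n, ‖us (k + 1) - us k‖) ^ 2 :=
    pow_le_pow_left₀ (norm_nonneg _) hd 2
  have hnm : (0 : ℝ) ≤ (n : ℝ) - m := by
    have : (m : ℝ) ≤ n := Nat.cast_le.mpr hmn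
    linarith
  calc ‖us n - us m‖ ^ 2 ≤ ((n : ℝ) - m) * ∑ k ∈ Finset.Ico m n, ‖us (k + 1) - us k‖ ^ 2 :=
        h1.trans hcs
    _ ≤ ((n : ℝ) - m) * (2 * τ * (E (us m) - E (us n))) := by
        apply mul_le_mul_of_nonneg_left _ hnm
        exact hsum
    _ ≤ ((n : ℝ) - m) * (τ * (2 * (E u₀ - α))) := by
        apply mul_le_mul_of_nonneg_left _ hnm
        nlinarith

end Helpers


open scoped NNReal ENNReal
section Helpers2

variable {E : H → ℝ} {C : Set H} {τ : ℝ} {us : ℕ → H} {u₀ : H} {α : ℝ}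

/-- distance between the piecewise-constant interpolant at two times. -/
lemma v_est (hτ : 0 < τ) (h : IsMinMovSeq E C τ us u₀) (h0 : u₀ ∈ C)
    (hα : ∀ u, α ≤ E u) {s t : ℝ} (hs : 0 ≤ s) (hst : s ≤ t) :
    ‖us ⌊t / τ⌋₊ - us ⌊s / τ⌋₊‖ ^ 2 ≤ (t - s + τ) * (2 * (E u₀ - α)) := by
  have ht : 0 ≤ t := hs.trans hst
  have hmn : ⌊s / τ⌋₊ ≤ ⌊t / τ⌋₊ :=
    Nat.floor_le_floor (by gcongr)
  have hkey := mms_key hτ h h0 hα hmn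
  refine hkey.trans ?_
  have hB : 0 ≤ 2 * (E u₀ - α) := by
    have := hα u₀; linarith
  have hfl : ((⌊t / τ⌋₊ : ℝ) - ⌊s / τ⌋₊) * τ ≤ t - s + τ := by
    have h1 : (⌊t / τ⌋₊ : ℝ) * τ ≤ t := by
      have := Nat.floor_le (div_nonneg ht hτ.le)
      calc (⌊t / τ⌋₊ : ℝ) * τ ≤ t / τ * τ := by gcongr
        _ = t := div_mul_cancel₀ _ hτ.ne'
    have h2 : s - τ ≤ (⌊s / τ⌋₊ : ℝ) * τ := by
      have := (Nat.lt_floor_add_one (s / τ)).le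
      have h3 : s / τ * τ ≤ ((⌊s / τ⌋₊ : ℝ) + 1) * τ := by gcongr
      rw [div_mul_cancel₀ _ hτ.ne'] at h3
      nlinarith
    nlinarith
  calc ((⌊t / τ⌋₊ : ℝ) - ⌊s / τ⌋₊) * (τ * (2 * (E u₀ - α)))
      = ((⌊t / τ⌋₊ : ℝ) - ⌊s / τ⌋₊) * τ * (2 * (E u₀ - α)) := by ring
    _ ≤ (t - s + τ) * (2 * (E u₀ - α)) := by
        apply mul_le_mul_of_nonneg_right hfl hB

/-- distance between the linear and piecewise-constant interpolants. -/
lemma g_est (hτ : 0 < τ) (h : IsMinMovSeq E C τ us u₀) (h0 : u₀ ∈ C)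
    (hα : ∀ u, α ≤ E u) {t : ℝ} (ht : 0 ≤ t) :
    ‖pwlInterp τ us t - us ⌊t / τ⌋₊‖ ^ 2 ≤ τ * (2 * (E u₀ - α)) := by
  set k := ⌊t / τ⌋₊ with hk
  set θ : ℝ := (t - (k : ℝ) * τ) / τ with hθ
  have hθ0 : 0 ≤ θ := by
    apply div_nonneg _ hτ.le
    have h1 : (k : ℝ) * τ ≤ t := by
      have := Nat.floor_le (div_nonneg ht hτ.le)
      calc (k : ℝ) * τ ≤ t / τ * τ := by rw [hk]; gcongr
        _ = t := div_mul_cancel₀ _ hτ.ne'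
    linarith
  have hθ1 : θ ≤ 1 := by
    rw [hθ, div_le_one hτ]
    have := (Nat.lt_floor_add_one (t / τ)).le
    have h3 : t / τ * τ ≤ ((k : ℝ) + 1) * τ := by rw [hk]; gcongr
    rw [div_mul_cancel₀ _ hτ.ne'] at h3
    nlinarith
  have hrew : pwlInterp τ us t - us k = θ • (us (k + 1) - us k) := by
    rw [pwlInterp, ← hk, ← hθ]
    module
  have hkey := mms_key hτ h h0 hα (Nat.le_succ k)
  have hcast : ((k + 1 : ℕ) : ℝ) - (k : ℕ) = 1 := by push_cast; ring
  rw [hcast, one_mul] at hkey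
  calc ‖pwlInterp τ us t - us k‖ ^ 2 = θ ^ 2 * ‖us (k + 1) - us k‖ ^ 2 := by
        rw [hrew, norm_smul, mul_pow, Real.norm_eq_abs, sq_abs]
    _ ≤ 1 * ‖us (k + 1) - us k‖ ^ 2 := by
        apply mul_le_mul_of_nonneg_right _ (by positivity)
        nlinarith
    _ ≤ τ * (2 * (E u₀ - α)) := by rw [one_mul]; exact hkey

end Helpers2

/-- Bridge from a `dist` bound to `HolderOnWith`. -/
lemma holderOnWith_of_dist_le {X Y : Type*} [PseudoMetricSpace X] [PseudoMetricSpace Y]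
    {L r : ℝ≥0} {f : X → Y} {s : Set X}
    (h : ∀ x ∈ s, ∀ y ∈ s, dist (f x) (f y) ≤ (L : ℝ) * dist x y ^ (r : ℝ)) :
    HolderOnWith L r f s := by
  intro x hx y hy
  rw [edist_dist, edist_dist]
  calc ENNReal.ofReal (dist (f x) (f y)) ≤ ENNReal.ofReal ((L : ℝ) * dist x y ^ (r : ℝ)) :=
        ENNReal.ofReal_le_ofReal (h x hx y hy)
    _ = (L : ℝ≥0∞) * ENNReal.ofReal (dist x y) ^ (r : ℝ) := by
        rw [ENNReal.ofReal_mul L.coe_nonneg, ENNReal.ofReal_coe_nnreal,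
          ENNReal.ofReal_rpow_of_nonneg dist_nonneg r.coe_nonneg]

/-- **Limit trajectories.** If `u₀` is a preconditioned initial value (witnessed by the family
`us` of minimizing movement sequences whose discrete trajectories are precompact up to each
time `T`), then there are `τ_n → 0`, a nonincreasing `φ : [0,∞) → ℝ`, and a `1/2`-Hölder
continuous curve `u : [0,∞) → H` such that `E_{τ_n} → φ` pointwise and `u^{τ_n} → u` in
`C([0,T],H)` for every `T > 0`. -/
theorem limit_trajectories
    (E : H → ℝ) (E' : H → H) (α : ℝ) (hE : Assumption1 E E' α)
    (C : Set H) (hCne : C.Nonempty) (hCcl : IsClosed C) (hCcv : Convex ℝ C)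
    (u₀ : H) (hu₀ : u₀ ∈ C)
    (us : ℝ → ℕ → H) (hus : ∀ τ ∈ Ioo (0:ℝ) 1, IsMinMovSeq E C τ (us τ) u₀)
    (hprecomp : ∀ T : ℝ, 0 < T →
      IsCompact (closure {x : H | ∃ τ ∈ Ioo (0:ℝ) 1, ∃ k : ℕ, (k : ℝ) * τ ≤ T ∧ x = us τ k})) :
    ∃ τseq : ℕ → ℝ, (∀ n, τseq n ∈ Ioo (0:ℝ) 1) ∧
      Filter.Tendsto τseq Filter.atTop (nhds 0) ∧
      ∃ φ : ℝ → ℝ, AntitoneOn φ (Ici 0) ∧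
      ∃ u : ℝ → H, (∃ L : NNReal, HolderOnWith L (1/2) u (Ici 0)) ∧
        (∀ t : ℝ, 0 ≤ t →
          Filter.Tendsto (fun n => energyInterp E (τseq n) (us (τseq n)) t)
            Filter.atTop (nhds (φ t))) ∧
        (∀ T : ℝ, 0 < T →
          TendstoUniformlyOn (fun n => pwlInterp (τseq n) (us (τseq n))) u
            Filter.atTop (Icc 0 T)) := by
  classical
  have hα : ∀ w, α ≤ E w := hE.lowerBound
  set B : ℝ := 2 * (E u₀ - α) with hBdef
  have hB : 0 ≤ B := by have := hα u₀; rw [hBdef]; linarith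
  -- a sequence of stepwidths tending to zero
  set σ : ℕ → ℝ := fun m => ((m : ℝ) + 2)⁻¹ with hσdef
  have hσIoo : ∀ m, σ m ∈ Ioo (0:ℝ) 1 := by
    intro m
    constructor
    · rw [hσdef]; positivity
    · rw [hσdef]
      simp only
      rw [inv_lt_one_iff₀]
      right
      have : (0:ℝ) ≤ (m:ℝ) := Nat.cast_nonneg m
      linarith
  have hσ0 : Tendsto σ atTop (nhds (0:ℝ)) := by
    apply Filter.Tendsto.inv_tendsto_atTop
    exact tendsto_atTop_add_const_right _ 2 tendsto_natCast_atTop_atTop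
  -- compact sets containing the discrete trajectories
  set K : ℚ → Set H := fun q =>
    closure {x : H | ∃ τ ∈ Ioo (0:ℝ) 1, ∃ k : ℕ, (k : ℝ) * τ ≤ max (q:ℝ) 1 ∧ x = us τ k}
    with hKdef
  have hKcomp : ∀ q : ℚ, IsCompact (K q) :=
    fun q => hprecomp _ (lt_of_lt_of_le one_pos (le_max_right _ _))
  have hFK : ∀ τ : ℝ, τ ∈ Ioo (0:ℝ) 1 → ∀ q : ℚ, us τ ⌊(q:ℝ) / τ⌋₊ ∈ K q := by
    intro τ hτ q
    apply subset_closure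
    refine ⟨τ, hτ, ⌊(q:ℝ) / τ⌋₊, ?_, rfl⟩
    by_cases hq : 0 ≤ (q:ℝ)
    · have h1 : (⌊(q:ℝ) / τ⌋₊ : ℝ) ≤ (q:ℝ) / τ := Nat.floor_le (div_nonneg hq hτ.1.le)
      calc (⌊(q:ℝ) / τ⌋₊ : ℝ) * τ ≤ (q:ℝ) / τ * τ := mul_le_mul_of_nonneg_right h1 hτ.1.le
        _ = (q:ℝ) := div_mul_cancel₀ _ hτ.1.ne'
        _ ≤ max (q:ℝ) 1 := le_max_left _ _
    · push_neg at hq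
      have : ⌊(q:ℝ) / τ⌋₊ = 0 := Nat.floor_of_nonpos (by
        apply div_nonpos_of_nonpos_of_nonneg hq.le hτ.1.le)
      rw [this]
      simp only [Nat.cast_zero, zero_mul]
      exact le_trans zero_le_one (le_max_right _ _)
  -- sequential compactness of the countable product, diagonal extraction
  have hA : IsCompact (Set.pi (univ : Set ℚ) K) := isCompact_univ_pi hKcomp
  have hmemb : ∀ m : ℕ, (fun q : ℚ => us (σ m) ⌊(q:ℝ) / σ m⌋₊) ∈ Set.pi (univ : Set ℚ) K :=
    fun m => Set.mem_univ_pi.mpr fun q => hFK _ (hσIoo m) q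
  obtain ⟨a, -, ψ, hψ, hconv⟩ := hA.isSeqCompact hmemb
  set τs : ℕ → ℝ := fun n => σ (ψ n) with hτsdef
  have hτIoo : ∀ n, τs n ∈ Ioo (0:ℝ) 1 := fun n => hσIoo _
  have hτ0 : Tendsto τs atTop (nhds (0:ℝ)) := hσ0.comp hψ.tendsto_atTop
  have hmms : ∀ n, IsMinMovSeq E C (τs n) (us (τs n)) u₀ := fun n => hus _ (hτIoo n)
  -- pointwise convergence at rational times
  have hpt : ∀ q : ℚ, Tendsto (fun n => us (τs n) ⌊(q:ℝ) / τs n⌋₊) atTop (nhds (a q)) := by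
    intro q
    rw [tendsto_pi_nhds] at hconv
    exact hconv q
  -- basic estimates
  have sqrt_bound : ∀ (x : H) (y : ℝ), ‖x‖ ^ 2 ≤ y → ‖x‖ ≤ Real.sqrt y := by
    intro x y hxy
    have := Real.sqrt_le_sqrt hxy
    rwa [Real.sqrt_sq (norm_nonneg x)] at this
  have hgv : ∀ n, ∀ t : ℝ, 0 ≤ t →
      ‖pwlInterp (τs n) (us (τs n)) t - us (τs n) ⌊t / τs n⌋₊‖ ^ 2 ≤ τs n * B :=
    fun n t ht => by
      have := g_est (hτIoo n).1 (hmms n) hu₀ hα ht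
      calc ‖pwlInterp (τs n) (us (τs n)) t - us (τs n) ⌊t / τs n⌋₊‖ ^ 2
          ≤ τs n * (2 * (E u₀ - α)) := this
        _ = τs n * B := by rw [hBdef]
  have hvv : ∀ n, ∀ s t : ℝ, 0 ≤ s → s ≤ t →
      ‖us (τs n) ⌊t / τs n⌋₊ - us (τs n) ⌊s / τs n⌋₊‖ ^ 2 ≤ (t - s + τs n) * B :=
    fun n s t hs hst => by
      have := v_est (hτIoo n).1 (hmms n) hu₀ hα hs hst
      calc ‖us (τs n) ⌊t / τs n⌋₊ - us (τs n) ⌊s / τs n⌋₊‖ ^ 2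
          ≤ (t - s + τs n) * (2 * (E u₀ - α)) := this
        _ = (t - s + τs n) * B := by rw [hBdef]
  -- uniform Cauchy property of the piecewise linear interpolations
  have hUC : ∀ T : ℝ, 0 < T → ∀ ε : ℝ, 0 < ε → ∃ N : ℕ, ∀ m ≥ N, ∀ n ≥ N,
      ∀ t ∈ Icc (0:ℝ) T,
      dist (pwlInterp (τs m) (us (τs m)) t) (pwlInterp (τs n) (us (τs n)) t) < ε := by
    intro T hT ε hε
    set C₀ : ℝ := Real.sqrt B with hC₀def
    have hC₀ : 0 ≤ C₀ := Real.sqrt_nonneg _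
    set e8 : ℝ := ε / (8 * (C₀ + 1)) with he8def
    have he8 : 0 < e8 := by rw [he8def]; positivity
    set δ : ℝ := e8 ^ 2 / 2 with hδdef
    have hδ : 0 < δ := by rw [hδdef]; positivity
    have key8 : ∀ x : ℝ, x ≤ 2 * δ → Real.sqrt (x * B) ≤ ε / 8 := by
      intro x hx
      have h1 : Real.sqrt (x * B) ≤ Real.sqrt (2 * δ * B) :=
        Real.sqrt_le_sqrt (mul_le_mul_of_nonneg_right hx hB)
      have h2 : Real.sqrt (2 * δ * B) = e8 * C₀ := by
        rw [Real.sqrt_mul (by positivity), hC₀def]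
        congr 1
        rw [hδdef, show 2 * (e8 ^ 2 / 2) = e8 ^ 2 by ring, Real.sqrt_sq he8.le]
      have h3 : e8 * C₀ ≤ e8 * (C₀ + 1) := by nlinarith
      have h4 : e8 * (C₀ + 1) = ε / 8 := by
        rw [he8def]
        have hne : (8 : ℝ) * (C₀ + 1) ≠ 0 := by positivity
        field_simp
      linarith
    obtain ⟨δ', hδ'0, hδ'δ⟩ := exists_rat_btwn hδ
    set M : ℕ := ⌈T / ((δ' : ℝ))⌉₊ with hMdef
    set Q : Finset ℚ := (Finset.range (M + 1)).image (fun j : ℕ => (j : ℚ) * δ') with hQdef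
    have hev : ∀ᶠ n in atTop, τs n < δ ∧
        ∀ q ∈ Q, dist (us (τs n) ⌊(q:ℝ) / τs n⌋₊) (a q) < ε / 4 := by
      refine (hτ0.eventually_lt_const hδ).and ?_
      rw [eventually_all_finset]
      intro q hq
      have := (hpt q) (Metric.ball_mem_nhds (a q) (by positivity : (0:ℝ) < ε / 4))
      simpa [Metric.mem_ball] using this
    obtain ⟨N, hN⟩ := eventually_atTop.mp hev
    refine ⟨N, fun m hm n hn t ht => ?_⟩
    obtain ⟨ht0, htT⟩ := ht
    set j : ℕ := ⌊t / ((δ' : ℝ))⌋₊ with hjdef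
    have hjM : j ≤ M := by
      have h1 : t / ((δ':ℝ)) ≤ T / ((δ':ℝ)) := by gcongr
      calc j ≤ ⌊T / ((δ':ℝ))⌋₊ := Nat.floor_le_floor h1
        _ ≤ M := Nat.floor_le_ceil _
    have hqQ : ((j : ℚ) * δ') ∈ Q :=
      Finset.mem_image.mpr ⟨j, Finset.mem_range.mpr (by omega), rfl⟩
    set q : ℝ := (((j : ℚ) * δ' : ℚ) : ℝ) with hqdef
    have hqcast : q = (j : ℝ) * ((δ' : ℝ)) := by rw [hqdef]; push_cast; ring
    have hq0 : 0 ≤ q := by rw [hqcast]; positivity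
    have hqt : q ≤ t := by
      rw [hqcast]
      have h1 : (j : ℝ) ≤ t / ((δ':ℝ)) := Nat.floor_le (div_nonneg ht0 hδ'0.le)
      calc (j : ℝ) * ((δ':ℝ)) ≤ t / ((δ':ℝ)) * ((δ':ℝ)) := mul_le_mul_of_nonneg_right h1 hδ'0.le
        _ = t := div_mul_cancel₀ _ (ne_of_gt hδ'0)
    have htq : t - q ≤ δ := by
      rw [hqcast]
      have h1 := (Nat.lt_floor_add_one (t / ((δ':ℝ)))).le
      have h3 : t / ((δ':ℝ)) * ((δ':ℝ)) ≤ ((j : ℝ) + 1) * ((δ':ℝ)) :=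
        mul_le_mul_of_nonneg_right h1 hδ'0.le
      rw [div_mul_cancel₀ _ (ne_of_gt hδ'0)] at h3
      nlinarith
    have hbound : ∀ i, N ≤ i →
        dist (pwlInterp (τs i) (us (τs i)) t) (us (τs i) ⌊q / τs i⌋₊) ≤ ε / 8 + ε / 8 := by
      intro i hi
      have hτi := (hN i hi).1
      have b1 : dist (pwlInterp (τs i) (us (τs i)) t) (us (τs i) ⌊t / τs i⌋₊) ≤ ε / 8 := by
        rw [dist_eq_norm]
        exact le_trans (sqrt_bound _ _ (hgv i t ht0)) (key8 _ (by linarith))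
      have b2 : dist (us (τs i) ⌊t / τs i⌋₊) (us (τs i) ⌊q / τs i⌋₊) ≤ ε / 8 := by
        rw [dist_eq_norm]
        exact le_trans (sqrt_bound _ _ (hvv i q t hq0 hqt)) (key8 _ (by linarith))
      calc dist (pwlInterp (τs i) (us (τs i)) t) (us (τs i) ⌊q / τs i⌋₊)
          ≤ dist (pwlInterp (τs i) (us (τs i)) t) (us (τs i) ⌊t / τs i⌋₊) +
            dist (us (τs i) ⌊t / τs i⌋₊) (us (τs i) ⌊q / τs i⌋₊) := dist_triangle _ _ _
        _ ≤ ε / 8 + ε / 8 := add_le_add b1 b2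
    have hmid : dist (us (τs m) ⌊q / τs m⌋₊) (us (τs n) ⌊q / τs n⌋₊) < ε / 4 + ε / 4 := by
      have h1 := (hN m hm).2 _ hqQ
      have h2 := (hN n hn).2 _ hqQ
      calc dist (us (τs m) ⌊q / τs m⌋₊) (us (τs n) ⌊q / τs n⌋₊)
          ≤ dist (us (τs m) ⌊q / τs m⌋₊) (a ((j:ℚ) * δ')) +
            dist (a ((j:ℚ) * δ')) (us (τs n) ⌊q / τs n⌋₊) := dist_triangle _ _ _
        _ < ε / 4 + ε / 4 := by
            rw [dist_comm (a ((j:ℚ) * δ'))]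
            exact add_lt_add h1 h2
    have tri := dist_triangle4 (pwlInterp (τs m) (us (τs m)) t) (us (τs m) ⌊q / τs m⌋₊)
      (us (τs n) ⌊q / τs n⌋₊) (pwlInterp (τs n) (us (τs n)) t)
    have h5 : dist (us (τs n) ⌊q / τs n⌋₊) (pwlInterp (τs n) (us (τs n)) t) =
        dist (pwlInterp (τs n) (us (τs n)) t) (us (τs n) ⌊q / τs n⌋₊) := dist_comm _ _
    have hb1 := hbound m hm
    have hb2 := hbound n hn
    linarith
  -- pointwise Cauchy, limit curve
  have hCauchy : ∀ t : ℝ, 0 ≤ t → CauchySeq (fun n => pwlInterp (τs n) (us (τs n)) t) := by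
    intro t ht
    rw [Metric.cauchySeq_iff]
    intro ε hε
    obtain ⟨N, hN⟩ := hUC (t + 1) (by linarith) ε hε
    exact ⟨N, fun m hm n hn => hN m hm n hn t ⟨ht, by linarith⟩⟩
  set u : ℝ → H := fun t => limUnder atTop (fun n => pwlInterp (τs n) (us (τs n)) t) with hudef
  have hulim : ∀ t : ℝ, 0 ≤ t →
      Tendsto (fun n => pwlInterp (τs n) (us (τs n)) t) atTop (nhds (u t)) :=
    fun t ht => (hCauchy t ht).tendsto_limUnder
  -- the piecewise constant interpolations converge to the same limit
  have hsqrt0 : Tendsto (fun n => Real.sqrt (τs n * B)) atTop (nhds 0) := by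
    have h1 : Tendsto (fun n => τs n * B) atTop (nhds (0 * B)) := hτ0.mul_const B
    rw [zero_mul] at h1
    have := (Real.continuous_sqrt.tendsto 0).comp h1
    simpa [Function.comp_def] using this
  have hvlim : ∀ t : ℝ, 0 ≤ t →
      Tendsto (fun n => us (τs n) ⌊t / τs n⌋₊) atTop (nhds (u t)) := by
    intro t ht
    rw [tendsto_iff_dist_tendsto_zero]
    apply squeeze_zero (fun n => dist_nonneg)
      (g := fun n => Real.sqrt (τs n * B) + dist (pwlInterp (τs n) (us (τs n)) t) (u t))
    · intro n
      have h1 : dist (us (τs n) ⌊t / τs n⌋₊) (pwlInterp (τs n) (us (τs n)) t) ≤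
          Real.sqrt (τs n * B) := by
        rw [dist_comm, dist_eq_norm]
        exact sqrt_bound _ _ (hgv n t ht)
      calc dist (us (τs n) ⌊t / τs n⌋₊) (u t)
          ≤ dist (us (τs n) ⌊t / τs n⌋₊) (pwlInterp (τs n) (us (τs n)) t) +
            dist (pwlInterp (τs n) (us (τs n)) t) (u t) := dist_triangle _ _ _
        _ ≤ _ := add_le_add h1 (le_refl _)
    · have h2 := tendsto_iff_dist_tendsto_zero.mp (hulim t ht)
      have := hsqrt0.add h2
      simpa using this
  have hElim : ∀ t : ℝ, 0 ≤ t →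
      Tendsto (fun n => E (us (τs n) ⌊t / τs n⌋₊)) atTop (nhds (E (u t))) := by
    intro t ht
    have hc : ContinuousAt E (u t) := (hE.grad (u t)).hasFDerivAt.continuousAt
    exact hc.tendsto.comp (hvlim t ht)
  -- assemble
  refine ⟨τs, hτIoo, hτ0, fun t => E (u t), ?_, u, ⟨(Real.sqrt B).toNNReal, ?_⟩, ?_, ?_⟩
  · -- antitone
    intro s hs t ht hst
    refine le_of_tendsto_of_tendsto' (hElim t (mem_Ici.mp ht)) (hElim s (mem_Ici.mp hs))
      fun n => ?_
    exact mms_antitone (hτIoo n).1 (hmms n) hu₀ (Nat.floor_le_floor (by gcongr))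
  · -- Hölder continuity
    have key : ∀ x y : ℝ, 0 ≤ y → y ≤ x →
        dist (u x) (u y) ≤ Real.sqrt B * dist x y ^ ((1:ℝ)/2) := by
      intro x y hy hyx
      have hx : 0 ≤ x := hy.trans hyx
      have hdn : ∀ n, dist (pwlInterp (τs n) (us (τs n)) x) (pwlInterp (τs n) (us (τs n)) y) ≤
          Real.sqrt (τs n * B) + Real.sqrt ((x - y + τs n) * B) + Real.sqrt (τs n * B) := by
        intro n
        have b1 : dist (pwlInterp (τs n) (us (τs n)) x) (us (τs n) ⌊x / τs n⌋₊) ≤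
            Real.sqrt (τs n * B) := by
          rw [dist_eq_norm]; exact sqrt_bound _ _ (hgv n x hx)
        have b2 : dist (us (τs n) ⌊x / τs n⌋₊) (us (τs n) ⌊y / τs n⌋₊) ≤
            Real.sqrt ((x - y + τs n) * B) := by
          rw [dist_eq_norm]; exact sqrt_bound _ _ (hvv n y x hy hyx)
        have b3 : dist (us (τs n) ⌊y / τs n⌋₊) (pwlInterp (τs n) (us (τs n)) y) ≤
            Real.sqrt (τs n * B) := by
          rw [dist_comm, dist_eq_norm]; exact sqrt_bound _ _ (hgv n y hy)
        have tri := dist_triangle4 (pwlInterp (τs n) (us (τs n)) x) (us (τs n) ⌊x / τs n⌋₊)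
          (us (τs n) ⌊y / τs n⌋₊) (pwlInterp (τs n) (us (τs n)) y)
        linarith
      have hlhs : Tendsto (fun n => dist (pwlInterp (τs n) (us (τs n)) x)
          (pwlInterp (τs n) (us (τs n)) y)) atTop (nhds (dist (u x) (u y))) :=
        (hulim x hx).dist (hulim y hy)
      have hrhs : Tendsto (fun n => Real.sqrt (τs n * B) + Real.sqrt ((x - y + τs n) * B) +
          Real.sqrt (τs n * B)) atTop (nhds (0 + Real.sqrt ((x - y) * B) + 0)) := by
        refine Tendsto.add (Tendsto.add hsqrt0 ?_) hsqrt0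
        have h1 : Tendsto (fun n => (x - y + τs n) * B) atTop (nhds ((x - y + 0) * B)) :=
          (tendsto_const_nhds.add hτ0).mul_const B
        rw [add_zero] at h1
        exact (Real.continuous_sqrt.tendsto _).comp h1
      have := le_of_tendsto_of_tendsto' hlhs hrhs hdn
      have heq : Real.sqrt ((x - y) * B) = Real.sqrt B * dist x y ^ ((1:ℝ)/2) := by
        rw [Real.dist_eq, abs_of_nonneg (by linarith : (0:ℝ) ≤ x - y),
          Real.sqrt_mul (by linarith : (0:ℝ) ≤ x - y), ← Real.sqrt_eq_rpow]
        ring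
      linarith [this, heq.ge, heq.le]
    apply holderOnWith_of_dist_le
    intro x hx y hy
    rw [Real.coe_toNNReal _ (Real.sqrt_nonneg B)]
    have hhalf : (((1:NNReal)/2 : NNReal) : ℝ) = (1:ℝ)/2 := by norm_num
    rw [hhalf]
    rcases le_total y x with h | h
    · exact key x y (mem_Ici.mp hy) h
    · rw [dist_comm (u x), dist_comm x]
      exact key y x (mem_Ici.mp hx) h
  · -- energy convergence
    intro t ht
    have := hElim t ht
    simpa only [energyInterp] using this
  · -- uniform convergence
    intro T hT
    have huc : UniformCauchySeqOn (fun n => pwlInterp (τs n) (us (τs n))) atTop (Icc 0 T) := by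
      rw [Metric.uniformCauchySeqOn_iff]
      intro ε hε
      obtain ⟨N, hN⟩ := hUC T hT ε hε
      exact ⟨N, hN⟩
    exact huc.tendstoUniformlyOn_of_tendsto fun t ht => hulim t ht.1
end
end

section
/- The obstacle set C := { u ∈ H : u ≥ ψ a.e. } is a convex, closed subset of H that has the Half Plane Residuum (HPR) property, i.e. for every u ∈ C and every v ∈ H one has u + π_C(v) − v ∈ C, where π_C denotes the nearest point projection onto C in H. (In fact, v − π_C(v) ≤ 0 almost everywhere for every v ∈ H.) -/
open MeasureTheory Set Filter Topology

noncomputable section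

/-- Membership in `H = W^{2,2}(0,1) ∩ W₀^{1,2}(0,1)`: `u1` is the (continuous) derivative of
`u` on `[0,1]`, `u1` is absolutely continuous with (integrable) derivative `u2 ∈ L²(0,1)`,
and `u(0) = u(1) = 0`. -/
def MemH (u u1 u2 : ℝ → ℝ) : Prop :=
  (∀ x ∈ Icc (0:ℝ) 1, HasDerivWithinAt u (u1 x) (Icc 0 1) x) ∧
  (∀ x ∈ Icc (0:ℝ) 1, u1 x = u1 0 + ∫ t in (0:ℝ)..x, u2 t) ∧
  IntegrableOn u2 (Icc (0:ℝ) 1) ∧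
  IntegrableOn (fun x => (u2 x) ^ 2) (Icc (0:ℝ) 1) ∧
  u 0 = 0 ∧ u 1 = 0

/-- Membership in the obstacle set `C = { u ∈ H : u ≥ ψ a.e. }`. -/
def MemC (ψ : ℝ → ℝ) (u u1 u2 : ℝ → ℝ) : Prop :=
  MemH u u1 u2 ∧ ∀ᵐ x ∂(volume.restrict (Icc (0:ℝ) 1)), ψ x ≤ u x

/-- The inner product of `H`: `(u,v) = ∫₀¹ u'' v''` (in terms of the second derivatives). -/
def Hip (u2 v2 : ℝ → ℝ) : ℝ := ∫ x in (0:ℝ)..1, u2 x * v2 x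

/-- The norm of `H`: `‖u‖ = (∫₀¹ (u'')²)^{1/2}` (in terms of the second derivative). -/
def Hnorm (u2 : ℝ → ℝ) : ℝ := Real.sqrt (∫ x in (0:ℝ)..1, (u2 x) ^ 2)




lemma II01 {f : ℝ → ℝ} (hf : IntegrableOn f (Icc (0:ℝ) 1)) {a b : ℝ}
    (ha : a ∈ Icc (0:ℝ) 1) (hb : b ∈ Icc (0:ℝ) 1) : IntervalIntegrable f volume a b :=
  (hf.mono_set (uIcc_subset_Icc ha hb)).intervalIntegrable

lemma mulIntegrable {f g : ℝ → ℝ}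
    (hf : IntegrableOn f (Icc (0:ℝ) 1)) (hf2 : IntegrableOn (fun x => (f x) ^ 2) (Icc (0:ℝ) 1))
    (hg : IntegrableOn g (Icc (0:ℝ) 1)) (hg2 : IntegrableOn (fun x => (g x) ^ 2) (Icc (0:ℝ) 1)) :
    IntegrableOn (fun x => f x * g x) (Icc (0:ℝ) 1) := by
  refine Integrable.mono' ((hf2.add hg2).div_const 2)
    (hf.aestronglyMeasurable.mul hg.aestronglyMeasurable) (ae_of_all _ fun x => ?_)
  have h := sq_nonneg (|f x| - |g x|)
  have : ‖f x * g x‖ = |f x| * |g x| := by rw [Real.norm_eq_abs, abs_mul]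
  rw [this]
  simp only [Pi.add_apply]
  have h2 : |f x| ^ 2 = f x ^ 2 := sq_abs _
  have h3 : |g x| ^ 2 = g x ^ 2 := sq_abs _
  nlinarith [sq_nonneg (|f x| - |g x|)]

lemma combIntegrable {f g : ℝ → ℝ} (α β : ℝ)
    (hf : IntegrableOn f (Icc (0:ℝ) 1)) (hf2 : IntegrableOn (fun x => (f x) ^ 2) (Icc (0:ℝ) 1))
    (hg : IntegrableOn g (Icc (0:ℝ) 1)) (hg2 : IntegrableOn (fun x => (g x) ^ 2) (Icc (0:ℝ) 1)) :
    IntegrableOn (fun x => α * f x + β * g x) (Icc (0:ℝ) 1) ∧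
    IntegrableOn (fun x => (α * f x + β * g x) ^ 2) (Icc (0:ℝ) 1) := by
  constructor
  · exact (hf.const_mul α).add (hg.const_mul β)
  · have : (fun x => (α * f x + β * g x) ^ 2)
        = fun x => α^2 * (f x)^2 + ((2*α*β) * (f x * g x) + β^2 * (g x)^2) :=
      funext fun x => by ring
    rw [this]
    exact (hf2.const_mul _).add (((mulIntegrable hf hf2 hg hg2).const_mul _).add (hg2.const_mul _))



/-- The primitive of an integrable function is continuous on `[0,1]`. -/
lemma primCont {f : ℝ → ℝ} (hf : IntegrableOn f (Icc (0:ℝ) 1)) :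
    ContinuousOn (fun x => ∫ t in (0:ℝ)..x, f t) (Icc (0:ℝ) 1) := by
  have := intervalIntegral.continuousOn_primitive_interval (a := 0) (b := 1) (μ := volume)
    (f := f) (by rwa [uIcc_of_le zero_le_one])
  rwa [uIcc_of_le zero_le_one] at this

lemma contInt01 {f : ℝ → ℝ} (hf : ContinuousOn f (Icc (0:ℝ) 1)) {a b : ℝ}
    (ha : a ∈ Icc (0:ℝ) 1) (hb : b ∈ Icc (0:ℝ) 1) : IntervalIntegrable f volume a b := by
  apply ContinuousOn.intervalIntegrable
  exact hf.mono (uIcc_subset_Icc ha hb)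

lemma u1Cont {u u1 u2 : ℝ → ℝ} (hu : MemH u u1 u2) : ContinuousOn u1 (Icc (0:ℝ) 1) := by
  have : ContinuousOn (fun x => u1 0 + ∫ t in (0:ℝ)..x, u2 t) (Icc (0:ℝ) 1) :=
    continuousOn_const.add (primCont hu.2.2.1)
  exact this.congr fun x hx => hu.2.1 x hx

/-- FTC: `u x = u 0 + ∫₀ˣ u1` for `x ∈ [0,1]`. -/
lemma u_ftc {u u1 u2 : ℝ → ℝ} (hu : MemH u u1 u2) {x : ℝ} (hx : x ∈ Icc (0:ℝ) 1) :
    ∫ t in (0:ℝ)..x, u1 t = u x := by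
  have hsub : Icc (0:ℝ) x ⊆ Icc (0:ℝ) 1 := Icc_subset_Icc le_rfl hx.2
  have := intervalIntegral.integral_eq_sub_of_hasDeriv_right_of_le hx.1
    (fun y hy => ((hu.1 y (hsub hy)).continuousWithinAt).mono hsub)
    (fun y hy => ?_) (contInt01 (u1Cont hu) (left_mem_Icc.2 zero_le_one) hx)
  · rw [this, hu.2.2.2.2.1, sub_zero]
  · have hy' : y ∈ Icc (0:ℝ) 1 := ⟨le_of_lt hy.1, le_trans (le_of_lt hy.2) hx.2⟩
    have : HasDerivAt u (u1 y) y :=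
      (hu.1 y hy').hasDerivAt (Icc_mem_nhds (by exact hy.1) (lt_of_lt_of_le hy.2 hx.2))
    exact this.hasDerivWithinAt

/-- Representation of `u` in terms of `u2`. -/
lemma u_repr {u u1 u2 : ℝ → ℝ} (hu : MemH u u1 u2) {x : ℝ} (hx : x ∈ Icc (0:ℝ) 1) :
    u x = u1 0 * x + ∫ t in (0:ℝ)..x, (∫ s in (0:ℝ)..t, u2 s) := by
  rw [← u_ftc hu hx]
  have hcong : ∫ t in (0:ℝ)..x, u1 t
      = ∫ t in (0:ℝ)..x, (u1 0 + ∫ s in (0:ℝ)..t, u2 s) := by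
    apply intervalIntegral.integral_congr
    intro t ht
    rw [uIcc_of_le hx.1] at ht
    exact hu.2.1 t ⟨ht.1, le_trans ht.2 hx.2⟩
  rw [hcong, intervalIntegral.integral_add intervalIntegrable_const]
  · simp [mul_comm]
  · exact contInt01 (primCont hu.2.2.1) (left_mem_Icc.2 zero_le_one) hx

lemma u1_zero_eq {u u1 u2 : ℝ → ℝ} (hu : MemH u u1 u2) :
    u1 0 = -∫ t in (0:ℝ)..1, (∫ s in (0:ℝ)..t, u2 s) := by
  have := u_repr hu (right_mem_Icc.2 zero_le_one)
  rw [hu.2.2.2.2.2] at this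
  linarith



/-- A "concave" function (antitone derivative) vanishing at both endpoints is nonnegative. -/
lemma nonneg_of_antitone_deriv {f f1 : ℝ → ℝ}
    (hd : ∀ x ∈ Icc (0:ℝ) 1, HasDerivWithinAt f (f1 x) (Icc 0 1) x)
    (hanti : ∀ a ∈ Icc (0:ℝ) 1, ∀ b ∈ Icc (0:ℝ) 1, a ≤ b → f1 b ≤ f1 a)
    (h0 : f 0 = 0) (h1 : f 1 = 0) : ∀ x ∈ Icc (0:ℝ) 1, 0 ≤ f x := by
  have hDA : ∀ x ∈ Ioo (0:ℝ) 1, HasDerivAt f (f1 x) x := fun x hx =>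
    (hd x (Ioo_subset_Icc_self hx)).hasDerivAt (Icc_mem_nhds hx.1 hx.2)
  have hconc : ConcaveOn ℝ (Icc 0 1) f := by
    apply AntitoneOn.concaveOn_of_deriv (convex_Icc 0 1)
    · exact fun x hx => (hd x hx).continuousWithinAt
    · intro x hx
      rw [interior_Icc] at hx
      exact (hDA x hx).differentiableAt.differentiableWithinAt
    · intro x hx y hy hxy
      rw [interior_Icc] at hx hy
      rw [(hDA x hx).deriv, (hDA y hy).deriv]
      exact hanti x (Ioo_subset_Icc_self hx) y (Ioo_subset_Icc_self hy) hxy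
  intro x hx
  have key := hconc.2 (left_mem_Icc.2 zero_le_one) (right_mem_Icc.2 zero_le_one)
    (show (0:ℝ) ≤ 1 - x by linarith [hx.2]) hx.1 (show (1 - x) + x = 1 by ring)
  have hxx : (1 - x) • (0:ℝ) + x • (1:ℝ) = x := by simp
  rw [hxx, h0, h1] at key
  simpa using key



lemma ae_ne_vol (a : ℝ) : ∀ᵐ (x : ℝ) ∂volume, x ≠ a := by
  rw [ae_iff]
  have : {x : ℝ | ¬ x ≠ a} = {a} := by ext x; simp
  rw [this]
  exact measure_singleton a

lemma indicator_intervalIntegrable {a b : ℝ} (c d : ℝ) :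
    IntervalIntegrable ((Icc a b).indicator (fun _ => (1:ℝ))) volume c d := by
  rw [intervalIntegrable_iff]
  refine Integrable.mono' (g := fun _ => (1:ℝ)) ?_
    ((measurable_const.indicator measurableSet_Icc).aestronglyMeasurable) (ae_of_all _ fun x => ?_)
  · exact integrableOn_const measure_Ioc_lt_top.ne
  · rw [Real.norm_eq_abs]
    by_cases hx : x ∈ Icc a b <;> simp [Set.indicator_apply, hx]

lemma integral_mul_indicator {f : ℝ → ℝ} (hf : IntegrableOn f (Icc (0:ℝ) 1))
    {a b : ℝ} (ha : 0 ≤ a) (hab : a ≤ b) (hb : b ≤ 1) :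
    ∫ x in (0:ℝ)..1, f x * (Icc a b).indicator (fun _ => (1:ℝ)) x = ∫ x in a..b, f x := by
  have hfg : (fun x => f x * (Icc a b).indicator (fun _ => (1:ℝ)) x)
      = (Icc a b).indicator f := by
    funext x
    by_cases h : x ∈ Icc a b <;> simp [Set.indicator_apply, h]
  rw [hfg]
  have hint : IntegrableOn ((Icc a b).indicator f) (Icc (0:ℝ) 1) :=
    hf.indicator measurableSet_Icc
  have hIab : ∀ c d : ℝ, c ∈ Icc (0:ℝ) 1 → d ∈ Icc (0:ℝ) 1 →
      IntervalIntegrable ((Icc a b).indicator f) volume c d := fun c d hc hd =>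
    (hint.mono_set (uIcc_subset_Icc hc hd)).intervalIntegrable
  have h0 : (0:ℝ) ∈ Icc (0:ℝ) 1 := left_mem_Icc.2 zero_le_one
  have h1' : (1:ℝ) ∈ Icc (0:ℝ) 1 := right_mem_Icc.2 zero_le_one
  have haI : a ∈ Icc (0:ℝ) 1 := ⟨ha, hab.trans hb⟩
  have hbI : b ∈ Icc (0:ℝ) 1 := ⟨ha.trans hab, hb⟩
  have split1 := intervalIntegral.integral_add_adjacent_intervals
    (hIab 0 a h0 haI) (hIab a 1 haI h1')
  have split2 := intervalIntegral.integral_add_adjacent_intervals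
    (hIab a b haI hbI) (hIab b 1 hbI h1')
  have e1 : ∫ x in (0:ℝ)..a, (Icc a b).indicator f x = ∫ x in (0:ℝ)..a, (0:ℝ) := by
    apply intervalIntegral.integral_congr_ae
    filter_upwards [ae_ne_vol a] with x hxa hx
    rw [uIoc_of_le ha] at hx
    have : x ∉ Icc a b := fun hmem => hxa (le_antisymm hx.2 hmem.1)
    simp [Set.indicator_apply, this]
  have e3 : ∫ x in b..1, (Icc a b).indicator f x = ∫ x in b..1, (0:ℝ) := by
    apply intervalIntegral.integral_congr_ae
    filter_upwards with x hx
    rw [uIoc_of_le hb] at hx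
    have : x ∉ Icc a b := fun hmem => absurd hmem.2 (not_le.2 hx.1)
    simp [Set.indicator_apply, this]
  have e2 : ∫ x in a..b, (Icc a b).indicator f x = ∫ x in a..b, f x := by
    apply intervalIntegral.integral_congr
    intro x hx
    rw [uIcc_of_le hab] at hx
    simp [Set.indicator_apply, hx]
  rw [intervalIntegral.integral_zero] at e1 e3
  rw [← split1, ← split2, e1, e2, e3]
  ring

lemma testfun {a b : ℝ} (ha : 0 ≤ a) (hab : a ≤ b) (hb : b ≤ 1) :
    ∃ h h1 : ℝ → ℝ, MemH h h1 (fun x => -(Icc a b).indicator (fun _ => (1:ℝ)) x) ∧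
      (∀ x ∈ Icc (0:ℝ) 1, 0 ≤ h x) := by
  set g : ℝ → ℝ := (Icc a b).indicator (fun _ => (1:ℝ)) with hg
  have hgint : ∀ c d : ℝ, IntervalIntegrable (fun x => -g x) volume c d := fun c d => by
    exact (indicator_intervalIntegrable (a := a) (b := b) c d).neg
  set F : ℝ → ℝ := fun t => ∫ s in (0:ℝ)..t, -g s with hF
  have Fcont : Continuous F := intervalIntegral.continuous_primitive hgint 0
  set M : ℝ := -∫ t in (0:ℝ)..1, F t with hM
  set h : ℝ → ℝ := fun x => M * x + ∫ t in (0:ℝ)..x, F t with hh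
  set h1 : ℝ → ℝ := fun x => M + F x with hh1
  have hda : ∀ x : ℝ, HasDerivAt h (h1 x) x := by
    intro x
    have d1 : HasDerivAt (fun y : ℝ => M * y) M x := by
      simpa using (hasDerivAt_id x).const_mul M
    exact d1.add ((Fcont.integral_hasStrictDerivAt 0 x).hasDerivAt)
  have hanti : ∀ c ∈ Icc (0:ℝ) 1, ∀ d ∈ Icc (0:ℝ) 1, c ≤ d → h1 d ≤ h1 c := by
    intro c hc d hd hcd
    have hsplit := intervalIntegral.integral_add_adjacent_intervals (hgint 0 c) (hgint c d)
    have hnn : ∫ s in c..d, -g s ≤ 0 := by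
      have : 0 ≤ ∫ s in c..d, g s := intervalIntegral.integral_nonneg hcd
        (fun u _ => by by_cases hu : u ∈ Icc a b <;> simp [hg, Set.indicator_apply, hu])
      rw [intervalIntegral.integral_neg]
      linarith
    simp only [hh1, hF]
    have : F d = F c + ∫ s in c..d, -g s := by rw [hF]; exact hsplit.symm
    simp only [hF] at this
    linarith [hnn, this.ge, this.le]
  have hIcc : IntegrableOn (fun x => -g x) (Icc (0:ℝ) 1) :=
    (intervalIntegrable_iff_integrableOn_Icc_of_le zero_le_one).1 (hgint 0 1)
  have h0 : h 0 = 0 := by simp [hh]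
  have h1' : h 1 = 0 := by simp [hh, hM]
  refine ⟨h, h1, ⟨fun x _ => (hda x).hasDerivWithinAt, fun x _ => ?_, hIcc, ?_, h0, h1'⟩, ?_⟩
  · simp [hh1, hF, intervalIntegral.integral_same]
  · have : (fun x => (-g x) ^ 2) = g := by
      funext x
      by_cases hx : x ∈ Icc a b <;> simp [hg, Set.indicator_apply, hx]
    rw [this]
    exact (intervalIntegrable_iff_integrableOn_Icc_of_le zero_le_one).1
      (indicator_intervalIntegrable 0 1)
  · exact nonneg_of_antitone_deriv (fun x _ => (hda x).hasDerivWithinAt) hanti h0 h1'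
lemma memH_comb {u u1 u2 v v1 v2 : ℝ → ℝ} (a b : ℝ)
    (hu : MemH u u1 u2) (hv : MemH v v1 v2) :
    MemH (fun x => a * u x + b * v x) (fun x => a * u1 x + b * v1 x)
      (fun x => a * u2 x + b * v2 x) := by
  obtain ⟨hud, hu1, hu2, hu22, hu0, hu1'⟩ := hu
  obtain ⟨hvd, hv1, hv2, hv22, hv0, hv1'⟩ := hv
  refine ⟨fun x hx => ((hud x hx).const_mul a).add ((hvd x hx).const_mul b),
    fun x hx => ?_, (combIntegrable a b hu2 hu22 hv2 hv22).1,
    (combIntegrable a b hu2 hu22 hv2 hv22).2, by simp [hu0, hv0], by simp [hu1', hv1']⟩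
  have h0 : (0:ℝ) ∈ Icc (0:ℝ) 1 := left_mem_Icc.2 zero_le_one
  rw [intervalIntegral.integral_add ((II01 hu2 h0 hx).const_mul a) ((II01 hv2 h0 hx).const_mul b),
    intervalIntegral.integral_const_mul, intervalIntegral.integral_const_mul]
  simp only []
  rw [hu1 x hx, hv1 x hx]
  ring

/-- The variational inequality for the projection yields `∫_a^b (v'' - p'') ≥ 0`
for every `0 ≤ a ≤ b ≤ 1`. -/
lemma proj_residual_integral {ψ v v1 v2 p p1 p2 : ℝ → ℝ}
    (hv : MemH v v1 v2) (hp : MemC ψ p p1 p2)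
    (hmin : ∀ z z1 z2 : ℝ → ℝ, MemC ψ z z1 z2 →
      Hnorm (fun x => v2 x - p2 x) ≤ Hnorm (fun x => v2 x - z2 x))
    {a b : ℝ} (ha : 0 ≤ a) (hab : a ≤ b) (hb : b ≤ 1) :
    0 ≤ ∫ x in a..b, (v2 x - p2 x) := by
  obtain ⟨h, h1, hmemh, hpos⟩ := testfun ha hab hb
  set h2 : ℝ → ℝ := fun x => -(Icc a b).indicator (fun _ => (1:ℝ)) x with hh2def
  set f : ℝ → ℝ := fun x => v2 x - p2 x with hfdef
  have h0m : (0:ℝ) ∈ Icc (0:ℝ) 1 := left_mem_Icc.2 zero_le_one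
  have h1m : (1:ℝ) ∈ Icc (0:ℝ) 1 := right_mem_Icc.2 zero_le_one
  have hv2i := hv.2.2.1
  have hv22i := hv.2.2.2.1
  have hp2i := hp.1.2.2.1
  have hp22i := hp.1.2.2.2.1
  have hh2i := hmemh.2.2.1
  have hh22i := hmemh.2.2.2.1
  have hfi : IntegrableOn f (Icc (0:ℝ) 1) := by
    have h := (combIntegrable 1 (-1) hv2i hv22i hp2i hp22i).1
    rwa [show (fun x => 1 * v2 x + (-1) * p2 x) = f from funext fun x => by
      simp only [hfdef]; ring] at h
  have hf2i : IntegrableOn (fun x => f x ^ 2) (Icc (0:ℝ) 1) := by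
    have h := (combIntegrable 1 (-1) hv2i hv22i hp2i hp22i).2
    rwa [show (fun x : ℝ => (1 * v2 x + (-1) * p2 x) ^ 2) = (fun x => f x ^ 2) from
      funext fun x => by simp only [hfdef]; ring] at h
  have hfhi : IntegrableOn (fun x => f x * h2 x) (Icc (0:ℝ) 1) :=
    mulIntegrable hfi hf2i hh2i hh22i
  set A : ℝ := ∫ x in (0:ℝ)..1, f x ^ 2 with hA
  set B : ℝ := ∫ x in (0:ℝ)..1, f x * h2 x with hB
  set C : ℝ := ∫ x in (0:ℝ)..1, h2 x ^ 2 with hC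
  have hCnn : 0 ≤ C := intervalIntegral.integral_nonneg zero_le_one fun x _ => sq_nonneg _
  -- key inequality for every t > 0
  have key : ∀ t : ℝ, 0 < t → 2 * B ≤ t * C := by
    intro t ht
    set z : ℝ → ℝ := fun x => 1 * p x + t * h x with hz
    have hzH : MemH z (fun x => 1 * p1 x + t * h1 x) (fun x => 1 * p2 x + t * h2 x) :=
      memH_comb 1 t hp.1 hmemh
    have hzC : MemC ψ z (fun x => 1 * p1 x + t * h1 x) (fun x => 1 * p2 x + t * h2 x) := by
      refine ⟨hzH, ?_⟩
      filter_upwards [hp.2, ae_restrict_mem measurableSet_Icc] with x hψx hxm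
      have := hpos x hxm
      simp only [hz, one_mul]
      nlinarith
    have hle := hmin z _ _ hzC
    have hzeq : (fun x => v2 x - (1 * p2 x + t * h2 x)) = fun x => f x - t * h2 x :=
      funext fun x => by simp only [hfdef]; ring
    rw [hzeq] at hle
    have hAnn : 0 ≤ A := intervalIntegral.integral_nonneg zero_le_one fun x _ => sq_nonneg _
    have hAt : ∫ x in (0:ℝ)..1, (f x - t * h2 x) ^ 2 = A - 2 * t * B + t ^ 2 * C := by
      have e0 : ∫ x in (0:ℝ)..1, (f x - t * h2 x) ^ 2
          = ∫ x in (0:ℝ)..1, (f x ^ 2 - 2 * t * (f x * h2 x) + t ^ 2 * h2 x ^ 2) :=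
        intervalIntegral.integral_congr fun x _ => by ring
      rw [e0, intervalIntegral.integral_add (((II01 hf2i h0m h1m).sub
          ((II01 hfhi h0m h1m).const_mul (2 * t)))) ((II01 hh22i h0m h1m).const_mul (t ^ 2)),
        intervalIntegral.integral_sub (II01 hf2i h0m h1m) ((II01 hfhi h0m h1m).const_mul (2 * t)),
        intervalIntegral.integral_const_mul, intervalIntegral.integral_const_mul]
    have hAtnn : 0 ≤ A - 2 * t * B + t ^ 2 * C := by
      rw [← hAt]
      exact intervalIntegral.integral_nonneg zero_le_one fun x _ => sq_nonneg _
    have hAle : A ≤ A - 2 * t * B + t ^ 2 * C := by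
      have h1le : Real.sqrt A ≤ Real.sqrt (A - 2 * t * B + t ^ 2 * C) := by
        have := hle
        simp only [Hnorm] at this
        rwa [hAt] at this
      have := mul_self_le_mul_self (Real.sqrt_nonneg A) h1le
      rwa [Real.mul_self_sqrt hAnn, Real.mul_self_sqrt hAtnn] at this
    have h2tB : t * (2 * B) ≤ t * (t * C) := by nlinarith
    exact le_of_mul_le_mul_left h2tB ht
  have hBle : B ≤ 0 := by
    rcases eq_or_lt_of_le hCnn with hC0 | hCpos
    · have := key 1 one_pos
      rw [← hC0] at this
      linarith
    · by_contra hBpos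
      push_neg at hBpos
      have := key (B / C) (div_pos hBpos hCpos)
      rw [div_mul_cancel₀ _ (ne_of_gt hCpos)] at this
      linarith
  -- compute B
  have hBeq : B = -∫ x in a..b, f x := by
    rw [hB]
    have : (fun x => f x * h2 x)
        = fun x => -(f x * (Icc a b).indicator (fun _ => (1:ℝ)) x) :=
      funext fun x => by simp only [hh2def]; ring
    rw [this, intervalIntegral.integral_neg, integral_mul_indicator hfi ha hab hb]
  rw [hBeq] at hBle
  linarith

/-- **The obstacle set is convex, closed, and has the HPR property.** For a continuous
obstacle `ψ` with `ψ(0), ψ(1) < 0`, the set `C = { u ∈ H : u ≥ ψ a.e. }` is convex,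
(sequentially) closed in `H`, and for every `v ∈ H` the nearest point projection
`p = π_C(v)` satisfies `v - p ≤ 0` a.e.; in particular `u + π_C(v) - v ∈ C` for every
`u ∈ C` (the Half Plane Residuum property). -/
theorem obstacle_set_convex_closed_hpr
    (ψ : ℝ → ℝ) (hψcont : ContinuousOn ψ (Icc 0 1)) (hψ0 : ψ 0 < 0) (hψ1 : ψ 1 < 0) :
    -- convexity
    (∀ a b : ℝ, 0 ≤ a → 0 ≤ b → a + b = 1 →
      ∀ u u1 u2 v v1 v2 : ℝ → ℝ, MemC ψ u u1 u2 → MemC ψ v v1 v2 →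
        MemC ψ (fun x => a * u x + b * v x) (fun x => a * u1 x + b * v1 x)
          (fun x => a * u2 x + b * v2 x)) ∧
    -- (sequential) closedness in H
    (∀ (un un1 un2 : ℕ → ℝ → ℝ), (∀ n, MemC ψ (un n) (un1 n) (un2 n)) →
      ∀ u u1 u2 : ℝ → ℝ, MemH u u1 u2 →
        Filter.Tendsto (fun n => Hnorm (fun x => un2 n x - u2 x)) Filter.atTop (nhds 0) →
        MemC ψ u u1 u2) ∧
    -- HPR property: if p = π_C(v) is the nearest point projection of v onto C, then
    -- v - p ≤ 0 a.e., and u + p - v ∈ C for every u ∈ C.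
    (∀ v v1 v2 : ℝ → ℝ, MemH v v1 v2 →
      ∀ p p1 p2 : ℝ → ℝ, MemC ψ p p1 p2 →
        (∀ z z1 z2 : ℝ → ℝ, MemC ψ z z1 z2 →
          Hnorm (fun x => v2 x - p2 x) ≤ Hnorm (fun x => v2 x - z2 x)) →
        (∀ᵐ x ∂(volume.restrict (Icc (0:ℝ) 1)), v x - p x ≤ 0) ∧
        (∀ u u1 u2 : ℝ → ℝ, MemC ψ u u1 u2 →
          MemC ψ (fun x => u x + p x - v x) (fun x => u1 x + p1 x - v1 x)
            (fun x => u2 x + p2 x - v2 x))) := by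
  refine ⟨?_, ?_, ?_⟩
  · -- convexity
    intro a b ha hb hab u u1 u2 v v1 v2 hu hv
    refine ⟨memH_comb a b hu.1 hv.1, ?_⟩
    filter_upwards [hu.2, hv.2] with x hψu hψv
    have h1 : a * ψ x ≤ a * u x := mul_le_mul_of_nonneg_left hψu ha
    have h2 : b * ψ x ≤ b * v x := mul_le_mul_of_nonneg_left hψv hb
    have h3 : a * ψ x + b * ψ x = ψ x := by rw [← add_mul, hab, one_mul]
    linarith
  · -- closedness
    intro un un1 un2 hn u u1 u2 hu hconv
    refine ⟨hu, ?_⟩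
    have h0m : (0:ℝ) ∈ Icc (0:ℝ) 1 := left_mem_Icc.2 zero_le_one
    have h1m : (1:ℝ) ∈ Icc (0:ℝ) 1 := right_mem_Icc.2 zero_le_one
    have hwint : ∀ n, IntegrableOn (fun x => un2 n x - u2 x) (Icc (0:ℝ) 1) := fun n =>
      ((hn n).1.2.2.1).sub hu.2.2.1
    have hwsq : ∀ n, IntegrableOn (fun x => (un2 n x - u2 x) ^ 2) (Icc (0:ℝ) 1) := by
      intro n
      have h := (combIntegrable 1 (-1) ((hn n).1.2.2.1) ((hn n).1.2.2.2.1)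
        hu.2.2.1 hu.2.2.2.1).2
      rwa [show (fun x : ℝ => (1 * un2 n x + (-1) * u2 x) ^ 2)
          = (fun x => (un2 n x - u2 x) ^ 2) from funext fun x => by ring] at h
    set S : ℕ → ℝ := fun n => ∫ x in (0:ℝ)..1, (un2 n x - u2 x) ^ 2 with hSdef
    have hSnn : ∀ n, 0 ≤ S n := fun n =>
      intervalIntegral.integral_nonneg zero_le_one fun x _ => sq_nonneg _
    have hStend : Tendsto S atTop (𝓝 0) := by
      have h2 := hconv.pow 2
      rw [show (0:ℝ) ^ 2 = 0 by norm_num] at h2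
      convert h2 using 2 with n
      rw [Hnorm, Real.sq_sqrt (hSnn n)]
    set W : ℕ → ℝ := fun n => ∫ t in (0:ℝ)..1, |un2 n t - u2 t| with hWdef
    have hWnn : ∀ n, 0 ≤ W n := fun n =>
      intervalIntegral.integral_nonneg zero_le_one fun x _ => abs_nonneg _
    have hWtend : Tendsto W atTop (𝓝 0) := by
      rw [Metric.tendsto_atTop]
      intro ε hε
      set δ : ℝ := ε / 2 with hδdef
      have hδ : 0 < δ := by positivity
      rw [Metric.tendsto_atTop] at hStend
      obtain ⟨N, hN⟩ := hStend (δ ^ 2) (by positivity)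
      refine ⟨N, fun n hn' => ?_⟩
      have hSn : S n < δ ^ 2 := by
        have := hN n hn'
        rwa [Real.dist_eq, abs_of_nonneg (by linarith [hSnn n] : (0:ℝ) ≤ S n - 0), sub_zero]
          at this
      have hWle : W n ≤ δ / 2 + (1 / (2 * δ)) * S n := by
        have hmono : W n ≤ ∫ t in (0:ℝ)..1, (δ / 2 + (1 / (2 * δ)) * (un2 n t - u2 t) ^ 2) := by
          apply intervalIntegral.integral_mono_on zero_le_one
            (II01 (hwint n).abs h0m h1m)
            (intervalIntegrable_const.add ((II01 (hwsq n) h0m h1m).const_mul _))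
          intro x _
          set w : ℝ := un2 n x - u2 x with hw
          have h2δ : 0 < 2 * δ := by linarith
          have hle : |w| * (2 * δ) ≤ w ^ 2 + δ ^ 2 := by
            nlinarith [sq_nonneg (|w| - δ), sq_abs w]
          have hdiv : |w| ≤ (w ^ 2 + δ ^ 2) / (2 * δ) := (le_div_iff₀ h2δ).2 hle
          have heq : (w ^ 2 + δ ^ 2) / (2 * δ) = δ / 2 + 1 / (2 * δ) * w ^ 2 := by
            field_simp
            ring
          linarith [heq ▸ hdiv]
        rwa [intervalIntegral.integral_add intervalIntegrable_const
          ((II01 (hwsq n) h0m h1m).const_mul _), intervalIntegral.integral_const,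
          intervalIntegral.integral_const_mul, sub_zero, one_smul] at hmono
      have : W n < ε := by
        have : (1 / (2 * δ)) * S n < (1 / (2 * δ)) * δ ^ 2 :=
          mul_lt_mul_of_pos_left hSn (by positivity)
        have hd2 : (1 / (2 * δ)) * δ ^ 2 = δ / 2 := by field_simp
        rw [hd2] at this
        have : W n ≤ δ / 2 + δ / 2 := by linarith
        rw [hδdef] at this
        linarith
      rwa [Real.dist_eq, sub_zero, abs_of_nonneg (hWnn n)]
    -- pointwise convergence
    have hptw : ∀ x ∈ Icc (0:ℝ) 1, Tendsto (fun n => un n x) atTop (𝓝 (u x)) := by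
      intro x hx
      have hbound : ∀ n, |un n x - u x| ≤ 2 * W n := by
        intro n
        have hreprn := u_repr (hn n).1 hx
        have hrepru := u_repr hu hx
        have hc_n := u1_zero_eq (hn n).1
        have hc_u := u1_zero_eq hu
        set G : ℝ → ℝ := fun t => (∫ s in (0:ℝ)..t, un2 n s) - ∫ s in (0:ℝ)..t, u2 s
          with hGdef
        have hGeq : ∀ t ∈ Icc (0:ℝ) 1, G t = ∫ s in (0:ℝ)..t, (un2 n s - u2 s) := by
          intro t ht
          rw [hGdef]
          simp only []
          rw [intervalIntegral.integral_sub (II01 (hn n).1.2.2.1 h0m ht) (II01 hu.2.2.1 h0m ht)]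
        have hGbd : ∀ t ∈ Icc (0:ℝ) 1, |G t| ≤ W n := by
          intro t ht
          rw [hGeq t ht]
          calc |∫ s in (0:ℝ)..t, (un2 n s - u2 s)|
              ≤ ∫ s in (0:ℝ)..t, |un2 n s - u2 s| :=
                intervalIntegral.abs_integral_le_integral_abs ht.1
            _ ≤ W n := by
                apply intervalIntegral.integral_mono_interval le_rfl ht.1 ht.2
                  (ae_of_all _ fun s => abs_nonneg _) (II01 (hwint n).abs h0m h1m)
        have hGcont : ContinuousOn G (Icc (0:ℝ) 1) :=
          (primCont (hn n).1.2.2.1).sub (primCont hu.2.2.1)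
        have hGint : IntervalIntegrable G volume 0 x := contInt01 hGcont h0m hx
        have hsplit : un n x - u x = (un1 n 0 - u1 0) * x + ∫ t in (0:ℝ)..x, G t := by
          rw [hreprn, hrepru, hGdef]
          have : ∫ t in (0:ℝ)..x, ((∫ s in (0:ℝ)..t, un2 n s) - ∫ s in (0:ℝ)..t, u2 s)
              = (∫ t in (0:ℝ)..x, ∫ s in (0:ℝ)..t, un2 n s)
                - ∫ t in (0:ℝ)..x, ∫ s in (0:ℝ)..t, u2 s :=
            intervalIntegral.integral_sub (contInt01 (primCont (hn n).1.2.2.1) h0m hx)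
              (contInt01 (primCont hu.2.2.1) h0m hx)
          rw [this]
          ring
        have hcdiff : |un1 n 0 - u1 0| ≤ W n := by
          rw [hc_n, hc_u]
          have : -(∫ t in (0:ℝ)..1, ∫ s in (0:ℝ)..t, un2 n s)
              - -(∫ t in (0:ℝ)..1, ∫ s in (0:ℝ)..t, u2 s) = -∫ t in (0:ℝ)..1, G t := by
            rw [hGdef]
            have : ∫ t in (0:ℝ)..1, ((∫ s in (0:ℝ)..t, un2 n s) - ∫ s in (0:ℝ)..t, u2 s)
                = (∫ t in (0:ℝ)..1, ∫ s in (0:ℝ)..t, un2 n s)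
                  - ∫ t in (0:ℝ)..1, ∫ s in (0:ℝ)..t, u2 s :=
              intervalIntegral.integral_sub (contInt01 (primCont (hn n).1.2.2.1) h0m h1m)
                (contInt01 (primCont hu.2.2.1) h0m h1m)
            rw [this]
            ring
          rw [this, abs_neg]
          calc |∫ t in (0:ℝ)..1, G t| ≤ ∫ t in (0:ℝ)..1, |G t| :=
                intervalIntegral.abs_integral_le_integral_abs zero_le_one
            _ ≤ ∫ t in (0:ℝ)..1, W n := by
                apply intervalIntegral.integral_mono_on zero_le_one
                  ((contInt01 hGcont h0m h1m).abs) intervalIntegrable_const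
                exact fun t ht => hGbd t ht
            _ = W n := by simp
        have hintbd : |∫ t in (0:ℝ)..x, G t| ≤ W n := by
          calc |∫ t in (0:ℝ)..x, G t| ≤ ∫ t in (0:ℝ)..x, |G t| :=
                intervalIntegral.abs_integral_le_integral_abs hx.1
            _ ≤ ∫ t in (0:ℝ)..x, W n := by
                apply intervalIntegral.integral_mono_on hx.1 (hGint.abs)
                  intervalIntegrable_const
                exact fun t ht => hGbd t ⟨ht.1, ht.2.trans hx.2⟩
            _ = x * W n := by simp [mul_comm]
            _ ≤ 1 * W n := mul_le_mul_of_nonneg_right hx.2 (hWnn n)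
            _ = W n := one_mul _
        calc |un n x - u x| = |(un1 n 0 - u1 0) * x + ∫ t in (0:ℝ)..x, G t| := by
              rw [hsplit]
          _ ≤ |(un1 n 0 - u1 0) * x| + |∫ t in (0:ℝ)..x, G t| := abs_add_le _ _
          _ ≤ |un1 n 0 - u1 0| * x + W n := by
              rw [abs_mul, abs_of_nonneg hx.1]
              exact add_le_add le_rfl hintbd
          _ ≤ W n * 1 + W n := by
              refine add_le_add ?_ le_rfl
              calc |un1 n 0 - u1 0| * x ≤ W n * x :=
                    mul_le_mul_of_nonneg_right hcdiff hx.1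
                _ ≤ W n * 1 := mul_le_mul_of_nonneg_left hx.2 (hWnn n)
          _ = 2 * W n := by ring
      have habs : Tendsto (fun n => |un n x - u x|) atTop (𝓝 0) := by
        apply squeeze_zero (fun n => abs_nonneg _) hbound
        have := hWtend.const_mul 2
        simpa using this
      rw [tendsto_iff_dist_tendsto_zero]
      simpa [Real.dist_eq] using habs
    filter_upwards [ae_all_iff.2 fun n => (hn n).2, ae_restrict_mem measurableSet_Icc]
      with x hψx hx
    exact ge_of_tendsto (hptw x hx) (Eventually.of_forall fun n => hψx n)
  · -- HPR
    intro v v1 v2 hv p p1 p2 hp hmin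
    have h0m : (0:ℝ) ∈ Icc (0:ℝ) 1 := left_mem_Icc.2 zero_le_one
    have key : ∀ a ∈ Icc (0:ℝ) 1, ∀ b ∈ Icc (0:ℝ) 1, a ≤ b →
        0 ≤ ∫ x in a..b, (v2 x - p2 x) := fun a ha b hb hab =>
      proj_residual_integral hv hp hmin ha.1 hab hb.2
    -- e = p - v is "concave" and vanishes at the endpoints, hence ≥ 0
    have he1anti : ∀ a ∈ Icc (0:ℝ) 1, ∀ b ∈ Icc (0:ℝ) 1, a ≤ b →
        p1 b - v1 b ≤ p1 a - v1 a := by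
      intro a ha b hb hab
      have hpa := hp.1.2.1 a ha
      have hpb := hp.1.2.1 b hb
      have hva := hv.2.1 a ha
      have hvb := hv.2.1 b hb
      have hsplitp := intervalIntegral.integral_add_adjacent_intervals
        (II01 hp.1.2.2.1 h0m ha) ((hp.1.2.2.1.mono_set (uIcc_subset_Icc ha hb)).intervalIntegrable)
      have hsplitv := intervalIntegral.integral_add_adjacent_intervals
        (II01 hv.2.2.1 h0m ha) ((hv.2.2.1.mono_set (uIcc_subset_Icc ha hb)).intervalIntegrable)
      have hsub : ∫ x in a..b, (v2 x - p2 x)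
          = (∫ x in a..b, v2 x) - ∫ x in a..b, p2 x :=
        intervalIntegral.integral_sub
          ((hv.2.2.1.mono_set (uIcc_subset_Icc ha hb)).intervalIntegrable)
          ((hp.1.2.2.1.mono_set (uIcc_subset_Icc ha hb)).intervalIntegrable)
      have hk := key a ha b hb hab
      rw [hsub] at hk
      rw [hpa, hpb, hva, hvb]
      linarith
    have hd : ∀ x ∈ Icc (0:ℝ) 1,
        HasDerivWithinAt (fun y => p y - v y) (p1 x - v1 x) (Icc 0 1) x := fun x hx =>
      (hp.1.1 x hx).sub (hv.1 x hx)
    have hnn : ∀ x ∈ Icc (0:ℝ) 1, 0 ≤ p x - v x := by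
      apply nonneg_of_antitone_deriv (f1 := fun x => p1 x - v1 x) hd
        (fun a ha b hb hab => he1anti a ha b hb hab)
      · rw [hp.1.2.2.2.2.1, hv.2.2.2.2.1, sub_zero]
      · rw [hp.1.2.2.2.2.2, hv.2.2.2.2.2, sub_zero]
    have hae : ∀ᵐ x ∂(volume.restrict (Icc (0:ℝ) 1)), v x - p x ≤ 0 := by
      filter_upwards [ae_restrict_mem measurableSet_Icc] with x hx
      linarith [hnn x hx]
    refine ⟨hae, fun u u1 u2 hu => ?_⟩
    constructor
    · have h3 := memH_comb 1 1 hu.1 (memH_comb 1 (-1) hp.1 hv)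
      have e1f : (fun x => 1 * u x + 1 * (1 * p x + (-1) * v x)) = fun x => u x + p x - v x :=
        funext fun x => by ring
      have e2f : (fun x => 1 * u1 x + 1 * (1 * p1 x + (-1) * v1 x))
          = fun x => u1 x + p1 x - v1 x := funext fun x => by ring
      have e3f : (fun x => 1 * u2 x + 1 * (1 * p2 x + (-1) * v2 x))
          = fun x => u2 x + p2 x - v2 x := funext fun x => by ring
      rwa [e1f, e2f, e3f] at h3
    · filter_upwards [hu.2, hae] with x h1x h2x
      have : u x ≤ u x + p x - v x := by linarith
      linarith
end
end
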